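/- arXiv:2002.01697 — 4 statements merged into one kernel-verified Lean document; each statement's English description precedes it below -/
import Mathlib

section
/- There exist absolute constants C0, c > 0 such that the following holds. Fix r > 0, L ≥ C0/r, k ≥ 2, and ε ∈ (0, √3/(4√2)). Then there exist n ∈ ℕ and an L-Lipschitz generative model G : B₂^k(r) → S^{n-1} such that for every m ∈ ℕ, every measurement matrix A ∈ ℝ^{m×n}, and every decoder ψ : {−1,1}^m → ℝ^n satisfying ‖x − ψ(sign(Ax))‖₂ ≤ ε for all x ∈ G(B₂^k(r)), it must hold that m ≥ c·(k·log(Lr) + k/ε). -/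
set_option maxHeartbeats 1000000

open MeasureTheory ProbabilityTheory

/-- sign function: `1` if `0 ≤ v`, `-1` otherwise. -/
noncomputable def sgn (v : ℝ) : ℝ := if 0 ≤ v then 1 else -1

/-- 1-bit measurement map `Φ(x) = sign(Ax)` (entrywise), where the matrix `A ∈ ℝ^{m×n}`
is represented as a function `Fin m → Fin n → ℝ`. -/
noncomputable def Phi {m n : ℕ} (A : Fin m → Fin n → ℝ)
    (x : EuclideanSpace ℝ (Fin n)) : Fin m → ℝ :=
  fun i => sgn (∑ j, A i j * x j)

/-- normalized Hamming distance. -/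
noncomputable def dH {m : ℕ} (v v' : Fin m → ℝ) : ℝ :=
  ((Finset.univ.filter fun i => v i ≠ v' i).card : ℝ) / m

/-- geodesic distance on the unit sphere. -/
noncomputable def dS {n : ℕ} (x s : EuclideanSpace ℝ (Fin n)) : ℝ :=
  Real.arccos (inner ℝ x s) / Real.pi

/-- law of an `m × n` matrix with i.i.d. `N(0,1)` entries. -/
noncomputable def gaussianMatrix (m n : ℕ) : Measure (Fin m → Fin n → ℝ) :=
  Measure.pi fun _ : Fin m => Measure.pi fun _ : Fin n => gaussianReal 0 1

noncomputable section

open Classical in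
/-- value of the `i`-th affine functional -/
def Sfun {m d : ℕ} (a : Fin m → Fin d → ℝ) (c : Fin m → ℝ) (x : Fin d → ℝ) (i : Fin m) : ℝ :=
  ∑ l, a i l * x l + c i

open Classical in
def patF {m d : ℕ} (a : Fin m → Fin d → ℝ) (c : Fin m → ℝ) (x : Fin d → ℝ) : Fin m → Bool :=
  fun i => decide (0 ≤ Sfun a c x i)

def patSet (m d : ℕ) (a : Fin m → Fin d → ℝ) (c : Fin m → ℝ) : Set (Fin m → Bool) :=
  Set.range (patF a c)

lemma patF_eq_iff {m d : ℕ} {a : Fin m → Fin d → ℝ} {c : Fin m → ℝ} {x : Fin d → ℝ} {i : Fin m}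
    {b : Bool} : patF a c x i = b ↔ (if 0 ≤ Sfun a c x i then true else false) = b := by
  simp [patF, decide]

lemma patF_true {m d : ℕ} {a : Fin m → Fin d → ℝ} {c : Fin m → ℝ} {x : Fin d → ℝ} {i : Fin m} :
    patF a c x i = true ↔ 0 ≤ Sfun a c x i := by
  simp [patF]

lemma patF_false {m d : ℕ} {a : Fin m → Fin d → ℝ} {c : Fin m → ℝ} {x : Fin d → ℝ} {i : Fin m} :
    patF a c x i = false ↔ Sfun a c x i < 0 := by
  simp [patF]

lemma Sfun_comb {m d : ℕ} (a : Fin m → Fin d → ℝ) (c : Fin m → ℝ) (x y : Fin d → ℝ) (t : ℝ)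
    (i : Fin m) : Sfun a c (fun l => x l + t * (y l - x l)) i
      = (1 - t) * Sfun a c x i + t * Sfun a c y i := by
  unfold Sfun
  have : ∀ l : Fin d, a i l * (x l + t * (y l - x l))
      = (1-t) * (a i l * x l) + t * (a i l * y l) := fun l => by ring
  rw [Finset.sum_congr rfl (fun l _ => this l), Finset.sum_add_distrib,
    ← Finset.mul_sum, ← Finset.mul_sum]
  ring

lemma pascal_sum (m : ℕ) (d : ℕ) :
    ∑ i ∈ Finset.range (d+1), (m+1).choose i
      = ∑ i ∈ Finset.range (d+1), m.choose i + ∑ i ∈ Finset.range d, m.choose i := by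
  induction d with
  | zero => simp
  | succ d ih =>
    rw [Finset.sum_range_succ, ih, Finset.sum_range_succ (fun i => m.choose i) (d+1),
      Finset.sum_range_succ (fun i => m.choose i) d, Nat.choose_succ_succ' m d]
    ring

theorem sauer : ∀ (m : ℕ) (d : ℕ) (a : Fin m → Fin d → ℝ) (c : Fin m → ℝ),
    (patSet m d a c).ncard ≤ ∑ i ∈ Finset.range (d+1), m.choose i := by
  intro m
  induction m with
  | zero =>
    intro d a c
    have h1 : (patSet 0 d a c).ncard ≤ (Set.univ : Set (Fin 0 → Bool)).ncard :=
      Set.ncard_le_ncard (Set.subset_univ _) Set.finite_univ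
    have h2 : (Set.univ : Set (Fin 0 → Bool)).ncard = 1 := by
      rw [Set.ncard_univ]; simp [Nat.card_eq_fintype_card]
    have h3 : 1 ≤ ∑ i ∈ Finset.range (d+1), Nat.choose 0 i := by
      have h0 : 0 ∈ Finset.range (d+1) := by simp
      calc 1 = Nat.choose 0 0 := rfl
      _ ≤ _ := Finset.single_le_sum (f := fun i => Nat.choose 0 i) (by intro i _; positivity) h0
    omega
  | succ m ih =>
    intro d a c
    have hrestrict : ∀ x (i : Fin m),
        Sfun (fun i : Fin m => a i.castSucc) (fun i => c i.castSucc) x i = Sfun a c x i.castSucc :=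
      fun x i => rfl
    set a' : Fin m → Fin d → ℝ := fun i => a i.castSucc with ha'
    set c' : Fin m → ℝ := fun i => c i.castSucc with hc'
    have hpatm : ∀ x (i : Fin m), patF a' c' x i = patF a c x i.castSucc := fun x i => rfl
    set A : Set (Fin m → Bool) := patF a' c' '' {x | 0 ≤ Sfun a c x (Fin.last m)} with hA
    set B : Set (Fin m → Bool) := patF a' c' '' {x | Sfun a c x (Fin.last m) < 0} with hB
    -- decomposition
    have hdecomp : patSet (m+1) d a c ⊆
        ((fun q : Fin m → Bool => (Fin.snoc q true : Fin (m+1) → Bool)) '' A)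
          ∪ ((fun q : Fin m → Bool => (Fin.snoc q false : Fin (m+1) → Bool)) '' B) := by
      rintro p ⟨x, rfl⟩
      by_cases hx : 0 ≤ Sfun a c x (Fin.last m)
      · left
        refine ⟨patF a' c' x, ⟨x, hx, rfl⟩, ?_⟩
        funext j
        show (Fin.snoc (patF a' c' x) true : Fin (m+1) → Bool) j = patF a c x j
        refine Fin.lastCases ?_ (fun i => ?_) j
        · rw [Fin.snoc_last]; exact (patF_true.mpr hx).symm
        · rw [Fin.snoc_castSucc]; exact hpatm x i
      · right
        refine ⟨patF a' c' x, ⟨x, lt_of_not_ge hx, rfl⟩, ?_⟩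
        funext j
        show (Fin.snoc (patF a' c' x) false : Fin (m+1) → Bool) j = patF a c x j
        refine Fin.lastCases ?_ (fun i => ?_) j
        · rw [Fin.snoc_last]; exact (patF_false.mpr (lt_of_not_ge hx)).symm
        · rw [Fin.snoc_castSucc]; exact hpatm x i
    have hsnoc_inj : ∀ b : Bool,
        Function.Injective (fun q : Fin m → Bool => (Fin.snoc q b : Fin (m+1) → Bool)) := by
      intro b q q' h
      funext i
      have := congrFun h i.castSucc
      simpa [Fin.snoc_castSucc] using this
    have hcard1 : (patSet (m+1) d a c).ncard ≤ A.ncard + B.ncard := by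
      calc (patSet (m+1) d a c).ncard
          ≤ (((fun q : Fin m → Bool => (Fin.snoc q true : Fin (m+1) → Bool)) '' A)
              ∪ ((fun q : Fin m → Bool => (Fin.snoc q false : Fin (m+1) → Bool)) '' B)).ncard :=
            Set.ncard_le_ncard hdecomp (Set.Finite.union (Set.toFinite _) (Set.toFinite _))
        _ ≤ ((fun q : Fin m → Bool => (Fin.snoc q true : Fin (m+1) → Bool)) '' A).ncard
            + ((fun q : Fin m → Bool => (Fin.snoc q false : Fin (m+1) → Bool)) '' B).ncard :=
            Set.ncard_union_le _ _
        _ = A.ncard + B.ncard := by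
            rw [Set.ncard_image_of_injective _ (hsnoc_inj true),
              Set.ncard_image_of_injective _ (hsnoc_inj false)]
    have hcard2 : A.ncard + B.ncard = (A ∪ B).ncard + (A ∩ B).ncard :=
      (Set.ncard_union_add_ncard_inter A B (Set.toFinite _) (Set.toFinite _)).symm
    have hAB : A ∪ B ⊆ patSet m d a' c' := by
      rintro q (⟨x, _, rfl⟩ | ⟨x, _, rfl⟩) <;> exact ⟨x, rfl⟩
    have hABcard : (A ∪ B).ncard ≤ ∑ i ∈ Finset.range (d+1), m.choose i :=
      le_trans (Set.ncard_le_ncard hAB (Set.toFinite _)) (ih d _ _)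
    -- straddlers are realized on the zero set of the last functional
    have hstraddle : ∀ q ∈ A ∩ B, ∃ z, Sfun a c z (Fin.last m) = 0 ∧ patF a' c' z = q := by
      rintro q ⟨⟨x, hx, hqx⟩, ⟨y, hy, hqy⟩⟩
      have hx : (0:ℝ) ≤ Sfun a c x (Fin.last m) := hx
      have hy : Sfun a c y (Fin.last m) < 0 := hy
      have hden : 0 < Sfun a c x (Fin.last m) - Sfun a c y (Fin.last m) := by
        have := lt_of_lt_of_le hy hx; linarith
      set t : ℝ := Sfun a c x (Fin.last m) / (Sfun a c x (Fin.last m) - Sfun a c y (Fin.last m))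
        with ht
      have ht0 : 0 ≤ t := div_nonneg hx (le_of_lt hden)
      have ht1 : t ≤ 1 := by rw [ht, div_le_one hden]; linarith
      refine ⟨fun l => x l + t * (y l - x l), ?_, ?_⟩
      · rw [Sfun_comb]
        have h0 : Sfun a c x (Fin.last m) - t * (Sfun a c x (Fin.last m)
            - Sfun a c y (Fin.last m)) = 0 := by
          rw [ht]; field_simp; ring
        nlinarith [h0]
      · funext i
        have hxq := congrFun hqx i
        have hyq := congrFun hqy i
        rw [← hxq]
        have hcomb := Sfun_comb a' c' x y t i
        by_cases hxi : 0 ≤ Sfun a' c' x i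
        · have hyi : 0 ≤ Sfun a' c' y i := by
            by_contra hneg
            rw [← hyq] at hxq
            have h1 := patF_true.mpr hxi
            have h2 := patF_false.mpr (lt_of_not_ge hneg)
            rw [h1, h2] at hxq; exact Bool.noConfusion hxq
          have hz : 0 ≤ Sfun a' c' (fun l => x l + t * (y l - x l)) i := by
            rw [hcomb]; nlinarith
          rw [patF_true.mpr hxi, patF_true.mpr hz]
        · have hxi' := lt_of_not_ge hxi
          have hyi : Sfun a' c' y i < 0 := by
            by_contra hneg
            rw [← hyq] at hxq
            have h1 := patF_false.mpr hxi'
            have h2 := patF_true.mpr (le_of_not_gt hneg)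
            rw [h1, h2] at hxq; exact Bool.noConfusion hxq
          have hz : Sfun a' c' (fun l => x l + t * (y l - x l)) i < 0 := by
            rw [hcomb]
            rcases eq_or_lt_of_le ht0 with h | h
            · rw [← h]; simpa using hxi'
            · nlinarith
          rw [patF_false.mpr hxi', patF_false.mpr hz]
    -- bound the straddler set
    have hlast : ∀ x, Sfun a c x (Fin.last m) = (∑ l, a (Fin.last m) l * x l) + c (Fin.last m) :=
      fun x => rfl
    by_cases hzero : ∀ l, a (Fin.last m) l = 0
    · -- last functional is constant: no straddlers
      have hempty : A ∩ B = ∅ := by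
        ext q
        simp only [Set.mem_empty_iff_false, iff_false]
        rintro ⟨⟨x, hx, _⟩, ⟨y, hy, _⟩⟩
        rw [Set.mem_setOf_eq, hlast] at hx hy
        rw [Finset.sum_congr rfl (fun l _ => by rw [hzero l, zero_mul])] at hx hy
        simp at hx hy
        linarith
      have : (patSet (m+1) d a c).ncard ≤ ∑ i ∈ Finset.range (d+1), m.choose i := by
        rw [hempty] at hcard2
        simp at hcard2
        omega
      refine le_trans this (Finset.sum_le_sum fun i _ => Nat.choose_le_choose i (by omega))
    · push_neg at hzero
      obtain ⟨l₀, hl₀⟩ := hzero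
      obtain ⟨d', rfl⟩ : ∃ d', d = d'+1 := ⟨d-1, by have := l₀.pos; omega⟩
      set gl : Fin (d'+1) → ℝ := a (Fin.last m) with hgl
      have hsum_single : ∀ (g : Fin (d'+1) → ℝ) (v : ℝ),
          ∑ l, g l * (v • (Pi.single l₀ 1 : Fin (d'+1) → ℝ)) l = g l₀ * v := by
        intro g v
        have : ∀ l, g l * (v • (Pi.single l₀ 1 : Fin (d'+1) → ℝ)) l
            = if l = l₀ then g l * v else 0 := by
          intro l
          by_cases h : l = l₀ <;> simp [h, Pi.single_apply]
        rw [Finset.sum_congr rfl (fun l _ => this l), Finset.sum_ite_eq' Finset.univ l₀]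
        simp
      set glin : (Fin (d'+1) → ℝ) →ₗ[ℝ] ℝ :=
        { toFun := fun x => ∑ l, gl l * x l
          map_add' := by
            intro x y
            rw [← Finset.sum_add_distrib]
            exact Finset.sum_congr rfl fun l _ => by simp [Pi.add_apply]; ring
          map_smul' := by
            intro t x
            simp only [RingHom.id_apply, smul_eq_mul, Finset.mul_sum]
            exact Finset.sum_congr rfl fun l _ => by simp [Pi.smul_apply, smul_eq_mul]; ring }
        with hglin
      have hglin_apply : ∀ x, glin x = ∑ l, gl l * x l := fun x => rfl
      have hsurj : Function.Surjective glin := by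
        intro t
        refine ⟨(t / gl l₀) • (Pi.single l₀ 1 : Fin (d'+1) → ℝ), ?_⟩
        rw [hglin_apply, hsum_single]
        field_simp
      have hker : Module.finrank ℝ (LinearMap.ker glin) = d' := by
        have h1 := LinearMap.finrank_range_add_finrank_ker glin
        rw [LinearMap.range_eq_top.mpr hsurj, finrank_top, Module.finrank_self,
          Module.finrank_pi] at h1
        simp only [Fintype.card_fin] at h1
        omega
      set bb : Module.Basis (Fin d') ℝ (LinearMap.ker glin) := Module.finBasisOfFinrankEq ℝ _ hker
        with hbb
      set a'' : Fin m → Fin d' → ℝ :=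
        fun i j => ∑ l, a' i l * ((bb j : Fin (d'+1) → ℝ) l) with ha''
      set c'' : Fin m → ℝ := fun i => Sfun a' c' ((-c (Fin.last m) / gl l₀) • (Pi.single l₀ 1 : Fin (d'+1) → ℝ)) i
        with hc''
      set x₀ : Fin (d'+1) → ℝ := (-c (Fin.last m) / gl l₀) • (Pi.single l₀ 1 : Fin (d'+1) → ℝ) with hx₀
      have hx₀_zero : Sfun a c x₀ (Fin.last m) = 0 := by
        rw [hlast, hx₀, hsum_single]
        field_simp
        ring
      have hABsub : A ∩ B ⊆ patSet m d' a'' c'' := by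
        intro q hq
        obtain ⟨z, hz0, hzq⟩ := hstraddle q hq
        have hzker : z - x₀ ∈ LinearMap.ker glin := by
          rw [LinearMap.mem_ker, map_sub]
          have e1 : glin z = -c (Fin.last m) := by
            have := hlast z
            rw [hz0] at this
            rw [hglin_apply]
            linarith [this]
          have e2 : glin x₀ = -c (Fin.last m) := by
            have := hlast x₀
            rw [hx₀_zero] at this
            rw [hglin_apply]
            linarith [this]
          rw [e1, e2, sub_self]
        set v : LinearMap.ker glin := ⟨z - x₀, hzker⟩ with hv
        set w : Fin d' → ℝ := fun j => bb.repr v j with hw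
        have hrepr := Module.Basis.sum_repr bb v
        have hcoe : (z - x₀) = ∑ j, w j • ((bb j : Fin (d'+1) → ℝ)) := by
          have h1 : ((v : Fin (d'+1) → ℝ)) = z - x₀ := rfl
          rw [← h1, ← hrepr]
          push_cast
          exact Finset.sum_congr rfl fun j _ => rfl
        have hz_eq : ∀ l, z l = x₀ l + ∑ j, w j * ((bb j : Fin (d'+1) → ℝ) l) := by
          intro l
          have h4 := congrFun hcoe l
          rw [Finset.sum_apply] at h4
          simp only [Pi.smul_apply, smul_eq_mul, Pi.sub_apply] at h4
          linarith
        refine ⟨w, ?_⟩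
        rw [← hzq]
        funext i
        have hSeq : Sfun a'' c'' w i = Sfun a' c' z i := by
          unfold Sfun
          have e1 : ∀ l, a' i l * z l
              = a' i l * x₀ l + ∑ j, w j * (a' i l * (bb j : Fin (d'+1) → ℝ) l) := by
            intro l
            rw [hz_eq l, mul_add, Finset.mul_sum]
            congr 1
            exact Finset.sum_congr rfl fun j _ => by ring
          rw [Finset.sum_congr rfl (fun l _ => e1 l), Finset.sum_add_distrib]
          rw [Finset.sum_comm]
          have e2 : ∀ j, ∑ l, w j * (a' i l * (bb j : Fin (d'+1) → ℝ) l)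
              = a'' i j * w j := by
            intro j
            rw [← Finset.mul_sum, mul_comm]
          rw [Finset.sum_congr rfl (fun j _ => e2 j)]
          rw [hc'']
          simp only [Sfun, hx₀]
          ring
        unfold patF
        rw [hSeq]
      have hstr_card : (A ∩ B).ncard ≤ ∑ i ∈ Finset.range (d'+1), m.choose i :=
        le_trans (Set.ncard_le_ncard hABsub (Set.toFinite _)) (ih d' _ _)
      rw [pascal_sum m (d'+1)]
      omega

open MeasureTheory Metric
open scoped ENNReal

lemma packing (d : ℕ) (hd : 1 ≤ d) (c₀ : EuclideanSpace ℝ (Fin d)) (ρ s : ℝ)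
    (hρ : 0 < ρ) (hs : 0 < s) :
    ∃ T : Finset (EuclideanSpace ℝ (Fin d)), (↑T : Set (EuclideanSpace ℝ (Fin d))) ⊆ closedBall c₀ ρ ∧
      (∀ x ∈ T, ∀ y ∈ T, x ≠ y → s ≤ dist x y) ∧ (ρ/s)^d ≤ (T.card : ℝ) := by
  classical
  haveI : Nontrivial (EuclideanSpace ℝ (Fin d)) := by
    refine ⟨0, EuclideanSpace.single ⟨0, hd⟩ (1:ℝ), ?_⟩
    intro h
    have := congrArg (fun v : EuclideanSpace ℝ (Fin d) => v ⟨0, hd⟩) h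
    simp [EuclideanSpace.single_apply] at this
  have hfr : Module.finrank ℝ (EuclideanSpace ℝ (Fin d)) = d := finrank_euclideanSpace_fin
  set ν := volume (ball (0 : EuclideanSpace ℝ (Fin d)) 1) with hν
  have hν0 : ν ≠ 0 := (measure_ball_pos volume 0 one_pos).ne'
  have hνtop : ν ≠ ⊤ := measure_ball_lt_top.ne
  -- the collection of admissible finsets
  set P : Finset (EuclideanSpace ℝ (Fin d)) → Prop :=
    fun T => (↑T : Set (EuclideanSpace ℝ (Fin d))) ⊆ closedBall c₀ ρ ∧
      ∀ x ∈ T, ∀ y ∈ T, x ≠ y → s ≤ dist x y with hP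
  -- cardinality bound for admissible finsets
  have hbound : ∀ T, P T → (T.card : ℝ≥0∞) * ENNReal.ofReal ((s/2)^d) ≤
      ENNReal.ofReal ((ρ + s/2)^d) := by
    intro T hT
    have hdisj : (↑T : Set (EuclideanSpace ℝ (Fin d))).PairwiseDisjoint
        (fun x => ball x (s/2)) := by
      intro x hx y hy hxy
      exact ball_disjoint_ball (by linarith [hT.2 x hx y hy hxy])
    have hmeas := measure_biUnion_finset (μ := volume) hdisj (fun b _ => measurableSet_ball)
    have hsub : (⋃ x ∈ T, ball x (s/2)) ⊆ ball c₀ (ρ + s/2) := by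
      intro y hy
      simp only [Set.mem_iUnion] at hy
      obtain ⟨x, hxT, hyx⟩ := hy
      have h1 : dist x c₀ ≤ ρ := mem_closedBall.mp (hT.1 hxT)
      have h2 : dist y x < s/2 := mem_ball.mp hyx
      exact mem_ball.mpr (lt_of_le_of_lt (dist_triangle y x c₀) (by linarith))
    have hballvol : ∀ x : EuclideanSpace ℝ (Fin d),
        volume (ball x (s/2)) = ENNReal.ofReal ((s/2)^d) * ν := by
      intro x
      rw [Measure.addHaar_ball volume x (by positivity : (0:ℝ) ≤ s/2), hfr]
    have hbig : volume (ball c₀ (ρ + s/2)) = ENNReal.ofReal ((ρ + s/2)^d) * ν := by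
      rw [Measure.addHaar_ball volume c₀ (by positivity : (0:ℝ) ≤ ρ + s/2), hfr]
    have : (T.card : ℝ≥0∞) * (ENNReal.ofReal ((s/2)^d) * ν) ≤
        ENNReal.ofReal ((ρ + s/2)^d) * ν := by
      calc (T.card : ℝ≥0∞) * (ENNReal.ofReal ((s/2)^d) * ν)
          = ∑ x ∈ T, volume (ball x (s/2)) := by
            rw [Finset.sum_congr rfl (fun x _ => hballvol x), Finset.sum_const, nsmul_eq_mul]
        _ = volume (⋃ x ∈ T, ball x (s/2)) := hmeas.symm
        _ ≤ volume (ball c₀ (ρ + s/2)) := measure_mono hsub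
        _ = _ := hbig
    rw [← mul_assoc] at this
    exact (ENNReal.mul_le_mul_iff_left hν0 hνtop).mp this
  have hcardbound : ∀ T, P T → T.card ≤ ⌊((ρ + s/2)^d / (s/2)^d : ℝ)⌋₊ := by
    intro T hT
    have h := hbound T hT
    have hsd : (0:ℝ) < (s/2)^d := by positivity
    rw [← ENNReal.ofReal_natCast, ← ENNReal.ofReal_mul (by positivity)] at h
    have h2 : (T.card : ℝ) * (s/2)^d ≤ (ρ + s/2)^d :=
      (ENNReal.ofReal_le_ofReal_iff (by positivity)).mp h
    have h3 : (T.card : ℝ) ≤ (ρ + s/2)^d / (s/2)^d := by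
      rw [le_div_iff₀ hsd]; exact h2
    exact Nat.le_floor h3
  -- pick an admissible finset of maximal cardinality
  have hPempty : P ∅ := by
    constructor
    · simp
    · intro x hx; simp at hx
  set Cards : Set ℕ := {nn | ∃ T, P T ∧ T.card = nn} with hCards
  have hCne : Cards.Nonempty := ⟨0, ∅, hPempty, rfl⟩
  have hCbdd : BddAbove Cards := by
    refine ⟨⌊((ρ + s/2)^d / (s/2)^d : ℝ)⌋₊, ?_⟩
    rintro nn ⟨T, hT, rfl⟩
    exact hcardbound T hT
  obtain ⟨T, hT, hTcard⟩ := Nat.sSup_mem hCne hCbdd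
  have hmax : ∀ T', P T' → T'.card ≤ T.card := by
    intro T' hT'
    rw [hTcard]
    exact le_csSup hCbdd ⟨T', hT', rfl⟩
  -- maximality gives covering
  have hcover : ∀ y ∈ closedBall c₀ ρ, ∃ x ∈ T, dist y x < s := by
    intro y hy
    by_contra hcon
    push_neg at hcon
    have hyT : y ∉ T := by
      intro hyT
      have h0 := hcon y hyT
      rw [dist_self] at h0
      linarith
    have hP' : P (insert y T) := by
      constructor
      · intro x hx
        simp only [Finset.coe_insert, Set.mem_insert_iff] at hx
        rcases hx with rfl | hx
        · exact hy
        · exact hT.1 hx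
      · intro x hx y' hy' hxy
        simp only [Finset.mem_insert] at hx hy'
        rcases hx with rfl | hx <;> rcases hy' with rfl | hy'
        · exact absurd rfl hxy
        · exact hcon y' hy'
        · rw [dist_comm]; exact hcon x hx
        · exact hT.2 x hx y' hy' hxy
    have := hmax _ hP'
    rw [Finset.card_insert_of_notMem hyT] at this
    omega
  -- covering gives volume lower bound
  have hsub2 : closedBall c₀ ρ ⊆ ⋃ x ∈ T, ball x s := by
    intro y hy
    obtain ⟨x, hxT, hyx⟩ := hcover y hy
    exact Set.mem_biUnion hxT (mem_ball.mpr hyx)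
  have hvol2 : ENNReal.ofReal (ρ^d) * ν ≤ (T.card : ENNReal) * (ENNReal.ofReal (s^d) * ν) := by
    calc ENNReal.ofReal (ρ^d) * ν
        = volume (ball c₀ ρ) := by
          rw [Measure.addHaar_ball volume c₀ hρ.le, hfr]
      _ ≤ volume (⋃ x ∈ T, ball x s) :=
          measure_mono (le_trans ball_subset_closedBall hsub2)
      _ ≤ ∑ x ∈ T, volume (ball x s) := measure_biUnion_finset_le T _
      _ = (T.card : ENNReal) * (ENNReal.ofReal (s^d) * ν) := by
          rw [Finset.sum_congr rfl (fun x _ => by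
            rw [Measure.addHaar_ball volume x hs.le, hfr]), Finset.sum_const, nsmul_eq_mul]
  rw [← mul_assoc] at hvol2
  have hreal : ρ^d ≤ (T.card : ℝ) * s^d := by
    have h := (ENNReal.mul_le_mul_iff_left hν0 hνtop).mp hvol2
    rw [← ENNReal.ofReal_natCast, ← ENNReal.ofReal_mul (by positivity)] at h
    exact (ENNReal.ofReal_le_ofReal_iff (by positivity)).mp h
  refine ⟨T, hT.1, hT.2, ?_⟩
  rw [div_pow, div_le_iff₀ (by positivity)]
  exact hreal

lemma binom_bound (m d : ℕ) (hd : 1 ≤ d) (hm : d ≤ m) :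
    (∑ i ∈ Finset.range (d+1), (m.choose i) : ℝ) ≤ (Real.exp 1 * m / d)^d := by
  have hm0 : 0 < m := lt_of_lt_of_le hd hm
  set x : ℝ := (d : ℝ) / m with hx
  have hx0 : 0 < x := by positivity
  have hx1 : x ≤ 1 := by
    rw [hx, div_le_one (by positivity)]
    exact_mod_cast hm
  have h1 : (∑ i ∈ Finset.range (d+1), (m.choose i : ℝ)) * x^d
      ≤ ∑ i ∈ Finset.range (d+1), (m.choose i : ℝ) * x^i := by
    rw [Finset.sum_mul]
    refine Finset.sum_le_sum fun i hi => ?_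
    have hid : i ≤ d := by simp at hi; omega
    exact mul_le_mul_of_nonneg_left (pow_le_pow_of_le_one hx0.le hx1 hid) (by positivity)
  have h2 : ∑ i ∈ Finset.range (d+1), (m.choose i : ℝ) * x^i
      ≤ ∑ i ∈ Finset.range (m+1), (m.choose i : ℝ) * x^i := by
    refine Finset.sum_le_sum_of_subset_of_nonneg ?_ (fun i _ _ => by positivity)
    exact Finset.range_subset_range.mpr (by omega)
  have h3 : ∑ i ∈ Finset.range (m+1), (m.choose i : ℝ) * x^i = (x+1)^m := by
    rw [add_pow]
    refine Finset.sum_congr rfl fun i _ => ?_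
    ring
  have h4 : (x+1)^m ≤ Real.exp d := by
    calc (x+1)^m ≤ (Real.exp x)^m := by
          refine pow_le_pow_left₀ (by positivity) ?_ m
          linarith [Real.add_one_le_exp x]
      _ = Real.exp (m * x) := (Real.exp_nat_mul x m).symm
      _ = Real.exp d := by
          congr 1
          rw [hx]
          field_simp
  have h5 : (∑ i ∈ Finset.range (d+1), (m.choose i : ℝ)) ≤ Real.exp d / x^d := by
    rw [le_div_iff₀ (by positivity)]
    calc _ ≤ ∑ i ∈ Finset.range (d+1), (m.choose i : ℝ) * x^i := h1
      _ ≤ _ := le_trans h2 (le_of_eq h3)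
      _ ≤ _ := h4
  calc (∑ i ∈ Finset.range (d+1), (m.choose i : ℝ)) ≤ Real.exp d / x^d := h5
    _ = (Real.exp 1 * m / d)^d := by
        rw [← Real.exp_one_pow, hx, div_pow, div_div_eq_mul_div, div_pow, mul_pow]

open Metric

noncomputable section

-- norm-squared of a Euclidean vector
lemma nsq {d : ℕ} (x : EuclideanSpace ℝ (Fin d)) : ‖x‖^2 = ∑ i, (x i)^2 := by
  rw [EuclideanSpace.norm_eq, Real.sq_sqrt (by positivity)]
  exact Finset.sum_congr rfl fun i _ => by rw [Real.norm_eq_abs, sq_abs]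

lemma abs_min_sub_min_le (a b c : ℝ) : |min a c - min b c| ≤ |a - b| := by
  rcases le_total a c with h1 | h1 <;> rcases le_total b c with h2 | h2
  · rw [min_eq_left h1, min_eq_left h2]
  · rw [min_eq_left h1, min_eq_right h2]
    rw [abs_of_nonpos (by linarith), abs_of_nonpos (by linarith)]
    linarith
  · rw [min_eq_right h1, min_eq_left h2]
    rw [abs_of_nonneg (by linarith), abs_of_nonneg (by linarith)]
    linarith
  · rw [min_eq_right h1, min_eq_right h2]
    simp [abs_nonneg]

variable {K M : ℕ}

/-- center of the cap region -/
def zc (K : ℕ) (r : ℝ) : EuclideanSpace ℝ (Fin (K+1)) :=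
  (r/2) • EuclideanSpace.single 0 1

lemma zc_norm (K : ℕ) {r : ℝ} (hr : 0 < r) : ‖zc K r‖ = r/2 := by
  rw [zc, norm_smul, EuclideanSpace.norm_single]
  simp [abs_of_pos, hr.le, abs_of_nonneg]

lemma zc_dist (K : ℕ) {r : ℝ} (hr : 0 < r) : dist (zc K r) (-(zc K r)) = r := by
  rw [dist_eq_norm, sub_neg_eq_add, ← two_smul ℝ (zc K r), norm_smul]
  rw [zc_norm K hr]
  simp
  ring

/-- cutoff for the cap map -/
def gam (K : ℕ) (r : ℝ) (z : EuclideanSpace ℝ (Fin (K+1))) : ℝ :=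
  max 0 (min 1 (2 - dist z (zc K r) / (r/16)))

lemma gam_nonneg (K : ℕ) (r : ℝ) (z : EuclideanSpace ℝ (Fin (K+1))) : 0 ≤ gam K r z :=
  le_max_left _ _

lemma gam_le_one (K : ℕ) (r : ℝ) (z : EuclideanSpace ℝ (Fin (K+1))) : gam K r z ≤ 1 := by
  rw [gam]
  rcases le_total (min 1 (2 - dist z (zc K r) / (r/16))) 0 with h | h
  · rw [max_eq_left h]; norm_num
  · rw [max_eq_right h]; exact min_le_left _ _

lemma gam_eq_zero (K : ℕ) {r : ℝ} (hr : 0 < r) {z : EuclideanSpace ℝ (Fin (K+1))}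
    (h : r/8 ≤ dist z (zc K r)) : gam K r z = 0 := by
  rw [gam, max_eq_left]
  refine le_trans (min_le_right _ _) ?_
  rw [sub_nonpos, le_div_iff₀ (by positivity)]
  linarith

lemma gam_eq_one (K : ℕ) {r : ℝ} (hr : 0 < r) {z : EuclideanSpace ℝ (Fin (K+1))}
    (h : dist z (zc K r) ≤ r/16) : gam K r z = 1 := by
  have h1 : (1:ℝ) ≤ 2 - dist z (zc K r) / (r/16) := by
    have : dist z (zc K r) / (r/16) ≤ 1 := by
      rw [div_le_one (by positivity)]; exact h
    linarith
  rw [gam, min_eq_left h1, max_eq_right (by norm_num)]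

lemma gam_lip (K : ℕ) {r : ℝ} (hr : 0 < r) (z z' : EuclideanSpace ℝ (Fin (K+1))) :
    |gam K r z - gam K r z'| ≤ dist z z' / (r/16) := by
  have h1 : |gam K r z - gam K r z'|
      ≤ |min 1 (2 - dist z (zc K r) / (r/16)) - min 1 (2 - dist z' (zc K r) / (r/16))| := by
    rw [gam, gam, max_comm 0 _, max_comm 0 _]
    exact abs_max_sub_max_le_abs _ _ _
  have h2 : |min 1 (2 - dist z (zc K r) / (r/16)) - min 1 (2 - dist z' (zc K r) / (r/16))|
      ≤ |(2 - dist z (zc K r) / (r/16)) - (2 - dist z' (zc K r) / (r/16))| := by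
    rw [min_comm 1 _, min_comm 1 _]
    exact abs_min_sub_min_le _ _ _
  have h3 : |(2 - dist z (zc K r) / (r/16)) - (2 - dist z' (zc K r) / (r/16))|
      = |dist z' (zc K r) - dist z (zc K r)| / (r/16) := by
    have e : (2 - dist z (zc K r) / (r/16)) - (2 - dist z' (zc K r) / (r/16))
        = (dist z' (zc K r) - dist z (zc K r)) / (r/16) := by field_simp; ring
    rw [e, abs_div, abs_of_pos (by positivity : (0:ℝ) < r/16)]
  refine le_trans h1 (le_trans h2 ?_)
  rw [h3]
  refine div_le_div_of_nonneg_right ?_ (by positivity)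
  rw [abs_sub_comm]
  exact abs_dist_sub_le z z' (zc K r)

/-- bump functions for the snake -/
def bet (L : ℝ) (p : Fin M → EuclideanSpace ℝ (Fin (K+1))) (j : Fin M)
    (z : EuclideanSpace ℝ (Fin (K+1))) : ℝ :=
  max 0 (1 - (L/2) * dist z (p j))

lemma bet_nonneg (L : ℝ) (p : Fin M → EuclideanSpace ℝ (Fin (K+1))) (j : Fin M) (z) :
    0 ≤ bet L p j z := le_max_left _ _

lemma bet_le_one {L : ℝ} (hL : 0 < L) (p : Fin M → EuclideanSpace ℝ (Fin (K+1))) (j : Fin M) (z) :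
    bet L p j z ≤ 1 := by
  rw [bet]
  rcases le_total (1 - (L/2) * dist z (p j)) 0 with h | h
  · rw [max_eq_left h]; norm_num
  · rw [max_eq_right h]
    nlinarith [dist_nonneg (x := z) (y := p j)]

lemma bet_eq_zero {L : ℝ} (hL : 0 < L) {p : Fin M → EuclideanSpace ℝ (Fin (K+1))} {j : Fin M}
    {z} (h : 2/L ≤ dist z (p j)) : bet L p j z = 0 := by
  rw [bet, max_eq_left]
  rw [sub_nonpos]
  rw [div_le_iff₀ hL] at h
  nlinarith

lemma bet_self {L : ℝ} (p : Fin M → EuclideanSpace ℝ (Fin (K+1))) (j : Fin M) :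
    bet L p j (p j) = 1 := by
  rw [bet, dist_self]
  norm_num

lemma bet_pos_dist {L : ℝ} (hL : 0 < L) {p : Fin M → EuclideanSpace ℝ (Fin (K+1))} {j : Fin M}
    {z} (h : bet L p j z ≠ 0) : dist z (p j) < 2/L := by
  by_contra hcon
  push_neg at hcon
  exact h (bet_eq_zero hL hcon)

lemma bet_lip {L : ℝ} (hL : 0 < L) (p : Fin M → EuclideanSpace ℝ (Fin (K+1))) (j : Fin M)
    (z z') : |bet L p j z - bet L p j z'| ≤ (L/2) * dist z z' := by
  have h1 : |bet L p j z - bet L p j z'|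
      ≤ |(1 - (L/2) * dist z (p j)) - (1 - (L/2) * dist z' (p j))| := by
    rw [bet, bet, max_comm 0 _, max_comm 0 _]
    exact abs_max_sub_max_le_abs _ _ _
  have h2 : |(1 - (L/2) * dist z (p j)) - (1 - (L/2) * dist z' (p j))|
      = (L/2) * |dist z' (p j) - dist z (p j)| := by
    have e : (1 - (L/2) * dist z (p j)) - (1 - (L/2) * dist z' (p j))
        = (L/2) * (dist z' (p j) - dist z (p j)) := by ring
    rw [e, abs_mul, abs_of_pos (by positivity : (0:ℝ) < L/2)]
  refine le_trans h1 ?_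
  rw [h2]
  refine mul_le_mul_of_nonneg_left ?_ (by positivity)
  rw [abs_sub_comm]
  exact abs_dist_sub_le z z' (p j)

/-- projection to the first K coordinates -/
def projC (K : ℕ) (w : EuclideanSpace ℝ (Fin (K+1))) : EuclideanSpace ℝ (Fin K) :=
  WithLp.toLp 2 (fun l : Fin K => w l.castSucc)

lemma projC_norm_le (K : ℕ) (w : EuclideanSpace ℝ (Fin (K+1))) : ‖projC K w‖ ≤ ‖w‖ := by
  have h1 : ‖projC K w‖^2 ≤ ‖w‖^2 := by
    rw [nsq, nsq, Fin.sum_univ_castSucc]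
    have : ∑ l : Fin K, (projC K w l)^2 = ∑ l : Fin K, (w l.castSucc)^2 := rfl
    rw [this]
    nlinarith [sq_nonneg (w (Fin.last K))]
  nlinarith [norm_nonneg (projC K w), norm_nonneg w]

lemma projC_sub (K : ℕ) (w w' : EuclideanSpace ℝ (Fin (K+1))) :
    projC K w - projC K w' = projC K (w - w') := rfl

/-- the cap part of the construction -/
def capV (K : ℕ) (r : ℝ) (z : EuclideanSpace ℝ (Fin (K+1))) : EuclideanSpace ℝ (Fin K) :=
  (gam K r z * (Real.sqrt 2 * (r/16))⁻¹) • projC K (z - zc K r)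

lemma sqrt2_pos : (0:ℝ) < Real.sqrt 2 := Real.sqrt_pos.mpr (by norm_num)

lemma one_le_sqrt2 : (1:ℝ) ≤ Real.sqrt 2 := by
  rw [show (1:ℝ) = Real.sqrt 1 from (Real.sqrt_one).symm]
  exact Real.sqrt_le_sqrt (by norm_num)

lemma capV_zero_of_far (K : ℕ) {r : ℝ} (hr : 0 < r) {z : EuclideanSpace ℝ (Fin (K+1))}
    (h : r/8 ≤ dist z (zc K r)) : capV K r z = 0 := by
  rw [capV, gam_eq_zero K hr h]
  simp

lemma capV_lip (K : ℕ) {r : ℝ} (hr : 0 < r) (z z' : EuclideanSpace ℝ (Fin (K+1))) :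
    ‖capV K r z - capV K r z'‖ ≤ (3 * (Real.sqrt 2 * (r/16))⁻¹) * dist z z' := by
  have hcL : (0:ℝ) < (Real.sqrt 2 * (r/16))⁻¹ := by
    rw [inv_pos]; positivity
  set cL : ℝ := (Real.sqrt 2 * (r/16))⁻¹ with hcLdef
  suffices h : ∀ w w' : EuclideanSpace ℝ (Fin (K+1)), dist w' (zc K r) ≤ dist w (zc K r) →
      ‖capV K r w - capV K r w'‖ ≤ (3 * cL) * dist w w' by
    rcases le_total (dist z' (zc K r)) (dist z (zc K r)) with hc | hc
    · exact h z z' hc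
    · rw [norm_sub_rev, dist_comm]
      exact h z' z hc
  intro w w' hww
  by_cases hfar : r/8 ≤ dist w' (zc K r)
  · rw [capV_zero_of_far K hr (le_trans hfar hww), capV_zero_of_far K hr hfar, sub_zero,
      norm_zero]
    positivity
  · push_neg at hfar
    have decomp : capV K r w - capV K r w'
        = (gam K r w * cL) • projC K (w - w')
          + ((gam K r w - gam K r w') * cL) • projC K (w' - zc K r) := by
      ext l
      simp only [capV, projC, PiLp.sub_apply, PiLp.add_apply, PiLp.smul_apply, smul_eq_mul,
        PiLp.toLp_apply]
      ring
    have h1 : ‖(gam K r w * cL) • projC K (w - w')‖ ≤ cL * dist w w' := by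
      rw [norm_smul]
      have e1 : ‖projC K (w - w')‖ ≤ dist w w' := by
        rw [dist_eq_norm]; exact projC_norm_le K _
      have e2 : |gam K r w * cL| ≤ cL := by
        rw [abs_of_nonneg (mul_nonneg (gam_nonneg K r w) hcL.le)]
        nlinarith [gam_le_one K r w, gam_nonneg K r w]
      calc |gam K r w * cL| * ‖projC K (w - w')‖ ≤ cL * ‖projC K (w - w')‖ :=
            mul_le_mul_of_nonneg_right e2 (norm_nonneg _)
        _ ≤ cL * dist w w' := mul_le_mul_of_nonneg_left e1 hcL.le
    have h2 : ‖((gam K r w - gam K r w') * cL) • projC K (w' - zc K r)‖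
        ≤ 2 * cL * dist w w' := by
      rw [norm_smul]
      have e1 : ‖projC K (w' - zc K r)‖ ≤ r/8 := by
        refine le_trans (projC_norm_le K _) ?_
        rw [← dist_eq_norm]
        exact hfar.le
      have e2 : |(gam K r w - gam K r w') * cL| ≤ (dist w w' / (r/16)) * cL := by
        rw [abs_mul, abs_of_nonneg hcL.le]
        exact mul_le_mul_of_nonneg_right (gam_lip K hr w w') hcL.le
      calc |(gam K r w - gam K r w') * cL| * ‖projC K (w' - zc K r)‖
          ≤ ((dist w w' / (r/16)) * cL) * (r/8) := by
            refine mul_le_mul e2 e1 (norm_nonneg _) (by positivity)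
        _ = 2 * cL * dist w w' := by field_simp; ring
    calc ‖capV K r w - capV K r w'‖ ≤ ‖(gam K r w * cL) • projC K (w - w')‖
          + ‖((gam K r w - gam K r w') * cL) • projC K (w' - zc K r)‖ := by
          rw [decomp]; exact norm_add_le _ _
      _ ≤ cL * dist w w' + 2 * cL * dist w w' := add_le_add h1 h2
      _ = (3 * cL) * dist w w' := by ring

lemma capV_norm_le (K : ℕ) {r : ℝ} (hr : 0 < r) (z : EuclideanSpace ℝ (Fin (K+1))) :
    ‖capV K r z‖ ≤ (Real.sqrt 2)⁻¹ := by
  set D := dist z (zc K r) with hD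
  have hD0 : 0 ≤ D := dist_nonneg
  have hgD : gam K r z * D ≤ r/16 := by
    rcases le_total D (r/16) with h | h
    · nlinarith [gam_le_one K r z, gam_nonneg K r z]
    · rcases le_total (r/8) D with h2 | h2
      · rw [gam_eq_zero K hr h2]; simp; positivity
      · have hgle : gam K r z ≤ 2 - D / (r/16) := by
          have : min 1 (2 - D / (r/16)) ≤ 2 - D / (r/16) := min_le_right _ _
          have h0 : (0:ℝ) ≤ 2 - D / (r/16) := by
            rw [sub_nonneg, div_le_iff₀ (by positivity)]
            linarith
          rw [gam, max_le_iff] at *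
          constructor
          · exact h0
          · exact this
        have : (2 - D / (r/16)) * D ≤ r/16 := by
          have expand : (r/16) - (2 - D / (r/16)) * D = (D - r/16)^2 / (r/16) := by
            field_simp
            ring
          nlinarith [sq_nonneg (D - r/16), (by positivity : (0:ℝ) < r/16),
            div_nonneg (sq_nonneg (D - r/16)) (by positivity : (0:ℝ) ≤ r/16)]
        nlinarith [gam_nonneg K r z, gam_le_one K r z]
  rw [capV, norm_smul]
  have e1 : ‖projC K (z - zc K r)‖ ≤ D := by
    refine le_trans (projC_norm_le K _) ?_
    rw [← dist_eq_norm, hD]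
  have e2 : ‖gam K r z * (Real.sqrt 2 * (r/16))⁻¹‖ = gam K r z * (Real.sqrt 2 * (r/16))⁻¹ := by
    rw [Real.norm_eq_abs, abs_of_nonneg]
    exact mul_nonneg (gam_nonneg K r z) (by positivity)
  rw [e2]
  have key : gam K r z * (Real.sqrt 2 * (r/16))⁻¹ * D ≤ (Real.sqrt 2)⁻¹ := by
    rw [mul_inv]
    have h1 : gam K r z * ((Real.sqrt 2)⁻¹ * (r/16)⁻¹) * D
        = (Real.sqrt 2)⁻¹ * ((gam K r z * D) * (r/16)⁻¹) := by ring
    rw [h1]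
    have h2 : (gam K r z * D) * (r/16)⁻¹ ≤ 1 := by
      calc gam K r z * D * (r/16)⁻¹ ≤ (r/16) * (r/16)⁻¹ :=
            mul_le_mul_of_nonneg_right hgD (by positivity)
        _ = 1 := by field_simp
    nlinarith [inv_pos.mpr sqrt2_pos]
  calc gam K r z * (Real.sqrt 2 * (r/16))⁻¹ * ‖projC K (z - zc K r)‖
      ≤ gam K r z * (Real.sqrt 2 * (r/16))⁻¹ * D := by
        refine mul_le_mul_of_nonneg_left e1 ?_
        have := gam_nonneg K r z
        positivity
    _ ≤ (Real.sqrt 2)⁻¹ := key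

/-- the full map into `ℝ^{K+M}` -/
def Fc (K M : ℕ) (r L : ℝ) (p : Fin M → EuclideanSpace ℝ (Fin (K+1)))
    (z : EuclideanSpace ℝ (Fin (K+1))) : EuclideanSpace ℝ (Fin (K+M)) :=
  WithLp.toLp 2 (Fin.append (capV K r z).ofLp (fun j => bet L p j z * (Real.sqrt 2)⁻¹))

lemma Fc_sub_sq (K M : ℕ) (r L : ℝ) (p : Fin M → EuclideanSpace ℝ (Fin (K+1))) (z z') :
    ‖Fc K M r L p z - Fc K M r L p z'‖^2
      = ‖capV K r z - capV K r z'‖^2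
        + ∑ j : Fin M, ((bet L p j z - bet L p j z') * (Real.sqrt 2)⁻¹)^2 := by
  rw [nsq, nsq, Fin.sum_univ_add]
  congr 1
  · refine Finset.sum_congr rfl fun l _ => ?_
    congr 1
    simp only [PiLp.sub_apply, Fc, Fin.append_left]
  · refine Finset.sum_congr rfl fun j _ => ?_
    simp only [PiLp.sub_apply, Fc, Fin.append_right]
    ring_nf

lemma Fc_norm_sq (K M : ℕ) (r L : ℝ) (p : Fin M → EuclideanSpace ℝ (Fin (K+1))) (z) :
    ‖Fc K M r L p z‖^2
      = ‖capV K r z‖^2 + ∑ j : Fin M, (bet L p j z * (Real.sqrt 2)⁻¹)^2 := by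
  rw [nsq, nsq, Fin.sum_univ_add]
  congr 1
  · refine Finset.sum_congr rfl fun l _ => ?_
    congr 1
    simp only [Fc, Fin.append_left]
  · refine Finset.sum_congr rfl fun j _ => ?_
    simp only [Fc, Fin.append_right]

lemma active_card {K M : ℕ} {L : ℝ} (hL : 0 < L) {p : Fin M → EuclideanSpace ℝ (Fin (K+1))}
    (hsep : ∀ i j : Fin M, i ≠ j → 4/L ≤ dist (p i) (p j)) (z) :
    (Finset.univ.filter (fun j => bet L p j z ≠ 0)).card ≤ 1 := by
  rw [Finset.card_le_one]
  intro i hi j hj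
  simp only [Finset.mem_filter] at hi hj
  by_contra hij
  have h1 := bet_pos_dist hL hi.2
  have h2 := bet_pos_dist hL hj.2
  have h3 := hsep i j hij
  have htri := dist_triangle (p i) z (p j)
  rw [dist_comm (p i) z] at htri
  have h4 : 2/L + 2/L = 4/L := by ring
  linarith

lemma snake_diff_bound {K M : ℕ} {L : ℝ} (hL : 0 < L)
    {p : Fin M → EuclideanSpace ℝ (Fin (K+1))}
    (hsep : ∀ i j : Fin M, i ≠ j → 4/L ≤ dist (p i) (p j)) (z z') :
    ∑ j : Fin M, (bet L p j z - bet L p j z')^2 ≤ 2 * ((L/2) * dist z z')^2 := by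
  classical
  set J := (Finset.univ.filter (fun j => bet L p j z ≠ 0))
    ∪ (Finset.univ.filter (fun j => bet L p j z' ≠ 0)) with hJ
  have hJcard : J.card ≤ 2 := by
    refine le_trans (Finset.card_union_le _ _) ?_
    have := active_card hL hsep z
    have := active_card hL hsep z'
    omega
  have hzero : ∀ j ∈ Finset.univ, j ∉ J → (bet L p j z - bet L p j z')^2 = 0 := by
    intro j _ hj
    rw [hJ, Finset.mem_union, Finset.mem_filter, Finset.mem_filter] at hj
    push_neg at hj
    have h1 : bet L p j z = 0 := hj.1 (Finset.mem_univ j)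
    have h2 : bet L p j z' = 0 := hj.2 (Finset.mem_univ j)
    rw [h1, h2]
    ring
  have hterm : ∀ j, (bet L p j z - bet L p j z')^2 ≤ ((L/2) * dist z z')^2 := by
    intro j
    have h := bet_lip hL p j z z'
    have h2 : (bet L p j z - bet L p j z')^2 = |bet L p j z - bet L p j z'|^2 := (sq_abs _).symm
    rw [h2]
    exact pow_le_pow_left₀ (abs_nonneg _) h 2
  calc ∑ j : Fin M, (bet L p j z - bet L p j z')^2
      = ∑ j ∈ J, (bet L p j z - bet L p j z')^2 :=
        (Finset.sum_subset (Finset.subset_univ J) hzero).symm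
    _ ≤ ∑ _j ∈ J, ((L/2) * dist z z')^2 := Finset.sum_le_sum fun j _ => hterm j
    _ = J.card * ((L/2) * dist z z')^2 := by rw [Finset.sum_const, nsmul_eq_mul]
    _ ≤ 2 * ((L/2) * dist z z')^2 := by
        refine mul_le_mul_of_nonneg_right ?_ (by positivity)
        exact_mod_cast hJcard

lemma snake_norm_bound {K M : ℕ} {L : ℝ} (hL : 0 < L)
    {p : Fin M → EuclideanSpace ℝ (Fin (K+1))}
    (hsep : ∀ i j : Fin M, i ≠ j → 4/L ≤ dist (p i) (p j)) (z) :
    ∑ j : Fin M, (bet L p j z)^2 ≤ 1 := by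
  classical
  set J := Finset.univ.filter (fun j => bet L p j z ≠ 0) with hJ
  have hzero : ∀ j ∈ Finset.univ, j ∉ J → (bet L p j z)^2 = 0 := by
    intro j _ hj
    rw [hJ, Finset.mem_filter] at hj
    push_neg at hj
    rw [hj (Finset.mem_univ j)]
    ring
  have hterm : ∀ j, (bet L p j z)^2 ≤ 1 := by
    intro j
    nlinarith [bet_le_one hL p j z, bet_nonneg L p j z]
  calc ∑ j : Fin M, (bet L p j z)^2 = ∑ j ∈ J, (bet L p j z)^2 :=
        (Finset.sum_subset (Finset.subset_univ J) hzero).symm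
    _ ≤ ∑ _j ∈ J, 1 := Finset.sum_le_sum fun j _ => hterm j
    _ = J.card := by rw [Finset.sum_const, nsmul_eq_mul, mul_one]
    _ ≤ 1 := by exact_mod_cast active_card hL hsep z

lemma Fc_lip {K M : ℕ} {r L : ℝ} (hr : 0 < r) (hL : 1024/r ≤ L)
    {p : Fin M → EuclideanSpace ℝ (Fin (K+1))}
    (hsep : ∀ i j : Fin M, i ≠ j → 4/L ≤ dist (p i) (p j)) (z z') :
    ‖Fc K M r L p z - Fc K M r L p z'‖ ≤ (L * (Real.sqrt 2)⁻¹) * dist z z' := by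
  have hL0 : 0 < L := lt_of_lt_of_le (by positivity) hL
  have hLr : 1024 ≤ L * r := by
    rw [div_le_iff₀ hr] at hL
    linarith
  have hcL3 : 3 * (Real.sqrt 2 * (r/16))⁻¹ ≤ L / 2 := by
    have h1 : (Real.sqrt 2 * (r/16))⁻¹ ≤ (r/16)⁻¹ := by
      rw [mul_inv]
      have h2 : (Real.sqrt 2)⁻¹ ≤ 1 := by
        rw [inv_le_one_iff₀]
        right; exact one_le_sqrt2
      nlinarith [inv_pos.mpr (by positivity : (0:ℝ) < r/16)]
    have h3 : (r/16)⁻¹ = 16/r := by field_simp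
    rw [h3] at h1
    have h5 : 3 * (16/r) ≤ L/2 := by
      have e : 3 * (16/r) = 48/r := by ring
      rw [e, div_le_iff₀ hr]
      nlinarith
    nlinarith [inv_pos.mpr (by positivity : (0:ℝ) < Real.sqrt 2 * (r/16)), h1]
  have hsq : ‖Fc K M r L p z - Fc K M r L p z'‖^2 ≤ ((L * (Real.sqrt 2)⁻¹) * dist z z')^2 := by
    rw [Fc_sub_sq]
    have hcap : ‖capV K r z - capV K r z'‖^2 ≤ ((L/2) * dist z z')^2 := by
      have h1 := capV_lip K hr z z'
      have h2 : (3 * (Real.sqrt 2 * (r/16))⁻¹) * dist z z' ≤ (L/2) * dist z z' :=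
        mul_le_mul_of_nonneg_right hcL3 dist_nonneg
      have h3 : ‖capV K r z - capV K r z'‖ ≤ (L/2) * dist z z' := le_trans h1 h2
      exact pow_le_pow_left₀ (norm_nonneg _) h3 2
    have hsnake : ∑ j : Fin M, ((bet L p j z - bet L p j z') * (Real.sqrt 2)⁻¹)^2
        ≤ ((L/2) * dist z z')^2 := by
      have e : ∀ j : Fin M, ((bet L p j z - bet L p j z') * (Real.sqrt 2)⁻¹)^2
          = (bet L p j z - bet L p j z')^2 * ((Real.sqrt 2)⁻¹)^2 := fun j => by ring
      rw [Finset.sum_congr rfl (fun j _ => e j), ← Finset.sum_mul]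
      have h2 : ((Real.sqrt 2)⁻¹)^2 = 1/2 := by
        rw [inv_pow, Real.sq_sqrt (by norm_num : (0:ℝ) ≤ 2)]
        norm_num
      rw [h2]
      have h3 := snake_diff_bound hL0 hsep z z'
      nlinarith
    have hfinal : ((L/2) * dist z z')^2 + ((L/2) * dist z z')^2
        = ((L * (Real.sqrt 2)⁻¹) * dist z z')^2 := by
      have h2 : ((Real.sqrt 2)⁻¹)^2 = 1/2 := by
        rw [inv_pow, Real.sq_sqrt (by norm_num : (0:ℝ) ≤ 2)]
        norm_num
      have expand : ((L * (Real.sqrt 2)⁻¹) * dist z z')^2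
          = L^2 * ((Real.sqrt 2)⁻¹)^2 * (dist z z')^2 := by ring
      rw [expand, h2]
      ring
    linarith [hcap, hsnake]
  have h0 : 0 ≤ (L * (Real.sqrt 2)⁻¹) * dist z z' := by
    have := inv_pos.mpr sqrt2_pos
    positivity
  nlinarith [norm_nonneg (Fc K M r L p z - Fc K M r L p z')]

lemma Fc_norm_le {K M : ℕ} {r L : ℝ} (hr : 0 < r) (hL : 1024/r ≤ L)
    {p : Fin M → EuclideanSpace ℝ (Fin (K+1))}
    (hsep : ∀ i j : Fin M, i ≠ j → 4/L ≤ dist (p i) (p j))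
    (hp : ∀ j, dist (p j) (-(zc K r)) ≤ r/8) (z) :
    ‖Fc K M r L p z‖ ≤ (Real.sqrt 2)⁻¹ := by
  have hL0 : 0 < L := lt_of_lt_of_le (by positivity) hL
  have hLr : 1024 ≤ L * r := by
    rw [div_le_iff₀ hr] at hL
    linarith
  have h2 : ((Real.sqrt 2)⁻¹)^2 = 1/2 := by
    rw [inv_pow, Real.sq_sqrt (by norm_num : (0:ℝ) ≤ 2)]
    norm_num
  have hsq : ‖Fc K M r L p z‖^2 ≤ 1/2 := by
    rw [Fc_norm_sq]
    by_cases hfar : r/8 ≤ dist z (zc K r)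
    · rw [capV_zero_of_far K hr hfar, norm_zero]
      have e : ∀ j : Fin M, (bet L p j z * (Real.sqrt 2)⁻¹)^2
          = (bet L p j z)^2 * ((Real.sqrt 2)⁻¹)^2 := fun j => by ring
      rw [Finset.sum_congr rfl (fun j _ => e j), ← Finset.sum_mul, h2]
      have h3 := snake_norm_bound hL0 hsep z
      nlinarith
    · push_neg at hfar
      have hbz : ∀ j, bet L p j z = 0 := by
        intro j
        refine bet_eq_zero hL0 ?_
        have htri := dist_triangle (zc K r) z (p j)
        have htri2 := dist_triangle z (p j) (-(zc K r))
        have hzz := zc_dist K hr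
        have h1 : r ≤ dist (zc K r) z + dist z (p j) + dist (p j) (-(zc K r)) := by
          calc r = dist (zc K r) (-(zc K r)) := hzz.symm
            _ ≤ dist (zc K r) z + dist z (-(zc K r)) := dist_triangle _ _ _
            _ ≤ dist (zc K r) z + (dist z (p j) + dist (p j) (-(zc K r))) := by
                linarith [dist_triangle z (p j) (-(zc K r))]
            _ = _ := by ring
        rw [dist_comm (zc K r) z] at h1
        have h4 := hp j
        have h5 : 3*r/4 ≤ dist z (p j) := by linarith
        have h6 : 2/L ≤ 3*r/4 := by
          rw [div_le_div_iff₀ hL0 (by norm_num)]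
          nlinarith
        linarith
      have e : ∀ j : Fin M, (bet L p j z * (Real.sqrt 2)⁻¹)^2 = 0 := by
        intro j; rw [hbz j]; ring
      rw [Finset.sum_congr rfl (fun j _ => e j), Finset.sum_const, smul_zero]
      have h4 := capV_norm_le K hr z
      nlinarith [norm_nonneg (capV K r z)]
  nlinarith [norm_nonneg (Fc K M r L p z), inv_pos.mpr sqrt2_pos, h2]

lemma inv_sqrt2_sq : ((Real.sqrt 2)⁻¹)^2 = 1/2 := by
  rw [inv_pow, Real.sq_sqrt (by norm_num : (0:ℝ) ≤ 2)]
  norm_num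

lemma norm_eq_of_sq_eq {E F : Type*} [NormedAddCommGroup E] [NormedAddCommGroup F]
    {x : E} {y : F} (h : ‖x‖^2 = ‖y‖^2) : ‖x‖ = ‖y‖ := by
  nlinarith [norm_nonneg x, norm_nonneg y]

lemma sqrt_diff_le {a b : ℝ} (ha0 : 0 ≤ a) (ha : a ≤ (Real.sqrt 2)⁻¹)
    (hb0 : 0 ≤ b) (hb : b ≤ (Real.sqrt 2)⁻¹) :
    |Real.sqrt (1 - a^2) - Real.sqrt (1 - b^2)| ≤ |a - b| := by
  have ha2 : a^2 ≤ 1/2 := by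
    calc a^2 ≤ ((Real.sqrt 2)⁻¹)^2 := pow_le_pow_left₀ ha0 ha 2
      _ = 1/2 := inv_sqrt2_sq
  have hb2 : b^2 ≤ 1/2 := by
    calc b^2 ≤ ((Real.sqrt 2)⁻¹)^2 := pow_le_pow_left₀ hb0 hb 2
      _ = 1/2 := inv_sqrt2_sq
  set sa := Real.sqrt (1 - a^2) with hsa
  set sb := Real.sqrt (1 - b^2) with hsb
  have hsa2 : sa^2 = 1 - a^2 := Real.sq_sqrt (by linarith)
  have hsb2 : sb^2 = 1 - b^2 := Real.sq_sqrt (by linarith)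
  have hsa0 : 0 ≤ sa := Real.sqrt_nonneg _
  have hsb0 : 0 ≤ sb := Real.sqrt_nonneg _
  have hinv : (Real.sqrt 2)⁻¹ = Real.sqrt (1/2) := by
    rw [show (1:ℝ)/2 = 2⁻¹ by norm_num, Real.sqrt_inv]
  have hasa : a ≤ sa := by
    refine le_trans ha ?_
    rw [hinv, hsa]
    exact Real.sqrt_le_sqrt (by linarith)
  have hbsb : b ≤ sb := by
    refine le_trans hb ?_
    rw [hinv, hsb]
    exact Real.sqrt_le_sqrt (by linarith)
  have hSpos : 0 < sa + sb := by
    have h1 : (0:ℝ) < (Real.sqrt 2)⁻¹ := inv_pos.mpr sqrt2_pos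
    have h2 : (Real.sqrt 2)⁻¹ ≤ sa := by
      rw [hinv, hsa]
      exact Real.sqrt_le_sqrt (by linarith)
    linarith
  have key : (sa - sb) * (sa + sb) = (b - a) * (b + a) := by nlinarith [hsa2, hsb2]
  have hTS : a + b ≤ sa + sb := by linarith
  have hT0 : 0 ≤ a + b := by linarith
  have hsq : (sa - sb)^2 ≤ (a - b)^2 := by
    have key2 : ((sa - sb) * (sa + sb))^2 = ((b - a) * (b + a))^2 := by rw [key]
    have hT2 : (a + b)^2 ≤ (sa + sb)^2 := pow_le_pow_left₀ hT0 hTS 2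
    have hS2 : 0 < (sa + sb)^2 := by positivity
    nlinarith [key2, hT2, hS2, sq_nonneg (b - a), sq_nonneg (sa - sb)]
  have h1 : |sa - sb|^2 ≤ |a - b|^2 := by rwa [sq_abs, sq_abs]
  nlinarith [abs_nonneg (sa - sb), abs_nonneg (a - b)]

/-- the generative model -/
def Gc (K M : ℕ) (r L : ℝ) (p : Fin M → EuclideanSpace ℝ (Fin (K+1)))
    (z : EuclideanSpace ℝ (Fin (K+1))) : EuclideanSpace ℝ (Fin ((K+M)+1)) :=
  WithLp.toLp 2 (Fin.snoc (α := fun _ => ℝ) (Fc K M r L p z).ofLp (Real.sqrt (1 - ‖Fc K M r L p z‖^2)))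

lemma Gc_norm_sq (K M : ℕ) (r L : ℝ) (p : Fin M → EuclideanSpace ℝ (Fin (K+1))) (z) :
    ‖Gc K M r L p z‖^2 = ‖Fc K M r L p z‖^2
      + (Real.sqrt (1 - ‖Fc K M r L p z‖^2))^2 := by
  rw [nsq (Gc K M r L p z), Fin.sum_univ_castSucc]
  congr 1
  · rw [nsq]
    refine Finset.sum_congr rfl fun l _ => ?_
    congr 1
    show (Fin.snoc (Fc K M r L p z) _ : Fin ((K+M)+1) → ℝ) l.castSucc = _
    rw [Fin.snoc_castSucc]
  · congr 1
    show (Fin.snoc (Fc K M r L p z) _ : Fin ((K+M)+1) → ℝ) (Fin.last (K+M)) = _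
    rw [Fin.snoc_last]

lemma Gc_sub_sq (K M : ℕ) (r L : ℝ) (p : Fin M → EuclideanSpace ℝ (Fin (K+1))) (z z') :
    ‖Gc K M r L p z - Gc K M r L p z'‖^2 = ‖Fc K M r L p z - Fc K M r L p z'‖^2
      + (Real.sqrt (1 - ‖Fc K M r L p z‖^2) - Real.sqrt (1 - ‖Fc K M r L p z'‖^2))^2 := by
  rw [nsq (Gc K M r L p z - Gc K M r L p z'), Fin.sum_univ_castSucc]
  congr 1
  · rw [nsq]
    refine Finset.sum_congr rfl fun l _ => ?_
    congr 1
    simp only [PiLp.sub_apply]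
    congr 1 <;>
    · show (Fin.snoc _ _ : Fin ((K+M)+1) → ℝ) l.castSucc = _
      rw [Fin.snoc_castSucc]
  · congr 1
    simp only [PiLp.sub_apply]
    congr 1 <;>
    · show (Fin.snoc _ _ : Fin ((K+M)+1) → ℝ) (Fin.last (K+M)) = _
      rw [Fin.snoc_last]

lemma Gc_norm_one {K M : ℕ} {r L : ℝ} (hr : 0 < r) (hL : 1024/r ≤ L)
    {p : Fin M → EuclideanSpace ℝ (Fin (K+1))}
    (hsep : ∀ i j : Fin M, i ≠ j → 4/L ≤ dist (p i) (p j))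
    (hp : ∀ j, dist (p j) (-(zc K r)) ≤ r/8) (z) :
    ‖Gc K M r L p z‖ = 1 := by
  have hF := Fc_norm_le hr hL hsep hp z
  have hF2 : ‖Fc K M r L p z‖^2 ≤ 1/2 := by
    calc ‖Fc K M r L p z‖^2 ≤ ((Real.sqrt 2)⁻¹)^2 := pow_le_pow_left₀ (norm_nonneg _) hF 2
      _ = 1/2 := inv_sqrt2_sq
  have h1 : ‖Gc K M r L p z‖^2 = 1 := by
    rw [Gc_norm_sq, Real.sq_sqrt (by linarith)]
    ring
  nlinarith [norm_nonneg (Gc K M r L p z)]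

lemma Gc_lip {K M : ℕ} {r L : ℝ} (hr : 0 < r) (hL : 1024/r ≤ L)
    {p : Fin M → EuclideanSpace ℝ (Fin (K+1))}
    (hsep : ∀ i j : Fin M, i ≠ j → 4/L ≤ dist (p i) (p j))
    (hp : ∀ j, dist (p j) (-(zc K r)) ≤ r/8) (z z') :
    ‖Gc K M r L p z - Gc K M r L p z'‖ ≤ L * ‖z - z'‖ := by
  have hL0 : 0 < L := lt_of_lt_of_le (by positivity) hL
  have hFd := Fc_lip hr hL hsep z z'
  have hlast : |Real.sqrt (1 - ‖Fc K M r L p z‖^2) - Real.sqrt (1 - ‖Fc K M r L p z'‖^2)|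
      ≤ ‖Fc K M r L p z - Fc K M r L p z'‖ := by
    refine le_trans (sqrt_diff_le (norm_nonneg _) (Fc_norm_le hr hL hsep hp z)
      (norm_nonneg _) (Fc_norm_le hr hL hsep hp z')) ?_
    exact abs_norm_sub_norm_le _ _
  have hsq : ‖Gc K M r L p z - Gc K M r L p z'‖^2 ≤ (L * ‖z - z'‖)^2 := by
    rw [Gc_sub_sq]
    have h1 : (Real.sqrt (1 - ‖Fc K M r L p z‖^2) - Real.sqrt (1 - ‖Fc K M r L p z'‖^2))^2
        ≤ ‖Fc K M r L p z - Fc K M r L p z'‖^2 := by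
      rw [← sq_abs (Real.sqrt _ - Real.sqrt _)]
      exact pow_le_pow_left₀ (abs_nonneg _) hlast 2
    have h2 : ‖Fc K M r L p z - Fc K M r L p z'‖^2 ≤ ((L * (Real.sqrt 2)⁻¹) * dist z z')^2 :=
      pow_le_pow_left₀ (norm_nonneg _) hFd 2
    have h3 : ((L * (Real.sqrt 2)⁻¹) * dist z z')^2 = (L^2/2) * (dist z z')^2 := by
      have e : ((L * (Real.sqrt 2)⁻¹) * dist z z')^2
          = L^2 * ((Real.sqrt 2)⁻¹)^2 * (dist z z')^2 := by ring
      rw [e, inv_sqrt2_sq]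
      ring
    rw [dist_eq_norm] at h2 h3
    nlinarith
  nlinarith [norm_nonneg (Gc K M r L p z - Gc K M r L p z'), norm_nonneg (z - z'),
    mul_nonneg hL0.le (norm_nonneg (z - z'))]

lemma Gc_dist_ge (K M : ℕ) (r L : ℝ) (p : Fin M → EuclideanSpace ℝ (Fin (K+1))) (z z') :
    ‖Fc K M r L p z - Fc K M r L p z'‖ ≤ ‖Gc K M r L p z - Gc K M r L p z'‖ := by
  have h := Gc_sub_sq K M r L p z z'
  nlinarith [norm_nonneg (Fc K M r L p z - Fc K M r L p z'),
    norm_nonneg (Gc K M r L p z - Gc K M r L p z'),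
    sq_nonneg (Real.sqrt (1 - ‖Fc K M r L p z‖^2) - Real.sqrt (1 - ‖Fc K M r L p z'‖^2))]

/-- embedding `ℝ^K → ℝ^{K+1}` by appending a zero coordinate -/
def embD (K : ℕ) (u : EuclideanSpace ℝ (Fin K)) : EuclideanSpace ℝ (Fin (K+1)) :=
  WithLp.toLp 2 (Fin.snoc (α := fun _ => ℝ) u.ofLp 0)

lemma embD_apply_castSucc (K : ℕ) (u : EuclideanSpace ℝ (Fin K)) (l : Fin K) :
    embD K u l.castSucc = u l := by
  show (Fin.snoc u 0 : Fin (K+1) → ℝ) l.castSucc = u l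
  rw [Fin.snoc_castSucc]

lemma embD_apply_last (K : ℕ) (u : EuclideanSpace ℝ (Fin K)) :
    embD K u (Fin.last K) = 0 := by
  show (Fin.snoc u 0 : Fin (K+1) → ℝ) (Fin.last K) = 0
  rw [Fin.snoc_last]

lemma embD_norm (K : ℕ) (u : EuclideanSpace ℝ (Fin K)) : ‖embD K u‖ = ‖u‖ := by
  refine norm_eq_of_sq_eq ?_
  rw [nsq, nsq, Fin.sum_univ_castSucc, embD_apply_last]
  simp only [embD_apply_castSucc]
  norm_num

/-- embedding of the cap parameter into the domain -/
def wpt (K : ℕ) (r : ℝ) (u : EuclideanSpace ℝ (Fin K)) : EuclideanSpace ℝ (Fin (K+1)) :=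
  zc K r + (Real.sqrt 2 * (r/16)) • embD K u

lemma wpt_dist (K : ℕ) {r : ℝ} (hr : 0 < r) (u : EuclideanSpace ℝ (Fin K)) :
    dist (wpt K r u) (zc K r) = (Real.sqrt 2 * (r/16)) * ‖u‖ := by
  rw [dist_eq_norm, wpt, add_sub_cancel_left, norm_smul, embD_norm, Real.norm_eq_abs,
    abs_of_pos (by positivity)]

lemma wpt_dist_le (K : ℕ) {r : ℝ} (hr : 0 < r) {u : EuclideanSpace ℝ (Fin K)}
    (hu : ‖u‖ ≤ (Real.sqrt 2)⁻¹) : dist (wpt K r u) (zc K r) ≤ r/16 := by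
  rw [wpt_dist K hr u]
  calc Real.sqrt 2 * (r/16) * ‖u‖ ≤ Real.sqrt 2 * (r/16) * (Real.sqrt 2)⁻¹ :=
        mul_le_mul_of_nonneg_left hu (by positivity)
    _ = r/16 := by
        field_simp

lemma capV_wpt (K : ℕ) {r : ℝ} (hr : 0 < r) {u : EuclideanSpace ℝ (Fin K)}
    (hu : ‖u‖ ≤ (Real.sqrt 2)⁻¹) : capV K r (wpt K r u) = u := by
  have hg : gam K r (wpt K r u) = 1 := gam_eq_one K hr (wpt_dist_le K hr hu)
  ext l
  rw [capV]
  simp only [PiLp.smul_apply, smul_eq_mul, hg, one_mul]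
  have h1 : projC K (wpt K r u - zc K r) l = (Real.sqrt 2 * (r/16)) * u l := by
    rw [projC]
    simp only [PiLp.sub_apply, wpt, PiLp.add_apply, PiLp.smul_apply, smul_eq_mul]
    rw [embD_apply_castSucc]
    ring
  rw [h1]
  have hne : (Real.sqrt 2 * (r/16)) ≠ 0 := by positivity
  field_simp

lemma bet_wpt {K M : ℕ} {r L : ℝ} (hr : 0 < r) (hL : 1024/r ≤ L)
    {p : Fin M → EuclideanSpace ℝ (Fin (K+1))}
    (hp : ∀ j, dist (p j) (-(zc K r)) ≤ r/8)
    {u : EuclideanSpace ℝ (Fin K)} (hu : ‖u‖ ≤ (Real.sqrt 2)⁻¹) (j : Fin M) :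
    bet L p j (wpt K r u) = 0 := by
  have hL0 : 0 < L := lt_of_lt_of_le (by positivity) hL
  have hLr : 1024 ≤ L * r := by
    rw [div_le_iff₀ hr] at hL
    linarith
  refine bet_eq_zero hL0 ?_
  have h1 : r ≤ dist (zc K r) (wpt K r u) + dist (wpt K r u) (p j) + dist (p j) (-(zc K r)) := by
    calc r = dist (zc K r) (-(zc K r)) := (zc_dist K hr).symm
      _ ≤ dist (zc K r) (wpt K r u) + dist (wpt K r u) (-(zc K r)) := dist_triangle _ _ _
      _ ≤ dist (zc K r) (wpt K r u) + (dist (wpt K r u) (p j) + dist (p j) (-(zc K r))) := by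
          linarith [dist_triangle (wpt K r u) (p j) (-(zc K r))]
      _ = _ := by ring
  rw [dist_comm (zc K r) (wpt K r u)] at h1
  have h2 := wpt_dist_le K hr hu
  have h3 := hp j
  have h4 : 2/L ≤ 13*r/16 := by
    rw [div_le_div_iff₀ hL0 (by norm_num)]
    nlinarith
  linarith

lemma Fc_wpt_eq {K M : ℕ} {r L : ℝ} (hr : 0 < r) (hL : 1024/r ≤ L)
    {p : Fin M → EuclideanSpace ℝ (Fin (K+1))}
    (hp : ∀ j, dist (p j) (-(zc K r)) ≤ r/8)
    {u : EuclideanSpace ℝ (Fin K)} (hu : ‖u‖ ≤ (Real.sqrt 2)⁻¹) :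
    Fc K M r L p (wpt K r u) = WithLp.toLp 2 (Fin.append u.ofLp (fun _ : Fin M => (0:ℝ))) := by
  have hb : (fun j : Fin M => bet L p j (wpt K r u) * (Real.sqrt 2)⁻¹)
      = (fun _ : Fin M => (0:ℝ)) := by
    funext j
    rw [bet_wpt hr hL hp hu j]
    ring
  rw [Fc, capV_wpt K hr hu, hb]

lemma Fc_wpt_norm {K M : ℕ} {r L : ℝ} (hr : 0 < r) (hL : 1024/r ≤ L)
    {p : Fin M → EuclideanSpace ℝ (Fin (K+1))}
    (hp : ∀ j, dist (p j) (-(zc K r)) ≤ r/8)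
    {u : EuclideanSpace ℝ (Fin K)} (hu : ‖u‖ ≤ (Real.sqrt 2)⁻¹) :
    ‖Fc K M r L p (wpt K r u)‖ = ‖u‖ := by
  rw [Fc_wpt_eq hr hL hp hu]
  refine norm_eq_of_sq_eq ?_
  rw [nsq, nsq, Fin.sum_univ_add]
  simp only [Fin.append_left, Fin.append_right]
  norm_num

lemma wpt_mem_ball (K : ℕ) {r : ℝ} (hr : 0 < r) {u : EuclideanSpace ℝ (Fin K)}
    (hu : ‖u‖ ≤ (Real.sqrt 2)⁻¹) :
    wpt K r u ∈ Metric.closedBall (0 : EuclideanSpace ℝ (Fin (K+1))) r := by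
  rw [Metric.mem_closedBall, dist_zero_right]
  have h1 : ‖wpt K r u‖ ≤ ‖zc K r‖ + ‖(Real.sqrt 2 * (r/16)) • embD K u‖ := norm_add_le _ _
  rw [zc_norm K hr, norm_smul, embD_norm, Real.norm_eq_abs, abs_of_pos (by positivity)] at h1
  have h2 : Real.sqrt 2 * (r/16) * ‖u‖ ≤ r/16 := by
    calc Real.sqrt 2 * (r/16) * ‖u‖ ≤ Real.sqrt 2 * (r/16) * (Real.sqrt 2)⁻¹ :=
          mul_le_mul_of_nonneg_left hu (by positivity)
      _ = r/16 := by field_simp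
  linarith

lemma capV_p {K M : ℕ} {r : ℝ} (hr : 0 < r)
    {p : Fin M → EuclideanSpace ℝ (Fin (K+1))}
    (hp : ∀ j, dist (p j) (-(zc K r)) ≤ r/8) (j : Fin M) :
    capV K r (p j) = 0 := by
  refine capV_zero_of_far K hr ?_
  have h1 : r ≤ dist (zc K r) (p j) + dist (p j) (-(zc K r)) := by
    calc r = dist (zc K r) (-(zc K r)) := (zc_dist K hr).symm
      _ ≤ _ := dist_triangle _ _ _
  have h2 := hp j
  rw [dist_comm (zc K r) (p j)] at h1
  linarith

lemma bet_p {K M : ℕ} {L : ℝ} (hL : 0 < L)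
    {p : Fin M → EuclideanSpace ℝ (Fin (K+1))}
    (hsep : ∀ i j : Fin M, i ≠ j → 4/L ≤ dist (p i) (p j)) (i j : Fin M) :
    bet L p i (p j) = if i = j then 1 else 0 := by
  by_cases h : i = j
  · rw [h, if_pos rfl, bet_self]
  · rw [if_neg h]
    refine bet_eq_zero hL ?_
    have h1 := hsep j i (Ne.symm h)
    have h2 : 2/L ≤ 4/L := by
      rw [div_le_div_iff₀ hL hL]
      nlinarith
    linarith

lemma Fc_p_eq {K M : ℕ} {r L : ℝ} (hr : 0 < r) (hL0 : 0 < L)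
    {p : Fin M → EuclideanSpace ℝ (Fin (K+1))}
    (hsep : ∀ i j : Fin M, i ≠ j → 4/L ≤ dist (p i) (p j))
    (hp : ∀ j, dist (p j) (-(zc K r)) ≤ r/8) (j : Fin M) :
    Fc K M r L p (p j) = WithLp.toLp 2 (Fin.append (0 : EuclideanSpace ℝ (Fin K)).ofLp
      (fun i : Fin M => (if i = j then 1 else 0) * (Real.sqrt 2)⁻¹)) := by
  have hb : (fun i : Fin M => bet L p i (p j) * (Real.sqrt 2)⁻¹)
      = (fun i : Fin M => (if i = j then 1 else 0) * (Real.sqrt 2)⁻¹) := by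
    funext i
    rw [bet_p hL0 hsep i j]
  rw [Fc, capV_p hr hp j, hb]

lemma Fc_p_norm_sq {K M : ℕ} {r L : ℝ} (hr : 0 < r) (hL0 : 0 < L)
    {p : Fin M → EuclideanSpace ℝ (Fin (K+1))}
    (hsep : ∀ i j : Fin M, i ≠ j → 4/L ≤ dist (p i) (p j))
    (hp : ∀ j, dist (p j) (-(zc K r)) ≤ r/8) (j : Fin M) :
    ‖Fc K M r L p (p j)‖^2 = 1/2 := by
  rw [Fc_p_eq hr hL0 hsep hp j, nsq, Fin.sum_univ_add]
  simp only [Fin.append_left, Fin.append_right]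
  have h1 : ∑ i : Fin K, ((0 : EuclideanSpace ℝ (Fin K)) i)^2 = 0 := by
    refine Finset.sum_eq_zero fun l _ => ?_
    rw [PiLp.zero_apply]
    ring
  have h2 : ∀ i : Fin M, ((if i = j then (1:ℝ) else 0) * (Real.sqrt 2)⁻¹)^2
      = if i = j then 1/2 else 0 := by
    intro i
    by_cases h : i = j
    · rw [if_pos h, if_pos h, one_mul, inv_sqrt2_sq]
    · rw [if_neg h, if_neg h]
      ring
  rw [h1, Finset.sum_congr rfl (fun i _ => h2 i), Finset.sum_ite_eq' Finset.univ j]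
  simp

lemma Gc_p_dist {K M : ℕ} {r L : ℝ} (hr : 0 < r) (hL0 : 0 < L)
    {p : Fin M → EuclideanSpace ℝ (Fin (K+1))}
    (hsep : ∀ i j : Fin M, i ≠ j → 4/L ≤ dist (p i) (p j))
    (hp : ∀ j, dist (p j) (-(zc K r)) ≤ r/8) {i j : Fin M} (hij : i ≠ j) :
    ‖Gc K M r L p (p i) - Gc K M r L p (p j)‖ = 1 := by
  have hsq : ‖Gc K M r L p (p i) - Gc K M r L p (p j)‖^2 = 1 := by
    rw [Gc_sub_sq, Fc_p_norm_sq hr hL0 hsep hp i, Fc_p_norm_sq hr hL0 hsep hp j, sub_self,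
      zero_pow (by norm_num), add_zero]
    rw [Fc_p_eq hr hL0 hsep hp i, Fc_p_eq hr hL0 hsep hp j]
    rw [nsq, Fin.sum_univ_add]
    simp only [PiLp.sub_apply, Fin.append_left, Fin.append_right]
    have h1 : ∑ l : Fin K, ((0 : EuclideanSpace ℝ (Fin K)) l
        - (0 : EuclideanSpace ℝ (Fin K)) l)^2 = 0 :=
      Finset.sum_eq_zero fun l _ => by rw [sub_self]; ring
    have h2 : ∀ i' : Fin M, ((if i' = i then (1:ℝ) else 0) * (Real.sqrt 2)⁻¹
        - (if i' = j then (1:ℝ) else 0) * (Real.sqrt 2)⁻¹)^2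
        = (if i' = i then (1:ℝ)/2 else 0) + (if i' = j then (1:ℝ)/2 else 0) := by
      intro i'
      by_cases h : i' = i <;> by_cases h' : i' = j
      · exact absurd (by rw [← h, h'] : i = j) hij
      · rw [if_pos h, if_pos h, if_neg h', if_neg h']
        rw [show ((1:ℝ) * (Real.sqrt 2)⁻¹ - 0 * (Real.sqrt 2)⁻¹)^2 = ((Real.sqrt 2)⁻¹)^2 by ring,
          inv_sqrt2_sq]
        norm_num
      · rw [if_neg h, if_neg h, if_pos h', if_pos h']
        rw [show ((0:ℝ) * (Real.sqrt 2)⁻¹ - 1 * (Real.sqrt 2)⁻¹)^2 = ((Real.sqrt 2)⁻¹)^2 by ring,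
          inv_sqrt2_sq]
        norm_num
      · rw [if_neg h, if_neg h, if_neg h', if_neg h']
        ring
    rw [h1, Finset.sum_congr rfl (fun i' _ => h2 i'), Finset.sum_add_distrib,
      Finset.sum_ite_eq' Finset.univ i, Finset.sum_ite_eq' Finset.univ j]
    norm_num
  nlinarith [norm_nonneg (Gc K M r L p (p i) - Gc K M r L p (p j))]

lemma Fc_wpt_apply_left {K M : ℕ} {r L : ℝ} (hr : 0 < r) (hL : 1024/r ≤ L)
    {p : Fin M → EuclideanSpace ℝ (Fin (K+1))}
    (hp : ∀ j, dist (p j) (-(zc K r)) ≤ r/8)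
    {u : EuclideanSpace ℝ (Fin K)} (hu : ‖u‖ ≤ (Real.sqrt 2)⁻¹) (l : Fin K) :
    Fc K M r L p (wpt K r u) (Fin.castAdd M l) = u l := by
  rw [Fc_wpt_eq hr hL hp hu]
  exact Fin.append_left u.ofLp (fun _ : Fin M => (0:ℝ)) l

lemma Fc_wpt_apply_right {K M : ℕ} {r L : ℝ} (hr : 0 < r) (hL : 1024/r ≤ L)
    {p : Fin M → EuclideanSpace ℝ (Fin (K+1))}
    (hp : ∀ j, dist (p j) (-(zc K r)) ≤ r/8)
    {u : EuclideanSpace ℝ (Fin K)} (hu : ‖u‖ ≤ (Real.sqrt 2)⁻¹) (j : Fin M) :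
    Fc K M r L p (wpt K r u) (Fin.natAdd K j) = 0 := by
  rw [Fc_wpt_eq hr hL hp hu]
  exact Fin.append_right u.ofLp (fun _ : Fin M => (0:ℝ)) j

lemma Gc_apply_castSucc (K M : ℕ) (r L : ℝ) (p : Fin M → EuclideanSpace ℝ (Fin (K+1)))
    (z) (j : Fin (K+M)) :
    Gc K M r L p z j.castSucc = Fc K M r L p z j := by
  show (Fin.snoc (Fc K M r L p z) _ : Fin ((K+M)+1) → ℝ) j.castSucc = _
  rw [Fin.snoc_castSucc]

lemma Gc_apply_last (K M : ℕ) (r L : ℝ) (p : Fin M → EuclideanSpace ℝ (Fin (K+1))) (z) :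
    Gc K M r L p z (Fin.last (K+M)) = Real.sqrt (1 - ‖Fc K M r L p z‖^2) := by
  show (Fin.snoc (Fc K M r L p z) _ : Fin ((K+M)+1) → ℝ) (Fin.last (K+M)) = _
  rw [Fin.snoc_last]

lemma pattern_sum {K M : ℕ} {r L : ℝ} (hr : 0 < r) (hL : 1024/r ≤ L)
    {p : Fin M → EuclideanSpace ℝ (Fin (K+1))}
    (hp : ∀ j, dist (p j) (-(zc K r)) ≤ r/8)
    {u : EuclideanSpace ℝ (Fin K)} (hu : ‖u‖ ≤ (Real.sqrt 2)⁻¹)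
    (a : Fin ((K+M)+1) → ℝ) :
    ∑ j, a j * Gc K M r L p (wpt K r u) j
      = Real.sqrt (1 - ‖u‖^2)
        * (∑ l : Fin K, a ((Fin.castAdd M l).castSucc)
            * (u l / Real.sqrt (1 - ‖u‖^2)) + a (Fin.last (K+M))) := by
  have hu2 : ‖u‖^2 ≤ 1/2 := by
    calc ‖u‖^2 ≤ ((Real.sqrt 2)⁻¹)^2 := pow_le_pow_left₀ (norm_nonneg _) hu 2
      _ = 1/2 := inv_sqrt2_sq
  have hh : 0 < Real.sqrt (1 - ‖u‖^2) := Real.sqrt_pos.mpr (by linarith)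
  have hFn : ‖Fc K M r L p (wpt K r u)‖ = ‖u‖ := Fc_wpt_norm hr hL hp hu
  rw [Fin.sum_univ_castSucc]
  rw [Gc_apply_last, hFn]
  have hsplit : ∑ j : Fin (K+M), a j.castSucc * Gc K M r L p (wpt K r u) j.castSucc
      = ∑ l : Fin K, a ((Fin.castAdd M l).castSucc) * u l := by
    have e : ∀ j : Fin (K+M), a j.castSucc * Gc K M r L p (wpt K r u) j.castSucc
        = a j.castSucc * Fc K M r L p (wpt K r u) j := by
      intro j
      rw [Gc_apply_castSucc]
    rw [Finset.sum_congr rfl (fun j _ => e j), Fin.sum_univ_add]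
    have e2 : ∀ j : Fin M, a (Fin.natAdd K j).castSucc
        * Fc K M r L p (wpt K r u) (Fin.natAdd K j) = 0 := by
      intro j
      rw [Fc_wpt_apply_right hr hL hp hu j]
      ring
    rw [Finset.sum_congr rfl (fun j _ => e2 j), Finset.sum_const, smul_zero, add_zero]
    exact Finset.sum_congr rfl fun l _ => by rw [Fc_wpt_apply_left hr hL hp hu l]
  rw [hsplit, mul_add, Finset.mul_sum]
  congr 1
  refine Finset.sum_congr rfl fun l _ => ?_
  field_simp
  ring

lemma Fc_wpt_diff_norm {K M : ℕ} {r L : ℝ} (hr : 0 < r) (hL : 1024/r ≤ L)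
    {p : Fin M → EuclideanSpace ℝ (Fin (K+1))}
    (hp : ∀ j, dist (p j) (-(zc K r)) ≤ r/8)
    {u u' : EuclideanSpace ℝ (Fin K)} (hu : ‖u‖ ≤ (Real.sqrt 2)⁻¹)
    (hu' : ‖u'‖ ≤ (Real.sqrt 2)⁻¹) :
    ‖Fc K M r L p (wpt K r u) - Fc K M r L p (wpt K r u')‖ = ‖u - u'‖ := by
  refine norm_eq_of_sq_eq ?_
  rw [nsq, nsq, Fin.sum_univ_add]
  have h1 : ∀ l : Fin K, ((Fc K M r L p (wpt K r u) - Fc K M r L p (wpt K r u'))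
      (Fin.castAdd M l))^2 = ((u - u') l)^2 := by
    intro l
    simp only [PiLp.sub_apply]
    rw [Fc_wpt_apply_left hr hL hp hu l, Fc_wpt_apply_left hr hL hp hu' l]
  have h2 : ∀ j : Fin M, ((Fc K M r L p (wpt K r u) - Fc K M r L p (wpt K r u'))
      (Fin.natAdd K j))^2 = 0 := by
    intro j
    simp only [PiLp.sub_apply]
    rw [Fc_wpt_apply_right hr hL hp hu j, Fc_wpt_apply_right hr hL hp hu' j, sub_self]
    ring
  rw [Finset.sum_congr rfl (fun l _ => h1 l), Finset.sum_congr rfl (fun j _ => h2 j),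
    Finset.sum_const, smul_zero, add_zero]

lemma p_mem_ball {K M : ℕ} {r : ℝ} (hr : 0 < r)
    {p : Fin M → EuclideanSpace ℝ (Fin (K+1))}
    (hp : ∀ j, dist (p j) (-(zc K r)) ≤ r/8) (j : Fin M) :
    p j ∈ Metric.closedBall (0 : EuclideanSpace ℝ (Fin (K+1))) r := by
  rw [Metric.mem_closedBall]
  have h1 : dist (p j) 0 ≤ dist (p j) (-(zc K r)) + dist (-(zc K r)) 0 := dist_triangle _ _ _
  have h2 : dist (-(zc K r)) (0 : EuclideanSpace ℝ (Fin (K+1))) = r/2 := by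
    rw [dist_zero_right, norm_neg, zc_norm K hr]
  have h3 := hp j
  linarith

end

set_option maxHeartbeats 2000000

open MeasureTheory ProbabilityTheory Metric

/-- Theorem 2, algorithm-independent lower bound: there is an
`L`-Lipschitz generative model on `B₂^k(r)` with range in the unit sphere such that
any measurement matrix and decoder achieving uniform error `ε` must use
`m ≥ c (k log(Lr) + k/ε)` measurements. -/
theorem stmt3 :
    ∃ C0 c : ℝ, 0 < C0 ∧ 0 < c ∧
      ∀ (k : ℕ) (r L ε : ℝ),
        0 < r → L ≥ C0 / r → 2 ≤ k →
        ε ∈ Set.Ioo (0 : ℝ) (Real.sqrt 3 / (4 * Real.sqrt 2)) →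
        ∃ (n : ℕ) (G : EuclideanSpace ℝ (Fin k) → EuclideanSpace ℝ (Fin n)),
          (∀ z ∈ Metric.closedBall (0 : EuclideanSpace ℝ (Fin k)) r,
            ∀ z' ∈ Metric.closedBall (0 : EuclideanSpace ℝ (Fin k)) r,
              ‖G z - G z'‖ ≤ L * ‖z - z'‖) ∧
          (∀ z ∈ Metric.closedBall (0 : EuclideanSpace ℝ (Fin k)) r, ‖G z‖ = 1) ∧
          ∀ (m : ℕ) (A : Fin m → Fin n → ℝ)
            (ψ : (Fin m → ℝ) → EuclideanSpace ℝ (Fin n)),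
            (∀ z ∈ Metric.closedBall (0 : EuclideanSpace ℝ (Fin k)) r,
              ‖G z - ψ (Phi A (G z))‖ ≤ ε) →
            (m : ℝ) ≥ c * ((k : ℝ) * Real.log (L * r) + (k : ℝ) / ε) := by
  refine ⟨1024, 1/40, by norm_num, by norm_num, ?_⟩
  intro k r L ε hr hL hk hε
  obtain ⟨K, rfl⟩ : ∃ K, k = K + 1 := ⟨k - 1, by omega⟩
  have hK : 1 ≤ K := by omega
  have hL' : 1024 / r ≤ L := hL
  have hL0 : (0:ℝ) < L := lt_of_lt_of_le (by positivity) hL'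
  have hLr : (1024:ℝ) ≤ L * r := by
    rw [div_le_iff₀ hr] at hL'
    linarith
  have hε0 : 0 < ε := hε.1
  have hεhalf : ε < 1/2 := by
    have h1 : Real.sqrt 3 ≤ 2 * Real.sqrt 2 := by
      nlinarith [Real.sq_sqrt (by norm_num : (0:ℝ) ≤ 3), Real.sq_sqrt (by norm_num : (0:ℝ) ≤ 2),
        Real.sqrt_nonneg 3, Real.sqrt_nonneg 2]
    have h2 : Real.sqrt 3 / (4 * Real.sqrt 2) ≤ 1/2 := by
      rw [div_le_iff₀ (by positivity)]
      nlinarith [sqrt2_pos]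
    linarith [hε.2]
  -- snake packing
  obtain ⟨T₂, hT₂ball, hT₂sep, hT₂card⟩ :=
    packing (K+1) (by omega) (-(zc K r)) (r/8) (4/L) (by positivity) (by positivity)
  set M := T₂.card with hM
  set p : Fin M → EuclideanSpace ℝ (Fin (K+1)) := fun j => (T₂.equivFin.symm j : _) with hp
  have hp_mem : ∀ j, p j ∈ T₂ := fun j => (T₂.equivFin.symm j).2
  have hp_inj : Function.Injective p := by
    intro i j h
    have := Subtype.ext h (p := (· ∈ T₂))
    exact T₂.equivFin.symm.injective this
  have hp_ball : ∀ j, dist (p j) (-(zc K r)) ≤ r/8 := by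
    intro j
    have := hT₂ball (hp_mem j)
    rwa [Metric.mem_closedBall] at this
  have hsep : ∀ i j : Fin M, i ≠ j → 4/L ≤ dist (p i) (p j) := by
    intro i j hij
    exact hT₂sep _ (hp_mem i) _ (hp_mem j) (fun h => hij (hp_inj h))
  refine ⟨(K+M)+1, Gc K M r L p, ?_, ?_, ?_⟩
  · intro z _ z' _
    exact Gc_lip hr hL' hsep hp_ball z z'
  · intro z _
    exact Gc_norm_one hr hL' hsep hp_ball z
  intro m A ψ hψ
  -- recovery consequence
  have key : ∀ z z', z ∈ Metric.closedBall (0 : EuclideanSpace ℝ (Fin (K+1))) r →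
      z' ∈ Metric.closedBall (0 : EuclideanSpace ℝ (Fin (K+1))) r →
      Phi A (Gc K M r L p z) = Phi A (Gc K M r L p z') →
      ‖Gc K M r L p z - Gc K M r L p z'‖ ≤ 2 * ε := by
    intro z z' hz hz' hPhi
    have h1 := hψ z hz
    have h2 := hψ z' hz'
    rw [← hPhi] at h2
    have h3 : Gc K M r L p z - Gc K M r L p z'
        = (Gc K M r L p z - ψ (Phi A (Gc K M r L p z)))
          - (Gc K M r L p z' - ψ (Phi A (Gc K M r L p z))) := by abel
    rw [h3]
    calc ‖_ - _‖ ≤ ‖Gc K M r L p z - ψ (Phi A (Gc K M r L p z))‖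
        + ‖Gc K M r L p z' - ψ (Phi A (Gc K M r L p z))‖ := norm_sub_le _ _
      _ ≤ 2 * ε := by linarith
  ------------------------------------------------------------------
  -- PART 1 : counting bound  m ≥ (K+1)/2 * log (L r)
  ------------------------------------------------------------------
  have hcount : ((K:ℝ)+1)/2 * Real.log (L*r) ≤ m := by
    have inj1 : Function.Injective (fun j : Fin M =>
        (fun i : Fin m => decide ((0:ℝ) ≤ ∑ jj, A i jj * Gc K M r L p (p j) jj))) := by
      intro j1 j2 h
      by_contra hne
      have hPhi : Phi A (Gc K M r L p (p j1)) = Phi A (Gc K M r L p (p j2)) := by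
        funext i
        have hi := congrFun h i
        simp only at hi
        have hiff := decide_eq_decide.mp hi
        show sgn _ = sgn _
        unfold sgn
        by_cases hle : (0:ℝ) ≤ ∑ jj, A i jj * Gc K M r L p (p j1) jj
        · rw [if_pos hle, if_pos (hiff.mp hle)]
        · rw [if_neg hle, if_neg (fun hc => hle (hiff.mpr hc))]
      have hdist := key (p j1) (p j2) (p_mem_ball hr hp_ball j1) (p_mem_ball hr hp_ball j2) hPhi
      rw [Gc_p_dist hr hL0 hsep hp_ball hne] at hdist
      linarith
    have hM2m : M ≤ 2^m := by
      have := Fintype.card_le_of_injective _ inj1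
      rwa [Fintype.card_fin, Fintype.card_fun, Fintype.card_bool, Fintype.card_fin] at this
    have hbase : (r/8)/(4/L) = L*r/32 := by
      field_simp
      ring
    have hcard : (L*r/32)^(K+1) ≤ ((2:ℝ))^m := by
      rw [← hbase]
      calc ((r/8)/(4/L))^(K+1) ≤ (M:ℝ) := hT₂card
        _ ≤ ((2:ℝ))^m := by exact_mod_cast hM2m
    have h32pos : (0:ℝ) < L*r/32 := by positivity
    have hlog := Real.log_le_log (by positivity) hcard
    rw [Real.log_pow, Real.log_pow] at hlog
    have hlog32 : Real.log (L*r/32) = Real.log (L*r) - Real.log 32 :=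
      Real.log_div (by positivity) (by norm_num)
    have h1024log : 2 * Real.log 32 = Real.log 1024 := by
      rw [show (1024:ℝ) = 32^2 by norm_num, Real.log_pow]
      push_cast
      ring
    have hmono : Real.log 1024 ≤ Real.log (L*r) := Real.log_le_log (by norm_num) hLr
    have hhalf : Real.log (L*r) / 2 ≤ Real.log (L*r/32) := by
      rw [hlog32]
      linarith
    have hlog2 : Real.log 2 ≤ 1 := by
      have := Real.log_le_sub_one_of_pos (by norm_num : (0:ℝ) < 2)
      linarith
    have hm0 : (0:ℝ) ≤ m := by positivity
    have hlogpos : 0 < Real.log (L*r) := Real.log_pos (by linarith)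
    calc ((K:ℝ)+1)/2 * Real.log (L*r) = ((K:ℝ)+1) * (Real.log (L*r)/2) := by ring
      _ ≤ ((K:ℝ)+1) * Real.log (L*r/32) := by
          refine mul_le_mul_of_nonneg_left hhalf (by positivity)
      _ = (((K+1):ℕ):ℝ) * Real.log (L*r/32) := by push_cast; ring
      _ ≤ (m:ℝ) * Real.log 2 := hlog
      _ ≤ (m:ℝ) * 1 := mul_le_mul_of_nonneg_left hlog2 hm0
      _ = m := by ring
  have hlogpos : 0 < Real.log (L*r) := Real.log_pos (by linarith)
  have hlog1024 : (6:ℝ) ≤ Real.log (L*r) := by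
    have h1 : Real.exp 6 ≤ 1024 := by
      have h2 : Real.exp 6 = (Real.exp 1)^6 := by
        rw [← Real.exp_nat_mul]
        norm_num
      have h3 := Real.exp_one_lt_d9
      have h4 : (Real.exp 1)^6 ≤ (2.7182818286:ℝ)^6 :=
        pow_le_pow_left₀ (Real.exp_pos 1).le h3.le 6
      have h5 : (2.7182818286:ℝ)^6 ≤ 1024 := by norm_num
      linarith
    rw [Real.le_log_iff_exp_le (by linarith : (0:ℝ) < L*r)]
    linarith
  have hm3K : 3*((K:ℝ)+1) ≤ m := by
    calc 3*((K:ℝ)+1) = ((K:ℝ)+1)/2 * 6 := by ring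
      _ ≤ ((K:ℝ)+1)/2 * Real.log (L*r) := by
          refine mul_le_mul_of_nonneg_left hlog1024 (by positivity)
      _ ≤ m := hcount
  have hKm : K ≤ m := by
    have h1 : (K:ℝ) ≤ m := by push_cast at hm3K ⊢; linarith
    exact_mod_cast h1
  have hm0 : 0 < m := by
    have : (0:ℝ) < m := by linarith [hm3K]
    exact_mod_cast this
  ------------------------------------------------------------------
  -- PART 2 : Sauer bound  m ≥ K/(10 ε)
  ------------------------------------------------------------------
  have hsauer : (K:ℝ)/(10*ε) ≤ m := by
    obtain ⟨T₁, hT₁ball, hT₁sep, hT₁card⟩ :=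
      packing K hK 0 ((Real.sqrt 2)⁻¹) ((5/2)*ε) (by positivity) (by positivity)
    have hT₁norm : ∀ u ∈ T₁, ‖u‖ ≤ (Real.sqrt 2)⁻¹ := by
      intro u hu
      have := hT₁ball hu
      rwa [Metric.mem_closedBall, dist_zero_right] at this
    set a : Fin m → Fin K → ℝ := fun i l => A i ((Fin.castAdd M l).castSucc) with ha
    set c : Fin m → ℝ := fun i => A i (Fin.last (K+M)) with hc
    set y : EuclideanSpace ℝ (Fin K) → (Fin K → ℝ) :=
      fun u => fun l => u l / Real.sqrt (1 - ‖u‖^2) with hy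
    set Θ : EuclideanSpace ℝ (Fin K) → (Fin m → Bool) := fun u => patF a c (y u) with hΘ
    -- bridge : the sign pattern of a cap point is determined by Θ
    have bridge : ∀ u : EuclideanSpace ℝ (Fin K), ‖u‖ ≤ (Real.sqrt 2)⁻¹ → ∀ i,
        Phi A (Gc K M r L p (wpt K r u)) i = if Θ u i = true then 1 else -1 := by
      intro u hu i
      have hu2 : ‖u‖^2 ≤ 1/2 := by
        calc ‖u‖^2 ≤ ((Real.sqrt 2)⁻¹)^2 := pow_le_pow_left₀ (norm_nonneg _) hu 2
          _ = 1/2 := inv_sqrt2_sq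
      have hh : 0 < Real.sqrt (1 - ‖u‖^2) := Real.sqrt_pos.mpr (by linarith)
      show sgn _ = _
      rw [pattern_sum hr hL' hp_ball hu (A i)]
      have hSfun : (∑ l : Fin K, A i ((Fin.castAdd M l).castSucc)
          * (u l / Real.sqrt (1 - ‖u‖^2)) + A i (Fin.last (K+M))) = Sfun a c (y u) i := rfl
      rw [hSfun]
      unfold sgn
      have hiff : (0 ≤ Real.sqrt (1 - ‖u‖^2) * Sfun a c (y u) i) ↔ (0 ≤ Sfun a c (y u) i) := by
        constructor
        · intro h
          nlinarith
        · intro h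
          positivity
      have hΘi : Θ u i = decide (0 ≤ Sfun a c (y u) i) := rfl
      by_cases hle : 0 ≤ Sfun a c (y u) i
      · rw [if_pos (hiff.mpr hle), if_pos (by rw [hΘi, decide_eq_true_eq]; exact hle)]
      · rw [if_neg (fun hc' => hle (hiff.mp hc')), if_neg (by rw [hΘi, decide_eq_true_eq]; exact hle)]
    -- injectivity of Θ on the packing
    have hinjOn : Set.InjOn Θ (T₁ : Set (EuclideanSpace ℝ (Fin K))) := by
      intro u hu u' hu' hΘeq
      by_contra hne
      have hnu := hT₁norm u hu
      have hnu' := hT₁norm u' hu'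
      have hPhi : Phi A (Gc K M r L p (wpt K r u)) = Phi A (Gc K M r L p (wpt K r u')) := by
        funext i
        rw [bridge u hnu i, bridge u' hnu' i, hΘeq]
      have hdist := key (wpt K r u) (wpt K r u') (wpt_mem_ball K hr hnu)
        (wpt_mem_ball K hr hnu') hPhi
      have hge : (5/2)*ε ≤ ‖Gc K M r L p (wpt K r u) - Gc K M r L p (wpt K r u')‖ := by
        have h1 := hT₁sep u hu u' hu' hne
        rw [dist_eq_norm] at h1
        calc (5/2)*ε ≤ ‖u - u'‖ := h1
          _ = ‖Fc K M r L p (wpt K r u) - Fc K M r L p (wpt K r u')‖ :=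
              (Fc_wpt_diff_norm hr hL' hp_ball hnu hnu').symm
          _ ≤ _ := Gc_dist_ge K M r L p _ _
      linarith
    -- cardinality chain
    have hfin : (patSet m K a c).Finite := Set.toFinite _
    have hsub : ∀ u ∈ T₁, Θ u ∈ hfin.toFinset := by
      intro u _
      rw [Set.Finite.mem_toFinset]
      exact ⟨y u, rfl⟩
    have hcard1 : T₁.card ≤ hfin.toFinset.card :=
      Finset.card_le_card_of_injOn Θ hsub hinjOn
    have hcard2 : hfin.toFinset.card = (patSet m K a c).ncard :=
      (Set.ncard_eq_toFinset_card _ hfin).symm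
    have hcard3 : (patSet m K a c).ncard ≤ ∑ i ∈ Finset.range (K+1), m.choose i := sauer m K a c
    have hbinom : ((∑ i ∈ Finset.range (K+1), m.choose i : ℕ) : ℝ)
        ≤ (Real.exp 1 * m / K)^K := by
      have := binom_bound m K hK hKm
      push_cast at this ⊢
      exact this
    have hchain : (((Real.sqrt 2)⁻¹)/((5/2)*ε))^K ≤ (Real.exp 1 * m / K)^K := by
      calc (((Real.sqrt 2)⁻¹)/((5/2)*ε))^K ≤ (T₁.card : ℝ) := hT₁card
        _ ≤ ((∑ i ∈ Finset.range (K+1), m.choose i : ℕ) : ℝ) := by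
            exact_mod_cast le_trans hcard1 (hcard2 ▸ hcard3)
        _ ≤ (Real.exp 1 * m / K)^K := hbinom
    have hbase : ((Real.sqrt 2)⁻¹)/((5/2)*ε) ≤ Real.exp 1 * m / K := by
      have h1 : (0:ℝ) ≤ ((Real.sqrt 2)⁻¹)/((5/2)*ε) := by positivity
      have h2 : (0:ℝ) ≤ Real.exp 1 * m / K := by positivity
      exact le_of_pow_le_pow_left₀ (by omega) h2 hchain
    -- numerics
    have hsqrt2_le : Real.sqrt 2 ≤ 1.42 := by
      nlinarith [Real.sq_sqrt (by norm_num : (0:ℝ) ≤ 2), Real.sqrt_nonneg 2]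
    have hexp := Real.exp_one_lt_d9
    have hK0 : (0:ℝ) < K := by exact_mod_cast hK
    have h3 : (K:ℝ) * ((Real.sqrt 2)⁻¹) ≤ (5/2)*ε*(Real.exp 1 * m) := by
      rw [div_le_div_iff₀ (by positivity) hK0] at hbase
      linarith
    have h4 : (K:ℝ) ≤ Real.sqrt 2 * ((5/2)*ε*(Real.exp 1 * m)) := by
      have h5 : (K:ℝ) = (K * ((Real.sqrt 2)⁻¹)) * Real.sqrt 2 := by
        field_simp
      rw [h5]
      calc (K * ((Real.sqrt 2)⁻¹)) * Real.sqrt 2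
          ≤ ((5/2)*ε*(Real.exp 1 * m)) * Real.sqrt 2 :=
            mul_le_mul_of_nonneg_right h3 sqrt2_pos.le
        _ = _ := by ring
    have h6 : Real.sqrt 2 * ((5/2)*ε*(Real.exp 1 * m)) ≤ 10*ε*m := by
      have hse : Real.sqrt 2 * Real.exp 1 ≤ 1.42 * 2.7182818286 := by
        refine mul_le_mul hsqrt2_le hexp.le (Real.exp_pos 1).le (by norm_num)
      have hεm : (0:ℝ) ≤ ε * m := by positivity
      nlinarith [hεm]
    rw [div_le_iff₀ (by positivity : (0:ℝ) < 10*ε)]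
    nlinarith [h4, h6]
  ------------------------------------------------------------------
  -- conclusion
  ------------------------------------------------------------------
  have hKhalf : ((K:ℝ)+1)/2 ≤ K := by
    have : (1:ℝ) ≤ K := by exact_mod_cast hK
    linarith
  have hb2 : ((K:ℝ)+1)/(20*ε) ≤ m := by
    calc ((K:ℝ)+1)/(20*ε) = (((K:ℝ)+1)/2)/(10*ε) := by ring
      _ ≤ (K:ℝ)/(10*ε) := by
          refine div_le_div_of_nonneg_right ?_ (by positivity)
          · exact hKhalf
      _ ≤ m := hsauer
  have hgoal : (1/40) * (((K:ℝ)+1) * Real.log (L*r) + ((K:ℝ)+1)/ε) ≤ m := by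
    have hA : ((K:ℝ)+1) * Real.log (L*r) ≥ 0 := by positivity
    have e1 : (1/40) * (((K:ℝ)+1) * Real.log (L*r) + ((K:ℝ)+1)/ε)
        = (1/20) * (((K:ℝ)+1)/2 * Real.log (L*r)) + (1/2) * (((K:ℝ)+1)/(20*ε)) := by
      field_simp
      ring
    rw [e1]
    nlinarith [hcount, hb2]
  rw [ge_iff_le]
  push_cast
  push_cast at hgoal
  linarith
end
end

section
/- There exists an absolute constant c > 0 such that the following holds. Let k ≥ 2 and let n be an integer multiple of k with n/k ≥ 2. Then there exists a finite subset C of {x ∈ S^{n-1} : x is k-group-sparse and x_n = 1/2} such that log|C| ≥ c·k·log(n/k) and ‖x − s‖₂² ≥ 3/8 for all distinct x, s ∈ C. -/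
open MeasureTheory ProbabilityTheory

/-- A vector `x ∈ ℝ^{k·t}` is `k`-group-sparse if, dividing its coordinates into `k`
consecutive blocks of size `t`, each block contains at most one nonzero entry. -/
def GroupSparse (k t : ℕ) (x : Fin (k * t) → ℝ) : Prop :=
  ∀ i i' : Fin (k * t), (i : ℕ) / t = (i' : ℕ) / t → x i ≠ 0 → x i' ≠ 0 → i = i'

open Finset

variable {m t : ℕ}

/-- Hamming distance on codewords. -/
def hdist {m t : ℕ} (f g : Fin m → Fin t × Bool) : ℕ :=
  (Finset.univ.filter fun b => f b ≠ g b).card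

lemma hdist_comm (f g : Fin m → Fin t × Bool) : hdist f g = hdist g f := by
  unfold hdist; congr 1; ext b; simp [ne_comm]

lemma hdist_self (f : Fin m → Fin t × Bool) : hdist f f = 0 := by
  simp [hdist]

/-- Hamming ball cardinality bound. -/
lemma ball_card (ht : 1 ≤ t) (c : Fin m → Fin t × Bool) (r : ℕ) :
    ((Finset.univ.filter fun f => hdist f c ≤ r)).card ≤ 2 ^ m * (2 * t) ^ r := by
  classical
  have step2 : ∀ D : Finset (Fin m), D.card ≤ r →
      (Finset.univ.filter fun f : Fin m → Fin t × Bool => ∀ j ∉ D, f j = c j).card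
        ≤ (2 * t) ^ r := by
    intro D hD
    have h1 : (Finset.univ.filter fun f : Fin m → Fin t × Bool => ∀ j ∉ D, f j = c j).card
        ≤ Fintype.card ({ j // j ∈ D } → Fin t × Bool) := by
      rw [← Finset.card_univ]
      refine Finset.card_le_card_of_injOn
        (fun f => fun j : { j // j ∈ D } => f j.1) (fun _ _ => mem_univ _) ?_
      intro f hf g hg hfg
      simp only [coe_filter, Set.mem_setOf_eq, mem_univ, true_and] at hf hg
      funext j
      by_cases hj : j ∈ D
      · exact congrFun hfg ⟨j, hj⟩
      · rw [hf j hj, hg j hj]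
    have h2 : Fintype.card ({ j // j ∈ D } → Fin t × Bool) = (2 * t) ^ D.card := by
      rw [Fintype.card_fun, Fintype.card_prod]
      simp [Fintype.card_coe, mul_comm]
    have h3 : (2 * t) ^ D.card ≤ (2 * t) ^ r :=
      Nat.pow_le_pow_right (Nat.mul_pos Nat.zero_lt_two ht) hD
    exact (h1.trans h2.le).trans h3
  have hpow : ((Finset.univ : Finset (Finset (Fin m)))).card = 2 ^ m := by simp
  have hsub : (Finset.univ.filter fun f => hdist f c ≤ r) ⊆
      ((Finset.univ : Finset (Finset (Fin m))).filter fun D => D.card ≤ r).biUnion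
        (fun D => Finset.univ.filter fun f => ∀ j ∉ D, f j = c j) := by
    intro f hf
    simp only [mem_filter, mem_univ, true_and] at hf
    refine mem_biUnion.2 ⟨Finset.univ.filter fun b => f b ≠ c b, ?_, ?_⟩
    · simp only [mem_filter, mem_univ, true_and]; exact hf
    · simp only [mem_filter, mem_univ, true_and]
      intro j hj
      by_contra hne
      exact hj (by simp [hne])
  calc ((Finset.univ.filter fun f => hdist f c ≤ r)).card
      ≤ _ := Finset.card_le_card hsub
    _ ≤ ∑ D ∈ ((Finset.univ : Finset (Finset (Fin m))).filter fun D => D.card ≤ r),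
          (Finset.univ.filter fun f : Fin m → Fin t × Bool => ∀ j ∉ D, f j = c j).card :=
        Finset.card_biUnion_le
    _ ≤ ∑ _D ∈ ((Finset.univ : Finset (Finset (Fin m))).filter fun D => D.card ≤ r),
          (2 * t) ^ r :=
        Finset.sum_le_sum fun D hD => step2 D (Finset.mem_filter.1 hD).2
    _ ≤ 2 ^ m * (2 * t) ^ r := by
        rw [Finset.sum_const, smul_eq_mul]
        exact Nat.mul_le_mul_right _ (le_trans (Finset.card_filter_le _ _) hpow.le)

/-- Gilbert–Varshamov: a code with min distance `d` and covering-based size bound. -/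
lemma exists_code (m t d : ℕ) (ht : 1 ≤ t) (hd1 : 1 ≤ d) :
    ∃ C : Finset (Fin m → Fin t × Bool),
      (∀ f ∈ C, ∀ g ∈ C, f ≠ g → d ≤ hdist f g) ∧
      (2 * t) ^ m ≤ C.card * (2 ^ m * (2 * t) ^ (d - 1)) := by
  classical
  set P : Finset (Fin m → Fin t × Bool) → Prop :=
    fun C => ∀ f ∈ C, ∀ g ∈ C, f ≠ g → d ≤ hdist f g with hP
  have hS : ((Finset.univ : Finset (Finset (Fin m → Fin t × Bool))).filter P).Nonempty := by
    refine ⟨∅, Finset.mem_filter.2 ⟨mem_univ _, ?_⟩⟩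
    intro f hf; simp at hf
  obtain ⟨C, hC, hmax⟩ := Finset.exists_max_image _ Finset.card hS
  have hCP : P C := (Finset.mem_filter.1 hC).2
  refine ⟨C, hCP, ?_⟩
  have hcov : ∀ f : Fin m → Fin t × Bool, ∃ c ∈ C, hdist f c ≤ d - 1 := by
    intro f
    by_contra h
    push_neg at h
    have hfC : f ∉ C := by
      intro hf
      have := h f hf
      rw [hdist_self] at this
      omega
    have hins : P (insert f C) := by
      intro a ha b hb hab
      rw [Finset.mem_insert] at ha hb
      rcases ha with ha | ha
      · rcases hb with hb | hb
        · exact absurd (ha.trans hb.symm) hab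
        · subst ha; have := h b hb; omega
      · rcases hb with hb | hb
        · subst hb; have := h a ha; rw [hdist_comm]; omega
        · exact hCP a ha b hb hab
    have := hmax (insert f C) (Finset.mem_filter.2 ⟨mem_univ _, hins⟩)
    rw [Finset.card_insert_of_notMem hfC] at this
    omega
  have hcover : (Finset.univ : Finset (Fin m → Fin t × Bool)) ⊆
      C.biUnion (fun c => Finset.univ.filter fun f => hdist f c ≤ d - 1) := by
    intro f _
    obtain ⟨c, hc, hfc⟩ := hcov f
    exact mem_biUnion.2 ⟨c, hc, by simp [hfc]⟩
  calc (2 * t) ^ m = Fintype.card (Fin m → Fin t × Bool) := by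
        rw [Fintype.card_fun, Fintype.card_prod]
        simp [mul_comm]
    _ = (Finset.univ : Finset (Fin m → Fin t × Bool)).card := by simp
    _ ≤ (C.biUnion (fun c => Finset.univ.filter fun f => hdist f c ≤ d - 1)).card :=
        Finset.card_le_card hcover
    _ ≤ ∑ c ∈ C, (Finset.univ.filter fun f => hdist f c ≤ d - 1).card :=
        Finset.card_biUnion_le
    _ ≤ ∑ c ∈ C, 2 ^ m * (2 * t) ^ (d - 1) :=
        Finset.sum_le_sum fun c _ => ball_card ht c (d - 1)
    _ = C.card * (2 ^ m * (2 * t) ^ (d - 1)) := by rw [Finset.sum_const, smul_eq_mul]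


noncomputable def aV (m : ℕ) : ℝ := Real.sqrt (3 / (4 * m))

/-- value of the constructed vector at block `b`, offset `j`. -/
noncomputable def wv (k t m : ℕ) (a : ℝ) (f : Fin m → Fin t × Bool) (b j : ℕ) : ℝ :=
  if h : b < m then
    (if j = ((f ⟨b, h⟩).1 : ℕ) then (if (f ⟨b, h⟩).2 then a else -a) else 0)
  else (if b = k - 1 ∧ j = t - 1 then 1/2 else 0)

noncomputable def vec (k t : ℕ) (f : Fin (k-1) → Fin t × Bool) :
    EuclideanSpace ℝ (Fin (k*t)) :=
  WithLp.toLp 2 (fun i => wv k t (k-1) (aV (k-1)) f ((i : ℕ) / t) ((i : ℕ) % t))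

def blockEquiv (k t : ℕ) (ht : 0 < t) : Fin k × Fin t ≃ Fin (k * t) where
  toFun p := ⟨p.1 * t + p.2, by
    calc (p.1 : ℕ) * t + p.2 < p.1 * t + t := by omega
      _ = (p.1 + 1) * t := by ring
      _ ≤ k * t := Nat.mul_le_mul_right t p.1.2⟩
  invFun i := (⟨(i : ℕ) / t, by
      exact (Nat.div_lt_iff_lt_mul ht).2 i.2⟩,
    ⟨(i : ℕ) % t, Nat.mod_lt _ ht⟩)
  left_inv p := by
    ext
    · show ((p.1 : ℕ) * t + p.2) / t = p.1
      rw [add_comm, Nat.add_mul_div_right _ _ ht, Nat.div_eq_of_lt p.2.2, Nat.zero_add]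
    · show ((p.1 : ℕ) * t + p.2) % t = p.2
      rw [add_comm, Nat.add_mul_mod_self_right, Nat.mod_eq_of_lt p.2.2]
  right_inv i := by
    ext
    show ((i : ℕ) / t) * t + (i : ℕ) % t = i
    rw [mul_comm]
    exact Nat.div_add_mod _ _

lemma sum_blocks (k t : ℕ) (ht : 0 < t) (g : ℕ → ℕ → ℝ) :
    ∑ i : Fin (k*t), g ((i : ℕ) / t) ((i : ℕ) % t) = ∑ b : Fin k, ∑ j : Fin t, g b j := by
  rw [← Fintype.sum_prod_type']
  rw [← Equiv.sum_comp (blockEquiv k t ht) (fun i : Fin (k*t) => g ((i : ℕ)/t) ((i : ℕ)%t))]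
  apply Finset.sum_congr rfl
  intro p _
  have h1 : (((blockEquiv k t ht) p : Fin (k*t)) : ℕ) = p.1 * t + p.2 := rfl
  rw [h1, add_comm, Nat.add_mul_div_right _ _ ht, Nat.div_eq_of_lt p.2.2, Nat.zero_add,
    Nat.add_mul_mod_self_right, Nat.mod_eq_of_lt p.2.2]

lemma normsq {n : ℕ} (x : EuclideanSpace ℝ (Fin n)) : ‖x‖^2 = ∑ i, (x i)^2 := by
  rw [EuclideanSpace.norm_eq, Real.sq_sqrt (by positivity)]
  exact Finset.sum_congr rfl fun i _ => by rw [Real.norm_eq_abs, sq_abs]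

lemma wv_lt {k t m : ℕ} (a : ℝ) (f : Fin m → Fin t × Bool) (b : Fin m) (j : ℕ) :
    wv k t m a f (b : ℕ) j =
      if j = ((f b).1 : ℕ) then (if (f b).2 then a else -a) else 0 := by
  simp [wv, b.isLt]

lemma last_divmod (k t : ℕ) (hk : 1 ≤ k) (ht : 1 ≤ t) :
    (k*t-1)/t = k-1 ∧ (k*t-1) % t = t-1 := by
  obtain ⟨K, rfl⟩ : ∃ K, k = K+1 := ⟨k-1, by omega⟩
  have hs : (K+1) * t = K*t + t := Nat.succ_mul K t
  have h : (K+1)*t - 1 = (t-1) + K*t := by omega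
  rw [h, Nat.add_mul_div_right _ _ (by omega), Nat.add_mul_mod_self_right]
  constructor
  · rw [Nat.div_eq_of_lt (by omega)]; omega
  · exact Nat.mod_eq_of_lt (by omega)

lemma aV_sq (m : ℕ) (hm : 1 ≤ m) : (aV m)^2 = 3 / (4*m) := by
  rw [aV, Real.sq_sqrt (by positivity)]

lemma vec_norm_one (k t : ℕ) (hk : 2 ≤ k) (ht : 2 ≤ t) (f : Fin (k-1) → Fin t × Bool) :
    ‖vec k t f‖ = 1 := by
  have hsum : ∑ i, (vec k t f i)^2 = 1 := by
    show ∑ i : Fin (k*t), (wv k t (k-1) (aV (k-1)) f ((i : ℕ)/t) ((i : ℕ)%t))^2 = 1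
    refine (sum_blocks k t (by omega) (fun b j => (wv k t (k-1) (aV (k-1)) f b j)^2)).trans ?_
    have hblock : ∀ b : Fin k, (∑ j : Fin t, (wv k t (k-1) (aV (k-1)) f (b : ℕ) (j : ℕ))^2)
        = if h : (b : ℕ) < k-1 then (aV (k-1))^2 else (1/2 : ℝ)^2 := by
      intro b
      by_cases h : (b : ℕ) < k-1
      · rw [dif_pos h]
        have hv : ∀ j : Fin t, (wv k t (k-1) (aV (k-1)) f (b : ℕ) (j : ℕ))^2
            = if j = (f ⟨(b : ℕ), h⟩).1 then (aV (k-1))^2 else 0 := by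
          intro j
          have := wv_lt (k := k) (aV (k-1)) f ⟨(b : ℕ), h⟩ (j : ℕ)
          simp only at this
          rw [this]
          by_cases hj : j = (f ⟨(b : ℕ), h⟩).1
          · rw [if_pos (by rw [hj]), if_pos hj]
            split_ifs <;> ring
          · rw [if_neg (fun hc => hj (Fin.val_injective hc)), if_neg hj]
            ring
        rw [Finset.sum_congr rfl fun j _ => hv j, Finset.sum_ite_eq' Finset.univ]
        simp
      · rw [dif_neg h]
        have hb : (b : ℕ) = k - 1 := by have := b.isLt; omega
        have hv : ∀ j : Fin t, (wv k t (k-1) (aV (k-1)) f (b : ℕ) (j : ℕ))^2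
            = if j = (⟨t-1, by omega⟩ : Fin t) then (1/2 : ℝ)^2 else 0 := by
          intro j
          rw [wv, dif_neg h]
          by_cases hj : j = (⟨t-1, by omega⟩ : Fin t)
          · rw [if_pos ⟨hb, by simp [hj]⟩, if_pos hj]
          · have hcond : ¬((b : ℕ) = k-1 ∧ (j : ℕ) = t-1) := by
              rintro ⟨-, hj2⟩
              exact hj (Fin.val_injective (by simpa using hj2))
            rw [if_neg hcond, if_neg hj]
            ring
        rw [Finset.sum_congr rfl fun j _ => hv j, Finset.sum_ite_eq' Finset.univ]
        simp
    rw [Finset.sum_congr rfl fun b _ => hblock b]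
    have hsplit : ∀ b : Fin k, (if h : (b : ℕ) < k-1 then (aV (k-1))^2 else (1/2 : ℝ)^2)
        = (aV (k-1))^2 + (if b = (⟨k-1, by omega⟩ : Fin k) then (1/2 : ℝ)^2 - (aV (k-1))^2 else 0) := by
      intro b
      by_cases h : (b : ℕ) < k-1
      · rw [dif_pos h, if_neg, add_zero]
        intro hc
        rw [hc] at h
        simp at h
      · have hb : (b : ℕ) = k - 1 := by have := b.isLt; omega
        rw [dif_neg h, if_pos (Fin.val_injective (by simpa using hb))]
        ring
    rw [Finset.sum_congr rfl fun b _ => hsplit b, Finset.sum_add_distrib,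
      Finset.sum_const, Finset.sum_ite_eq' Finset.univ]
    simp only [Finset.mem_univ, if_true, Finset.card_univ, Fintype.card_fin, nsmul_eq_mul]
    rw [aV_sq (k-1) (by omega)]
    have hcast : ((k - 1 : ℕ) : ℝ) = (k : ℝ) - 1 := by
      push_cast [Nat.cast_sub (by omega : 1 ≤ k)]; ring
    have hne2 : (k : ℝ) - 1 ≠ 0 := by
      have h2 : (2 : ℝ) ≤ (k : ℝ) := by exact_mod_cast hk
      intro hc; linarith
    rw [hcast]
    field_simp
    ring
  have h0 : ‖vec k t f‖^2 = 1 := by rw [normsq]; exact hsum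
  have hnn := norm_nonneg (vec k t f)
  calc ‖vec k t f‖ = Real.sqrt (‖vec k t f‖^2) := (Real.sqrt_sq hnn).symm
    _ = Real.sqrt 1 := by rw [h0]
    _ = 1 := Real.sqrt_one

lemma vec_last (k t : ℕ) (hk : 2 ≤ k) (ht : 2 ≤ t) (f : Fin (k-1) → Fin t × Bool)
    (hi : k*t-1 < k*t) :
    vec k t f ⟨k*t-1, hi⟩ = 1/2 := by
  obtain ⟨h1, h2⟩ := last_divmod k t (by omega) (by omega)
  show wv k t (k-1) (aV (k-1)) f ((k*t-1)/t) ((k*t-1) % t) = 1/2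
  rw [h1, h2, wv, dif_neg (by omega), if_pos ⟨rfl, rfl⟩]

lemma vec_gs (k t : ℕ) (hk : 2 ≤ k) (ht : 2 ≤ t) (f : Fin (k-1) → Fin t × Bool) :
    ∀ i i' : Fin (k * t), (i : ℕ) / t = (i' : ℕ) / t →
      vec k t f i ≠ 0 → vec k t f i' ≠ 0 → i = i' := by
  intro i i' hdv hne hne'
  have hne : wv k t (k-1) (aV (k-1)) f ((i : ℕ)/t) ((i : ℕ) % t) ≠ 0 := hne
  have hne' : wv k t (k-1) (aV (k-1)) f ((i' : ℕ)/t) ((i' : ℕ) % t) ≠ 0 := hne'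
  rw [← hdv] at hne'
  rw [wv] at hne hne'
  by_cases h : (i : ℕ)/t < k-1
  · rw [dif_pos h] at hne hne'
    have hmod : (i : ℕ) % t = ((f ⟨(i : ℕ)/t, h⟩).1 : ℕ) := by
      by_contra hc
      exact hne (if_neg hc)
    have hmod' : (i' : ℕ) % t = ((f ⟨(i : ℕ)/t, h⟩).1 : ℕ) := by
      by_contra hc
      exact hne' (if_neg hc)
    apply Fin.val_injective
    calc (i : ℕ) = t*((i : ℕ)/t) + (i : ℕ)%t := (Nat.div_add_mod _ _).symm
      _ = t*((i' : ℕ)/t) + (i' : ℕ)%t := by rw [hdv, hmod, hmod']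
      _ = (i' : ℕ) := Nat.div_add_mod _ _
  · rw [dif_neg h] at hne hne'
    have hmod : (i : ℕ) % t = t - 1 := by
      by_contra hc
      exact hne (if_neg (fun hand => hc hand.2))
    have hmod' : (i' : ℕ) % t = t - 1 := by
      by_contra hc
      exact hne' (if_neg (fun hand => hc hand.2))
    apply Fin.val_injective
    calc (i : ℕ) = t*((i : ℕ)/t) + (i : ℕ)%t := (Nat.div_add_mod _ _).symm
      _ = t*((i' : ℕ)/t) + (i' : ℕ)%t := by rw [hdv, hmod, hmod']
      _ = (i' : ℕ) := Nat.div_add_mod _ _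

lemma block_ge (k t : ℕ) (a : ℝ) (ha : 0 ≤ a) (f g : Fin (k-1) → Fin t × Bool)
    (b : Fin (k-1)) (hb : f b ≠ g b) :
    2*a^2 ≤ ∑ j : Fin t, (wv k t (k-1) a f (b : ℕ) (j : ℕ) - wv k t (k-1) a g (b : ℕ) (j : ℕ))^2 := by
  by_cases hpq : (f b).1 = (g b).1
  · have hsu : (f b).2 ≠ (g b).2 := by
      intro hc
      exact hb (Prod.ext hpq hc)
    have hterm : (wv k t (k-1) a f (b : ℕ) ((f b).1 : ℕ) - wv k t (k-1) a g (b : ℕ) ((f b).1 : ℕ))^2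
        = 4*a^2 := by
      have hq' : (((f b).1 : ℕ) = ((g b).1 : ℕ)) := by rw [hpq]
      rw [wv_lt, wv_lt, if_pos rfl, if_pos hq']
      cases hf2 : (f b).2 <;> cases hg2 : (g b).2
      · exact absurd (hf2.trans hg2.symm) hsu
      · norm_num; ring
      · norm_num; ring
      · exact absurd (hf2.trans hg2.symm) hsu
    have hle : (wv k t (k-1) a f (b : ℕ) (((f b).1 : Fin t) : ℕ) - wv k t (k-1) a g (b : ℕ) (((f b).1 : Fin t) : ℕ))^2
        ≤ ∑ j : Fin t, (wv k t (k-1) a f (b : ℕ) (j : ℕ) - wv k t (k-1) a g (b : ℕ) (j : ℕ))^2 :=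
      Finset.single_le_sum (f := fun j : Fin t =>
        (wv k t (k-1) a f (b : ℕ) (j : ℕ) - wv k t (k-1) a g (b : ℕ) (j : ℕ))^2)
        (fun j _ => sq_nonneg _) (Finset.mem_univ ((f b).1))
    rw [hterm] at hle
    nlinarith [sq_nonneg a]
  · have hle : ∑ j ∈ ({(f b).1, (g b).1} : Finset (Fin t)),
          (wv k t (k-1) a f (b : ℕ) (j : ℕ) - wv k t (k-1) a g (b : ℕ) (j : ℕ))^2
        ≤ ∑ j : Fin t, (wv k t (k-1) a f (b : ℕ) (j : ℕ) - wv k t (k-1) a g (b : ℕ) (j : ℕ))^2 :=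
      Finset.sum_le_sum_of_subset_of_nonneg (Finset.subset_univ _) (fun j _ _ => sq_nonneg _)
    rw [Finset.sum_pair hpq] at hle
    have hvalne : (((f b).1 : ℕ)) ≠ (((g b).1 : ℕ)) := fun hc => hpq (Fin.val_injective hc)
    have ht1 : (wv k t (k-1) a f (b : ℕ) (((f b).1 : Fin t) : ℕ) - wv k t (k-1) a g (b : ℕ) (((f b).1 : Fin t) : ℕ))^2 = a^2 := by
      rw [wv_lt, wv_lt, if_pos rfl, if_neg hvalne]
      split_ifs <;> ring
    have ht2 : (wv k t (k-1) a f (b : ℕ) (((g b).1 : Fin t) : ℕ) - wv k t (k-1) a g (b : ℕ) (((g b).1 : Fin t) : ℕ))^2 = a^2 := by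
      rw [wv_lt, wv_lt, if_neg (Ne.symm hvalne), if_pos rfl]
      split_ifs <;> ring
    rw [ht1, ht2] at hle
    nlinarith

lemma dist_ge (k t : ℕ) (hk : 2 ≤ k) (ht : 2 ≤ t) (f g : Fin (k-1) → Fin t × Bool)
    (hfg : (k-1+3)/4 ≤ hdist f g) :
    3/8 ≤ ‖vec k t f - vec k t g‖^2 := by
  classical
  have ha := aV_sq (k-1) (by omega)
  have ha0 : (0:ℝ) ≤ aV (k-1) := Real.sqrt_nonneg _
  set a := aV (k-1) with haa
  set B : Fin k → ℝ := fun b =>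
    ∑ j : Fin t, (wv k t (k-1) a f (b : ℕ) (j : ℕ) - wv k t (k-1) a g (b : ℕ) (j : ℕ))^2 with hB
  have hexp : ‖vec k t f - vec k t g‖^2 = ∑ b : Fin k, B b := by
    rw [normsq]
    refine Eq.trans ?_ (sum_blocks k t (by omega)
      (fun b j => (wv k t (k-1) a f b j - wv k t (k-1) a g b j)^2))
    exact Finset.sum_congr rfl fun i _ => by
      rw [show (vec k t f - vec k t g) i
        = wv k t (k-1) a f ((i : ℕ)/t) ((i : ℕ)%t) - wv k t (k-1) a g ((i : ℕ)/t) ((i : ℕ)%t) from rfl]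
  set D : Finset (Fin (k-1)) := Finset.univ.filter fun b => f b ≠ g b with hDdef
  have hcard : D.card = hdist f g := rfl
  have hemb : ∀ b : Fin (k-1), ((Fin.castLEEmb (show k-1 ≤ k by omega) b : Fin k) : ℕ) = (b : ℕ) := by
    intro b; simp
  have h1 : ∑ b ∈ D.map (Fin.castLEEmb (show k-1 ≤ k by omega)), B b ≤ ∑ b : Fin k, B b :=
    Finset.sum_le_sum_of_subset_of_nonneg (Finset.subset_univ _)
      (fun b _ _ => Finset.sum_nonneg fun j _ => sq_nonneg _)
  have h2 : (D.card : ℝ) * (2*a^2) ≤ ∑ b ∈ D.map (Fin.castLEEmb (show k-1 ≤ k by omega)), B b := by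
    rw [Finset.sum_map]
    have := Finset.card_nsmul_le_sum D
      (fun b => B (Fin.castLEEmb (show k-1 ≤ k by omega) b)) (2*a^2) ?_
    · calc (D.card : ℝ) * (2*a^2) = D.card • (2*a^2) := by rw [nsmul_eq_mul]
        _ ≤ _ := this
    · intro b hb
      have hbne : f b ≠ g b := (Finset.mem_filter.1 hb).2
      have hbg := block_ge k t a ha0 f g b hbne
      exact hbg
  have hm1 : (1:ℝ) ≤ ((k-1 : ℕ) : ℝ) := by
    have : (1:ℕ) ≤ k - 1 := by omega
    exact_mod_cast this
  have hd4 : ((k-1 : ℕ) : ℝ) ≤ 4 * (((k-1+3)/4 : ℕ) : ℝ) := by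
    have h : (k-1 : ℕ) ≤ 4 * ((k-1+3)/4) := by omega
    exact_mod_cast h
  have hDge : ((k-1 : ℕ) : ℝ)/4 ≤ (D.card : ℝ) := by
    have h : (((k-1+3)/4 : ℕ) : ℝ) ≤ (D.card : ℝ) := by
      rw [hcard]; exact_mod_cast hfg
    linarith
  have hmne : ((k-1 : ℕ) : ℝ) ≠ 0 := by linarith
  have key : ∀ M Dc : ℝ, 1 ≤ M → M/4 ≤ Dc → (3:ℝ)/8 ≤ Dc * (2*(3/(4*M))) := by
    intro M Dc hM1 hM2
    have hM : (0:ℝ) < M := by linarith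
    have e1 : Dc * (2*(3/(4*M))) = (3/(2*M)) * Dc := by field_simp; ring
    rw [e1]
    calc (3:ℝ)/8 = (3/(2*M)) * (M/4) := by field_simp; ring
      _ ≤ (3/(2*M)) * Dc := by
          apply mul_le_mul_of_nonneg_left hM2
          positivity
  calc (3:ℝ)/8 ≤ (D.card : ℝ) * (2*(3/(4*((k-1 : ℕ) : ℝ)))) := key _ _ hm1 hDge
    _ = (D.card : ℝ) * (2*a^2) := by rw [ha]
    _ ≤ ∑ b ∈ D.map (Fin.castLEEmb (show k-1 ≤ k by omega)), B b := h2
    _ ≤ ∑ b : Fin k, B b := h1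
    _ = ‖vec k t f - vec k t g‖^2 := hexp.symm


/-- Gilbert–Varshamov packing of group-sparse unit vectors: for `k ≥ 2`
and `n = k·t` with `t = n/k ≥ 2`, there is a set `C` of `k`-group-sparse unit vectors with
last coordinate `1/2`, with `log|C| ≥ c·k·log(n/k)` and pairwise squared distance `≥ 3/8`. -/
theorem stmt14 :
    ∃ c : ℝ, 0 < c ∧
      ∀ (k t : ℕ) (hk : 2 ≤ k) (ht : 2 ≤ t),
        ∃ C : Finset (EuclideanSpace ℝ (Fin (k * t))),
          (∀ x ∈ C, ‖x‖ = 1 ∧ GroupSparse k t x ∧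
            x ⟨k * t - 1, Nat.sub_lt (Nat.mul_pos (by omega) (by omega)) one_pos⟩ = 1 / 2) ∧
          Real.log (C.card : ℝ) ≥ c * (k : ℝ) * Real.log (t : ℝ) ∧
          ∀ x ∈ C, ∀ s ∈ C, x ≠ s → ‖x - s‖ ^ 2 ≥ 3 / 8 := by
  classical
  refine ⟨1/8, by norm_num, ?_⟩
  intro k t hk ht
  have hdd1 : 1 ≤ (k-1+3)/4 := by omega
  obtain ⟨C', hmin, hcard⟩ := exists_code (k-1) t ((k-1+3)/4) (by omega) hdd1
  set r := (k-1+3)/4 - 1 with hr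
  have h2r : 2*r ≤ k-1 := by omega
  have h8 : k ≤ 8*((k-1) - 2*r) := by omega
  have hone : 1 ≤ (k-1) - 2*r := by omega
  have hpow : t^((k-1) - 2*r) ≤ C'.card := by
    have e1 : (2*t)^(k-1) = 2^(k-1) * t^(k-1) := mul_pow 2 t (k-1)
    have e2 : C'.card * (2^(k-1) * (2*t)^r) = 2^(k-1) * (C'.card * (2*t)^r) := by ring
    have h3 : 2^(k-1) * t^(k-1) ≤ 2^(k-1) * (C'.card * (2*t)^r) := by
      rw [← e1, ← e2]; exact hcard
    have h4 : t^(k-1) ≤ C'.card * (2*t)^r :=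
      Nat.le_of_mul_le_mul_left h3 (by positivity)
    have h5 : (2*t)^r ≤ t^(2*r) := by
      calc (2*t)^r ≤ (t*t)^r := Nat.pow_le_pow_left (Nat.mul_le_mul_right t ht) r
        _ = t^(2*r) := by rw [show t*t = t^2 from (sq t).symm, ← pow_mul]
    have h6 : t^(k-1) ≤ C'.card * t^(2*r) := le_trans h4 (Nat.mul_le_mul_left _ h5)
    have h7 : t^((k-1)-2*r) * t^(2*r) = t^(k-1) := by rw [← pow_add]; congr 1; omega
    have h8' : t^((k-1)-2*r) * t^(2*r) ≤ C'.card * t^(2*r) := by rw [h7]; exact h6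
    exact Nat.le_of_mul_le_mul_right h8' (by positivity)
  have hinj : Set.InjOn (vec k t) ↑C' := by
    intro f hf g hg hev
    by_contra hne
    have hd := hmin f hf g hg hne
    have hge := dist_ge k t hk ht f g hd
    have h0 : vec k t f - vec k t g = 0 := by rw [hev]; exact sub_self _
    rw [h0, norm_zero] at hge
    norm_num at hge
  refine ⟨C'.image (vec k t), ?_, ?_, ?_⟩
  · intro x hx
    obtain ⟨f, hf, rfl⟩ := Finset.mem_image.1 hx
    exact ⟨vec_norm_one k t hk ht f, vec_gs k t hk ht f, vec_last k t hk ht f _⟩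
  · have hc : (C'.image (vec k t)).card = C'.card := Finset.card_image_of_injOn hinj
    have hC1 : t^((k-1)-2*r) ≤ (C'.image (vec k t)).card := by rw [hc]; exact hpow
    have ht0 : (0:ℝ) < (t:ℝ) := by exact_mod_cast (by omega : 0 < t)
    have hlog1 : Real.log ((t:ℝ)^((k-1)-2*r)) ≤ Real.log ((C'.image (vec k t)).card : ℝ) := by
      apply Real.log_le_log (by positivity)
      exact_mod_cast hC1
    rw [Real.log_pow] at hlog1
    have hlt : 0 ≤ Real.log t := Real.log_nonneg (by exact_mod_cast (by omega : 1 ≤ t))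
    have hk8 : (1:ℝ)/8 * (k:ℝ) ≤ (((k-1) - 2*r : ℕ) : ℝ) := by
      have h := h8
      have hcast : (k:ℝ) ≤ 8 * (((k-1) - 2*r : ℕ) : ℝ) := by exact_mod_cast h
      linarith
    calc (1:ℝ)/8 * (k:ℝ) * Real.log t ≤ (((k-1) - 2*r : ℕ) : ℝ) * Real.log t :=
          mul_le_mul_of_nonneg_right hk8 hlt
      _ ≤ Real.log ((C'.image (vec k t)).card : ℝ) := hlog1
  · intro x hx s hs hxs
    obtain ⟨f, hf, rfl⟩ := Finset.mem_image.1 hx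
    obtain ⟨g, hg, rfl⟩ := Finset.mem_image.1 hs
    have hne : f ≠ g := fun h => hxs (by rw [h])
    exact dist_ge k t hk ht f g (hmin f hf g hg hne)
end

section
/- Let m ≥ 2k and let V be a k-dimensional linear subspace of ℝ^m. Then the number of (open) orthants of ℝ^m intersected by V is at most 2^k · binom(m, k); equivalently, the cardinality of the set { σ ∈ {−1,1}^m : ∃ v ∈ V with σ_i · v_i > 0 for all i ∈ {1,…,m} } is at most 2^k · binom(m, k). -/
open MeasureTheory ProbabilityTheory

namespace Stmt18Aux

open Module

/-- the set of strict sign vectors realized by a subspace. -/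
def Sgns (m : ℕ) (V : Submodule ℝ (Fin m → ℝ)) : Set (Fin m → ℝ) :=
  {σ | (∀ i, σ i = 1 ∨ σ i = -1) ∧ ∃ v ∈ V, ∀ i, σ i * v i > 0}

lemma sgns_finite (m : ℕ) (V : Submodule ℝ (Fin m → ℝ)) : (Sgns m V).Finite := by
  apply Set.Finite.subset (Set.Finite.pi (t := fun _ : Fin m => ({1, -1} : Set ℝ))
    (fun _ => (Set.finite_singleton (-1 : ℝ)).insert 1))
  intro σ hσ i _
  rcases hσ.1 i with h | h <;> simp [h]

/-- the cell-count bound `2·∑_{i<k} C(m-1, i)`. -/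
def T (m k : ℕ) : ℕ := 2 * ∑ i ∈ Finset.range k, Nat.choose (m - 1) i

lemma T_mono (m : ℕ) {j k : ℕ} (h : j ≤ k) : T m j ≤ T m k :=
  Nat.mul_le_mul_left 2 (Finset.sum_le_sum_of_subset (Finset.range_subset_range.mpr h))

lemma sum_choose_succ (n : ℕ) (k : ℕ) :
    ∑ i ∈ Finset.range k, Nat.choose (n + 1) i
      = ∑ i ∈ Finset.range k, Nat.choose n i + ∑ i ∈ Finset.range (k - 1), Nat.choose n i := by
  induction k with
  | zero => simp
  | succ j ih =>
    rw [Finset.sum_range_succ, ih]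
    cases j with
    | zero => simp
    | succ l =>
      rw [show l + 1 - 1 = l from rfl, show l + 1 + 1 - 1 = l + 1 from rfl,
        Nat.choose_succ_succ, Finset.sum_range_succ (f := fun i => Nat.choose n i) (n := l + 1),
        Finset.sum_range_succ (f := fun i => Nat.choose n i) (n := l)]
      simp only [Nat.succ_eq_add_one]
      omega

lemma T_rec (n k : ℕ) : T (n + 2) k = T (n + 1) k + T (n + 1) (k - 1) := by
  unfold T
  have : n + 2 - 1 = (n + 1 - 1) + 1 := rfl
  rw [this, sum_choose_succ]
  ring

lemma sgns_bot (m : ℕ) (hm : 0 < m) (V : Submodule ℝ (Fin m → ℝ))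
    (h0 : finrank ℝ V = 0) : Sgns m V = ∅ := by
  have hbot : V = ⊥ := Submodule.finrank_eq_zero.mp h0
  ext σ
  simp only [Set.mem_empty_iff_false, iff_false]
  rintro ⟨_, v, hv, hpos⟩
  rw [hbot, Submodule.mem_bot] at hv
  have := hpos ⟨0, hm⟩
  rw [hv] at this
  simp at this

lemma init_mem_map {m : ℕ} {V : Submodule ℝ (Fin (m + 1) → ℝ)} {σ : Fin (m + 1) → ℝ}
    (hσ : σ ∈ Sgns (m + 1) V) :
    Fin.init σ ∈ Sgns m (V.map (LinearMap.funLeft ℝ ℝ Fin.castSucc)) := by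
  obtain ⟨hpm, v, hv, hpos⟩ := hσ
  exact ⟨fun i => hpm i.castSucc, Fin.init v, ⟨v, hv, rfl⟩, fun i => hpos i.castSucc⟩

lemma init_mem_infmap {m : ℕ} {V : Submodule ℝ (Fin (m + 1) → ℝ)} {σ : Fin (m + 1) → ℝ}
    (hσ : σ ∈ Sgns (m + 1) V) (hlast : σ (Fin.last m) = -1)
    (hsnoc : Fin.snoc (Fin.init σ) 1 ∈ Sgns (m + 1) V) :
    Fin.init σ ∈ Sgns m ((V ⊓ LinearMap.ker
        (LinearMap.proj (R := ℝ) (φ := fun _ : Fin (m + 1) => ℝ) (Fin.last m))).map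
      (LinearMap.funLeft ℝ ℝ Fin.castSucc)) := by
  obtain ⟨hpm, vm, hvm, hposm⟩ := hσ
  obtain ⟨-, vp, hvp, hposp⟩ := hsnoc
  have hp : 0 < vp (Fin.last m) := by
    have h := hposp (Fin.last m)
    rw [Fin.snoc_last] at h
    linarith
  have hq : vm (Fin.last m) < 0 := by
    have h := hposm (Fin.last m)
    rw [hlast] at h
    nlinarith
  refine ⟨fun i => hpm i.castSucc, ?_⟩
  refine ⟨Fin.init ((-(vm (Fin.last m))) • vp + vp (Fin.last m) • vm),
    ⟨(-(vm (Fin.last m))) • vp + vp (Fin.last m) • vm,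
      ⟨V.add_mem (V.smul_mem _ hvp) (V.smul_mem _ hvm), ?_⟩, rfl⟩, fun i => ?_⟩
  · simp only [SetLike.mem_coe, LinearMap.mem_ker, LinearMap.proj_apply, Pi.add_apply,
      Pi.smul_apply, smul_eq_mul]
    ring
  · have h1 : 0 < σ i.castSucc * vp i.castSucc := by
      have h := hposp i.castSucc
      rwa [Fin.snoc_castSucc] at h
    have h2 : 0 < σ i.castSucc * vm i.castSucc := hposm i.castSucc
    show 0 < σ i.castSucc *
      ((-(vm (Fin.last m))) • vp + vp (Fin.last m) • vm) i.castSucc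
    simp only [Pi.add_apply, Pi.smul_apply, smul_eq_mul]
    nlinarith

lemma count_step (m : ℕ) (V : Submodule ℝ (Fin (m + 1) → ℝ)) :
    (Sgns (m + 1) V).ncard ≤
      (Sgns m (V.map (LinearMap.funLeft ℝ ℝ Fin.castSucc))).ncard +
      (Sgns m ((V ⊓ LinearMap.ker
          (LinearMap.proj (R := ℝ) (φ := fun _ : Fin (m + 1) => ℝ) (Fin.last m))).map
        (LinearMap.funLeft ℝ ℝ Fin.castSucc))).ncard := by
  classical
  have hSfin := sgns_finite (m + 1) V
  let A : Set (Fin (m + 1) → ℝ) :=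
    {σ | σ ∈ Sgns (m + 1) V ∧ (σ (Fin.last m) = 1 ∨ Fin.snoc (Fin.init σ) 1 ∉ Sgns (m + 1) V)}
  let B : Set (Fin (m + 1) → ℝ) :=
    {σ | σ ∈ Sgns (m + 1) V ∧ σ (Fin.last m) = -1 ∧ Fin.snoc (Fin.init σ) 1 ∈ Sgns (m + 1) V}
  have hAS : A ⊆ Sgns (m + 1) V := fun σ h => h.1
  have hBS : B ⊆ Sgns (m + 1) V := fun σ h => h.1
  have hcover : Sgns (m + 1) V ⊆ A ∪ B := by
    intro σ hσ
    rcases hσ.1 (Fin.last m) with h1 | h1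
    · exact Or.inl ⟨hσ, Or.inl h1⟩
    · by_cases hsn : Fin.snoc (Fin.init σ) 1 ∈ Sgns (m + 1) V
      · exact Or.inr ⟨hσ, h1, hsn⟩
      · exact Or.inl ⟨hσ, Or.inr hsn⟩
  have hsnoc_eq : ∀ σ : Fin (m + 1) → ℝ, σ (Fin.last m) = 1 →
      Fin.snoc (Fin.init σ) 1 = σ := by
    intro σ h
    rw [← h]
    exact Fin.snoc_init_self σ
  have hinjA : Set.InjOn Fin.init A := by
    intro σ hσ τ hτ hinit
    rcases hσ.1.1 (Fin.last m) with h1 | h1 <;> rcases hτ.1.1 (Fin.last m) with h2 | h2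
    · rw [← Fin.snoc_init_self σ, ← Fin.snoc_init_self τ, hinit, h1, h2]
    · exfalso
      rcases hτ.2 with h | h
      · rw [h2] at h; norm_num at h
      · exact h (by rw [← hinit, hsnoc_eq σ h1]; exact hσ.1)
    · exfalso
      rcases hσ.2 with h | h
      · rw [h1] at h; norm_num at h
      · exact h (by rw [hinit, hsnoc_eq τ h2]; exact hτ.1)
    · rw [← Fin.snoc_init_self σ, ← Fin.snoc_init_self τ, hinit, h1, h2]
  have hinjB : Set.InjOn Fin.init B := by
    intro σ hσ τ hτ hinit
    rw [← Fin.snoc_init_self σ, ← Fin.snoc_init_self τ, hinit, hσ.2.1, hτ.2.1]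
  have hAsub : Fin.init '' A ⊆ Sgns m (V.map (LinearMap.funLeft ℝ ℝ Fin.castSucc)) := by
    rintro _ ⟨σ, hσ, rfl⟩
    exact init_mem_map hσ.1
  have hBsub : Fin.init '' B ⊆ Sgns m ((V ⊓ LinearMap.ker
      (LinearMap.proj (R := ℝ) (φ := fun _ : Fin (m + 1) => ℝ) (Fin.last m))).map
      (LinearMap.funLeft ℝ ℝ Fin.castSucc)) := by
    rintro _ ⟨σ, hσ, rfl⟩
    exact init_mem_infmap hσ.1 hσ.2.1 hσ.2.2
  calc (Sgns (m + 1) V).ncard ≤ (A ∪ B).ncard :=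
        Set.ncard_le_ncard hcover ((hSfin.subset hAS).union (hSfin.subset hBS))
    _ ≤ A.ncard + B.ncard := Set.ncard_union_le A B
    _ = (Fin.init '' A).ncard + (Fin.init '' B).ncard := by
        rw [Set.ncard_image_of_injOn hinjA, Set.ncard_image_of_injOn hinjB]
    _ ≤ _ := Nat.add_le_add
        (Set.ncard_le_ncard hAsub (sgns_finite _ _))
        (Set.ncard_le_ncard hBsub (sgns_finite _ _))

lemma main_bound : ∀ (m : ℕ) (V : Submodule ℝ (Fin (m + 1) → ℝ)),
    (Sgns (m + 1) V).ncard ≤ T (m + 1) (finrank ℝ V) := by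
  intro m
  induction m with
  | zero =>
    intro V
    by_cases h0 : finrank ℝ V = 0
    · rw [h0, sgns_bot 1 one_pos V h0]
      simp
    · have hsub : Sgns 1 V ⊆ {(fun _ => 1 : Fin 1 → ℝ), fun _ => -1} := by
        intro σ hσ
        rcases hσ.1 0 with h | h
        · left; funext i; rw [Subsingleton.elim i 0]; exact h
        · right; funext i; rw [Subsingleton.elim i 0]; exact h
      have h2 : (Sgns 1 V).ncard ≤ 2 := by
        refine (Set.ncard_le_ncard hsub (Set.toFinite _)).trans ?_
        refine (Set.ncard_insert_le _ _).trans ?_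
        simp
      refine h2.trans ?_
      have hk : 1 ≤ finrank ℝ V := Nat.one_le_iff_ne_zero.mpr h0
      have hsum : 1 ≤ ∑ i ∈ Finset.range (finrank ℝ V), Nat.choose 0 i := by
        calc 1 = ∑ i ∈ Finset.range 1, Nat.choose 0 i := by simp
          _ ≤ _ := Finset.sum_le_sum_of_subset (Finset.range_subset_range.mpr hk)
      unfold T
      simp only [Nat.sub_self]
      omega
  | succ n ih =>
    intro V
    by_cases hVH : V ≤ LinearMap.ker
        (LinearMap.proj (R := ℝ) (φ := fun _ : Fin (n + 2) => ℝ) (Fin.last (n + 1)))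
    · have hempty : Sgns (n + 2) V = ∅ := by
        ext σ
        simp only [Set.mem_empty_iff_false, iff_false]
        rintro ⟨_, v, hv, hpos⟩
        have h0 : v (Fin.last (n + 1)) = 0 := by
          have := hVH hv
          rwa [LinearMap.mem_ker, LinearMap.proj_apply] at this
        have := hpos (Fin.last (n + 1))
        rw [h0, mul_zero] at this
        exact lt_irrefl 0 this
      rw [hempty]
      simp [T]
    · have hlt : V ⊓ LinearMap.ker
          (LinearMap.proj (R := ℝ) (φ := fun _ : Fin (n + 2) => ℝ) (Fin.last (n + 1))) < V := by
        refine lt_of_le_of_ne inf_le_left (fun h => hVH ?_)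
        rw [← h]
        exact inf_le_right
      have hk1 : finrank ℝ ↥(V ⊓ LinearMap.ker
          (LinearMap.proj (R := ℝ) (φ := fun _ : Fin (n + 2) => ℝ) (Fin.last (n + 1))))
          < finrank ℝ V := Submodule.finrank_lt_finrank_of_lt hlt
      calc (Sgns (n + 2) V).ncard ≤ _ := count_step (n + 1) V
        _ ≤ T (n + 1) (finrank ℝ V) + T (n + 1) (finrank ℝ V - 1) := by
            refine Nat.add_le_add ?_ ?_
            · exact (ih _).trans (T_mono _ (Submodule.finrank_map_le _ _))
            · exact (ih _).trans (T_mono _ ((Submodule.finrank_map_le _ _).trans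
                (Nat.le_sub_one_of_lt hk1)))
        _ = T (n + 2) (finrank ℝ V) := (T_rec n (finrank ℝ V)).symm

lemma choose_mono_half (n : ℕ) : ∀ (b a : ℕ), a ≤ b → b ≤ n / 2 →
    Nat.choose n a ≤ Nat.choose n b := by
  intro b
  induction b with
  | zero =>
    intro a ha _
    rw [Nat.le_zero.mp ha]
  | succ c ihc =>
    intro a ha hb
    rcases Nat.eq_or_lt_of_le ha with h | h
    · rw [h]
    · exact (ihc a (Nat.lt_succ_iff.mp h) (by omega)).trans
        (Nat.choose_le_succ_of_lt_half_left (by omega))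

lemma T_le (m k : ℕ) (hk : 1 ≤ k) (hmk : 2 * k ≤ m) :
    T m k ≤ 2 ^ k * Nat.choose m k := by
  have hmono : ∀ i ∈ Finset.range k, Nat.choose (m - 1) i ≤ Nat.choose (m - 1) (k - 1) := by
    intro i hi
    rw [Finset.mem_range] at hi
    exact choose_mono_half (m - 1) (k - 1) i (by omega) (by omega)
  have hsum : ∑ i ∈ Finset.range k, Nat.choose (m - 1) i ≤ k * Nat.choose (m - 1) (k - 1) := by
    have := Finset.sum_le_card_nsmul (Finset.range k) (fun i => Nat.choose (m - 1) i)
      (Nat.choose (m - 1) (k - 1)) hmono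
    simpa [Finset.card_range] using this
  have hmc : m * Nat.choose (m - 1) (k - 1) = Nat.choose m k * k := by
    obtain ⟨m', rfl⟩ : ∃ m', m = m' + 1 := ⟨m - 1, by omega⟩
    obtain ⟨k', rfl⟩ : ∃ k', k = k' + 1 := ⟨k - 1, by omega⟩
    simpa using Nat.add_one_mul_choose_eq m' k'
  have h2k : k ≤ 2 ^ k := Nat.le_of_lt (Nat.lt_two_pow_self (n := k))
  have hkey : 2 * (k * Nat.choose (m - 1) (k - 1)) ≤ 2 ^ k * Nat.choose m k := by
    refine Nat.le_of_mul_le_mul_left ?_ (show 0 < k by omega)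
    calc k * (2 * (k * Nat.choose (m - 1) (k - 1)))
        = (2 * k * k) * Nat.choose (m - 1) (k - 1) := by ring
      _ ≤ (2 ^ k * m) * Nat.choose (m - 1) (k - 1) := by
          refine Nat.mul_le_mul_right _ ?_
          calc 2 * k * k ≤ m * k := Nat.mul_le_mul_right k hmk
            _ ≤ m * 2 ^ k := Nat.mul_le_mul_left m h2k
            _ = 2 ^ k * m := Nat.mul_comm _ _
      _ = 2 ^ k * (m * Nat.choose (m - 1) (k - 1)) := by ring
      _ = 2 ^ k * (Nat.choose m k * k) := by rw [hmc]
      _ = k * (2 ^ k * Nat.choose m k) := by ring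
  calc T m k = 2 * ∑ i ∈ Finset.range k, Nat.choose (m - 1) i := rfl
    _ ≤ 2 * (k * Nat.choose (m - 1) (k - 1)) := Nat.mul_le_mul_left 2 hsum
    _ ≤ _ := hkey

end Stmt18Aux

/-- Lemma 13, orthant counting: for `m ≥ 2k`, a `k`-dimensional linear
subspace of `ℝ^m` intersects at most `2^k · C(m,k)` open orthants. -/
theorem stmt18 (m k : ℕ) (hmk : 2 * k ≤ m) (V : Submodule ℝ (Fin m → ℝ))
    (hV : Module.finrank ℝ V = k) :
    Set.ncard {σ : Fin m → ℝ |
        (∀ i, σ i = 1 ∨ σ i = -1) ∧ ∃ v ∈ V, ∀ i, σ i * v i > 0}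
      ≤ 2 ^ k * Nat.choose m k := by
  rcases Nat.eq_zero_or_pos m with hm | hm
  · subst hm
    have hk : k = 0 := by omega
    subst hk
    calc Set.ncard {σ : Fin 0 → ℝ |
          (∀ i, σ i = 1 ∨ σ i = -1) ∧ ∃ v ∈ V, ∀ i, σ i * v i > 0}
        ≤ ({(fun _ => 1 : Fin 0 → ℝ)} : Set (Fin 0 → ℝ)).ncard :=
          Set.ncard_le_ncard (fun σ _ => by
            simp [Subsingleton.elim σ (fun _ => (1 : ℝ))]) (Set.finite_singleton _)
      _ = 1 := Set.ncard_singleton _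
      _ ≤ _ := by simp
  · obtain ⟨m', rfl⟩ : ∃ m', m = m' + 1 := ⟨m - 1, by omega⟩
    have h1 : (Stmt18Aux.Sgns (m' + 1) V).ncard ≤ Stmt18Aux.T (m' + 1) k := by
      have := Stmt18Aux.main_bound m' V
      rwa [hV] at this
    refine le_trans h1 ?_
    rcases Nat.eq_zero_or_pos k with hk | hk
    · subst hk
      simp [Stmt18Aux.T]
    · exact Stmt18Aux.T_le (m' + 1) k hk hmk
end

section
/- Fix x ∈ S^{n-1} and σ > 0. Let A ∈ ℝ^{m×n} have i.i.d. N(0,1) entries and let ξ ∼ N(0, σ² I_m) be independent of A. Then for any γ > 0, P( d_H( sign(Ax), sign(Ax + ξ) ) > σ/2 + γ ) ≤ e^{−2 m γ²}. -/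
open MeasureTheory ProbabilityTheory

open Real Filter Set
open scoped NNReal ENNReal

section Aux

lemma hoeffding_scalar {p t : ℝ} (hp0 : 0 ≤ p) (hp1 : p ≤ 1) (ht : 0 ≤ t) :
    1 + p * (Real.exp t - 1) ≤ Real.exp (t * p + t ^ 2 / 8) := by
  set D : ℝ → ℝ := fun u => 1 - p + p * exp u with hDdef
  have hD : ∀ u, 0 < D u := by
    intro u
    rcases eq_or_lt_of_le hp0 with h | h
    · simp [hDdef, ← h]
    · have := mul_pos h (exp_pos u)
      simp only [hDdef]; nlinarith
  set g : ℝ → ℝ := fun u => p + u / 4 - p * exp u / D u with hgdef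
  set f : ℝ → ℝ := fun u => u * p + u ^ 2 / 8 - log (D u) with hfdef
  have hDderiv : ∀ u, HasDerivAt D (p * exp u) u := by
    intro u
    exact (((Real.hasDerivAt_exp u).const_mul p).const_add (1 - p))
  have hf' : ∀ u, HasDerivAt f (g u) u := by
    intro u
    have h1 : HasDerivAt (fun u : ℝ => u * p) p u := hasDerivAt_mul_const p
    have h2 : HasDerivAt (fun u : ℝ => u ^ 2 / 8) (u / 4) u := by
      have := (hasDerivAt_pow 2 u).div_const 8
      exact this.congr_deriv (by push_cast; ring)
    have h3 : HasDerivAt (fun u => log (D u)) (p * exp u / D u) u :=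
      (hDderiv u).log (hD u).ne'
    exact (h1.add h2).sub h3
  have hg' : ∀ u, HasDerivAt g (1 / 4 - p * exp u * (1 - p) / (D u) ^ 2) u := by
    intro u
    have h2 : HasDerivAt (fun u : ℝ => p + u / 4) (1 / 4) u := by
      simpa using ((hasDerivAt_id u).div_const 4).const_add p
    have h3 : HasDerivAt (fun u => p * exp u / D u)
        ((p * exp u * D u - p * exp u * (p * exp u)) / (D u) ^ 2) u :=
      ((Real.hasDerivAt_exp u).const_mul p).div (hDderiv u) (hD u).ne'
    have h4 := h2.sub h3
    refine h4.congr_deriv ?_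
    have hne : D u ≠ 0 := (hD u).ne'
    simp only [hDdef]
    ring
  have hg'nonneg : ∀ u, 0 ≤ 1 / 4 - p * exp u * (1 - p) / (D u) ^ 2 := by
    intro u
    have hDu := hD u
    rw [sub_nonneg, div_le_iff₀ (by positivity)]
    have : D u = (1 - p) + p * exp u := rfl
    nlinarith [sq_nonneg ((1 - p) - p * exp u)]
  have hgmono : Monotone g := by
    refine monotone_of_deriv_nonneg (fun u => (hg' u).differentiableAt) ?_
    intro u
    rw [(hg' u).deriv]
    exact hg'nonneg u
  have hg0 : g 0 = 0 := by
    simp [hgdef, hDdef]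
  have hfmono : MonotoneOn f (Set.Ici 0) := by
    refine monotoneOn_of_deriv_nonneg (convex_Ici 0)
      ((Differentiable.continuous (fun u : ℝ => (hf' u).differentiableAt)).continuousOn)
      (fun u _ => (hf' u).differentiableAt.differentiableWithinAt) ?_
    intro u hu
    rw [(hf' u).deriv]
    rw [← hg0]
    exact hgmono (le_of_lt (by simpa using hu))
  have hf0 : f 0 = 0 := by simp [hfdef, hDdef]
  have hft : 0 ≤ f t := by
    rw [← hf0]
    exact hfmono (Set.self_mem_Ici) (Set.mem_Ici.2 ht) ht
  have hlog : log (D t) ≤ t * p + t ^ 2 / 8 := by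
    simp only [hfdef] at hft; linarith
  have := (Real.log_le_iff_le_exp (hD t)).mp hlog
  calc 1 + p * (exp t - 1) = D t := by simp only [hDdef]; ring
  _ ≤ _ := this

lemma conv_pdf {v w : ℝ≥0} (hv : v ≠ 0) (hw : w ≠ 0) (y : ℝ) :
    ∫ x, gaussianPDFReal 0 v x * gaussianPDFReal x w y = gaussianPDFReal 0 (v + w) y := by
  have hV : (0:ℝ) < v := lt_of_le_of_ne v.coe_nonneg (by exact_mod_cast (Ne.symm hv))
  have hW : (0:ℝ) < w := lt_of_le_of_ne w.coe_nonneg (by exact_mod_cast (Ne.symm hw))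
  set V : ℝ := (v : ℝ)
  set W : ℝ := (w : ℝ)
  set b : ℝ := (V + W) / (2 * V * W) with hbdef
  have hb : 0 < b := by positivity
  set c : ℝ := V * y / (V + W) with hcdef
  have key : ∀ x : ℝ, gaussianPDFReal 0 v x * gaussianPDFReal x w y
      = ((√(2 * π * V))⁻¹ * (√(2 * π * W))⁻¹ * exp (-y ^ 2 / (2 * (V + W))))
        * exp (-b * (x - c) ^ 2) := by
    intro x
    have hexp : -x ^ 2 / (2 * V) + -(y - x) ^ 2 / (2 * W)
        = -y ^ 2 / (2 * (V + W)) + -b * (x - c) ^ 2 := by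
      rw [hbdef, hcdef]
      field_simp
      ring
    simp only [gaussianPDFReal, sub_zero]
    rw [show ((√(2 * π * V))⁻¹ * exp (-x ^ 2 / (2 * V))) * ((√(2 * π * W))⁻¹
        * exp (-(y - x) ^ 2 / (2 * W)))
      = (√(2 * π * V))⁻¹ * (√(2 * π * W))⁻¹ * (exp (-x ^ 2 / (2 * V)) *
        exp (-(y - x) ^ 2 / (2 * W))) by ring, ← Real.exp_add, hexp, Real.exp_add]
    ring
  rw [show (fun x => gaussianPDFReal 0 v x * gaussianPDFReal x w y) = fun x =>
      ((√(2 * π * V))⁻¹ * (√(2 * π * W))⁻¹ * exp (-y ^ 2 / (2 * (V + W))))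
        * exp (-b * (x - c) ^ 2) from funext key,
    MeasureTheory.integral_const_mul,
    integral_sub_right_eq_self (fun x => exp (-b * x ^ 2)) c,
    integral_gaussian]
  have h1 : √(2 * π * V) * √(2 * π * W) = √(2 * π * (V + W)) * √(π / b) := by
    rw [← Real.sqrt_mul (by positivity), ← Real.sqrt_mul (by positivity)]
    congr 1
    rw [hbdef]
    field_simp
  have h2 : (√(2 * π * V))⁻¹ * (√(2 * π * W))⁻¹ * √(π / b) = (√(2 * π * (V + W)))⁻¹ := by
    have hA : (0:ℝ) < √(2 * π * V) := Real.sqrt_pos.2 (by positivity)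
    have hB : (0:ℝ) < √(2 * π * W) := Real.sqrt_pos.2 (by positivity)
    have hC : (0:ℝ) < √(2 * π * (V + W)) := Real.sqrt_pos.2 (by positivity)
    apply mul_right_cancel₀ hC.ne'
    have hEC : √(π / b) * √(2 * π * (V + W)) = √(2 * π * V) * √(2 * π * W) := by
      rw [mul_comm (√(π / b))]
      linarith [h1]
    calc (√(2 * π * V))⁻¹ * (√(2 * π * W))⁻¹ * √(π / b) * √(2 * π * (V + W))
        = (√(2 * π * V))⁻¹ * (√(2 * π * W))⁻¹ * (√(π / b) * √(2 * π * (V + W))) := by ring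
      _ = (√(2 * π * V))⁻¹ * (√(2 * π * W))⁻¹ * (√(2 * π * V) * √(2 * π * W)) := by rw [hEC]
      _ = ((√(2 * π * V))⁻¹ * √(2 * π * V)) * ((√(2 * π * W))⁻¹ * √(2 * π * W)) := by ring
      _ = 1 := by rw [inv_mul_cancel₀ hA.ne', inv_mul_cancel₀ hB.ne']; ring
      _ = (√(2 * π * (V + W)))⁻¹ * √(2 * π * (V + W)) := by rw [inv_mul_cancel₀ hC.ne']
  rw [gaussianPDFReal, sub_zero]
  push_cast
  rw [show ((√(2 * π * V))⁻¹ * (√(2 * π * W))⁻¹ * exp (-y ^ 2 / (2 * (V + W)))) * √(π / b)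
      = ((√(2 * π * V))⁻¹ * (√(2 * π * W))⁻¹ * √(π / b)) * exp (-y ^ 2 / (2 * (V + W))) by ring,
    h2]


lemma gaussianPDFReal_symm (a b : ℝ) (w : ℝ≥0) :
    gaussianPDFReal a w b = gaussianPDFReal b w a := by
  simp only [gaussianPDFReal]
  rw [show (b - a) ^ 2 = (a - b) ^ 2 by ring]

lemma gaussianReal_conv (v w : ℝ≥0) :
    Measure.map (fun z : ℝ × ℝ => z.1 + z.2) ((gaussianReal 0 v).prod (gaussianReal 0 w))
      = gaussianReal 0 (v + w) := by
  have hadd : Measurable (fun z : ℝ × ℝ => z.1 + z.2) := measurable_fst.add measurable_snd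
  by_cases hv : v = 0
  · subst hv
    rw [gaussianReal_zero_var, Measure.dirac_prod, Measure.map_map hadd measurable_prodMk_left]
    simp only [Function.comp_def, zero_add]
    rw [Measure.map_id']
  by_cases hw : w = 0
  · subst hw
    rw [gaussianReal_zero_var, Measure.prod_dirac,
      Measure.map_map hadd measurable_prodMk_right]
    simp only [Function.comp_def, add_zero]
    rw [Measure.map_id']
  have hvw : v + w ≠ 0 := fun h => hv (by simpa using (add_eq_zero.mp h).1)
  have hjoint : Measurable (fun q : ℝ × ℝ => gaussianPDF q.1 w q.2) := by
    apply Measurable.ennreal_ofReal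
    simp only [gaussianPDFReal]
    exact ((((measurable_snd.sub measurable_fst).pow_const 2).neg.div_const _).exp).const_mul _
  ext s hs
  rw [Measure.map_apply hadd hs, Measure.prod_apply (hadd hs)]
  have hsec : ∀ x : ℝ, (Prod.mk x ⁻¹' ((fun z : ℝ × ℝ => z.1 + z.2) ⁻¹' s))
      = (fun y => x + y) ⁻¹' s := fun _ => rfl
  have hmap : ∀ x : ℝ, gaussianReal 0 w ((fun y => x + y) ⁻¹' s) = gaussianReal x w s := by
    intro x
    have hx := gaussianReal_map_const_add (μ := 0) (v := w) x
    rw [zero_add] at hx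
    rw [← hx, Measure.map_apply (measurable_const_add x) hs]
  simp_rw [hsec, hmap]
  have h1 : ∀ x : ℝ, gaussianReal x w s = ∫⁻ y in s, gaussianPDF x w y :=
    fun x => gaussianReal_apply x hw s
  simp_rw [h1]
  rw [gaussianReal_of_var_ne_zero 0 hv,
    lintegral_withDensity_eq_lintegral_mul volume (measurable_gaussianPDF 0 v)
      (Measurable.lintegral_prod_right' (ν := volume.restrict s) hjoint)]
  simp only [Pi.mul_apply]
  have h2 : ∀ x : ℝ, gaussianPDF 0 v x * ∫⁻ y in s, gaussianPDF x w y
      = ∫⁻ y in s, gaussianPDF 0 v x * gaussianPDF x w y := by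
    intro x
    rw [lintegral_const_mul _ (measurable_gaussianPDF x w)]
  simp_rw [h2]
  rw [lintegral_lintegral_swap
    (((measurable_gaussianPDF 0 v).comp measurable_fst).mul hjoint).aemeasurable]
  rw [gaussianReal_apply 0 hvw s]
  apply setLIntegral_congr_fun hs
  intro y _
  calc ∫⁻ x, gaussianPDF 0 v x * gaussianPDF x w y
      = ∫⁻ x, ENNReal.ofReal (gaussianPDFReal 0 v x * gaussianPDFReal x w y) := by
        congr 1; funext x
        rw [gaussianPDF, gaussianPDF, ← ENNReal.ofReal_mul (gaussianPDFReal_nonneg 0 v x)]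
    _ = ENNReal.ofReal (∫ x, gaussianPDFReal 0 v x * gaussianPDFReal x w y) := by
        rw [← ofReal_integral_eq_lintegral_ofReal]
        · have : (fun x => gaussianPDFReal 0 v x * gaussianPDFReal x w y)
              = fun x => gaussianPDFReal y w x * gaussianPDFReal 0 v x := by
            funext x; rw [gaussianPDFReal_symm x y w]; ring
          rw [this]
          apply Integrable.bdd_mul (c := (√(2 * π * w))⁻¹) (integrable_gaussianPDFReal 0 v)
            (stronglyMeasurable_gaussianPDFReal y w).aestronglyMeasurable
          refine ae_of_all _ fun x => ?_
          rw [Real.norm_eq_abs, abs_of_nonneg (gaussianPDFReal_nonneg y w x)]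
          simp only [gaussianPDFReal]
          have he : rexp (-(x - y)^2 / (2*(w:ℝ))) ≤ 1 := Real.exp_le_one_iff.mpr
            (div_nonpos_iff.mpr (Or.inr ⟨neg_nonpos.2 (sq_nonneg _), by positivity⟩))
          nlinarith [inv_nonneg.mpr (Real.sqrt_nonneg (2 * π * (w:ℝ))),
            Real.exp_pos (-(x - y)^2 / (2*(w:ℝ)))]
        · exact ae_of_all _ fun x => mul_nonneg (gaussianPDFReal_nonneg _ _ _)
            (gaussianPDFReal_nonneg _ _ _)
    _ = ENNReal.ofReal (gaussianPDFReal 0 (v + w) y) := by rw [conv_pdf hv hw y]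
    _ = gaussianPDF 0 (v + w) y := rfl


lemma map_sum_gaussian (k : ℕ) : ∀ (c : Fin k → ℝ),
    Measure.map (fun a : Fin k → ℝ => ∑ j, c j * a j) (Measure.pi fun _ => gaussianReal 0 1)
      = gaussianReal 0 (∑ j, c j ^ 2).toNNReal := by
  induction k with
  | zero =>
    intro c
    simp only [Finset.univ_eq_empty, Finset.sum_empty, Real.toNNReal_zero, gaussianReal_zero_var]
    rw [Measure.map_const]
    simp
  | succ k ih =>
    intro c
    have hmp := measurePreserving_piFinSuccAbove (fun _ : Fin (k+1) => gaussianReal 0 1) 0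
    set e := MeasurableEquiv.piFinSuccAbove (fun _ : Fin (k+1) => ℝ) 0 with hedef
    have hpi : (Measure.pi fun _ : Fin (k+1) => gaussianReal 0 1)
        = Measure.map e.symm ((gaussianReal 0 1).prod (Measure.pi fun _ : Fin k => gaussianReal 0 1)) := by
      rw [← hmp.map_eq, Measure.map_map e.symm.measurable e.measurable]
      simp
    rw [hpi, Measure.map_map (by fun_prop) e.symm.measurable]
    have hcomp : ((fun a : Fin (k+1) → ℝ => ∑ j, c j * a j) ∘ e.symm)
        = (fun z : ℝ × ℝ => z.1 + z.2) ∘ (Prod.map (fun x : ℝ => c 0 * x)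
            (fun r : Fin k → ℝ => ∑ j, c j.succ * r j)) := by
      funext p
      simp only [Function.comp_apply, Prod.map_apply]
      rw [Fin.sum_univ_succ]
      simp [hedef, MeasurableEquiv.piFinSuccAbove, Fin.succAbove_zero]
    rw [hcomp, ← Measure.map_map (show Measurable (fun z : ℝ × ℝ => z.1 + z.2) from measurable_fst.add measurable_snd) (by fun_prop)]
    have h1 : MeasurePreserving (fun x : ℝ => c 0 * x) (gaussianReal 0 1)
        (gaussianReal 0 ((c 0 ^ 2).toNNReal)) := by
      refine ⟨by fun_prop, ?_⟩
      rw [show (fun x : ℝ => c 0 * x) = (c 0 * ·) from rfl, gaussianReal_map_const_mul]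
      congr
      · ring
      · ext
        simp [Real.coe_toNNReal _ (sq_nonneg (c 0))]
    have h2 : MeasurePreserving (fun r : Fin k → ℝ => ∑ j, c j.succ * r j)
        (Measure.pi fun _ : Fin k => gaussianReal 0 1)
        (gaussianReal 0 ((∑ j : Fin k, c j.succ ^ 2).toNNReal)) := ⟨by fun_prop, ih _⟩
    rw [(h1.prod h2).map_eq, gaussianReal_conv]
    congr 1
    rw [Fin.sum_univ_succ, Real.toNNReal_add (sq_nonneg _) (Finset.sum_nonneg fun _ _ => sq_nonneg _)]



lemma integral_Ioi_mul_exp_neg_mul_sq {b : ℝ} (hb : 0 < b) :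
    ∫ r in Set.Ioi (0:ℝ), r * rexp (-b * r ^ 2) = (2 * b)⁻¹ := by
  have A : ∀ x : ℝ, HasDerivAt (fun y : ℝ => -(2*b)⁻¹ * rexp (-b * y^2)) (x * rexp (-b * x^2)) x := by
    intro x
    exact (((hasDerivAt_pow 2 x).const_mul (-b)).exp.const_mul (-(2*b)⁻¹)).congr_deriv (by field_simp; ring)
  have B : Tendsto (fun y : ℝ => -(2*b)⁻¹ * rexp (-b * y^2)) atTop (nhds (-(2*b)⁻¹ * 0)) := by
    refine Tendsto.const_mul _ ?_
    refine Real.tendsto_exp_atBot.comp ?_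
    exact (tendsto_pow_atTop two_ne_zero).const_mul_atTop_of_neg (neg_lt_zero.2 hb)
  have := integral_Ioi_of_hasDerivAt_of_tendsto' (a := 0) (fun x _ => A x)
    ((integrable_mul_exp_neg_mul_sq hb).integrableOn) B
  rw [this]
  norm_num

lemma sgn_ne_iff (a b : ℝ) : sgn a ≠ sgn b ↔ ¬((0 ≤ a) ↔ (0 ≤ b)) := by
  unfold sgn
  by_cases h1 : 0 ≤ a <;> by_cases h2 : 0 ≤ b <;> simp [h1, h2] <;> norm_num

lemma flip_set_eq (s : ℝ) : {g : ℝ | sgn g ≠ sgn (g + s)}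
    = if 0 ≤ s then Set.Ico (-s) 0 else Set.Ico 0 (-s) := by
  rcases le_or_gt 0 s with hs | hs
  · rw [if_pos hs]
    ext g
    rw [Set.mem_setOf_eq, sgn_ne_iff, Set.mem_Ico]
    constructor
    · intro h
      by_cases h1 : 0 ≤ g
      · exact absurd ⟨fun _ => by linarith, fun _ => h1⟩ h
      · push_neg at h1
        have h2 : 0 ≤ g + s := by
          by_contra h2
          push_neg at h2
          exact h ⟨fun hg => by linarith, fun hgs => by linarith⟩
        exact ⟨by linarith, h1⟩
    · rintro ⟨ha, hb⟩ hiff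
      have := hiff.mpr (by linarith)
      linarith
  · rw [if_neg (not_le.2 hs)]
    ext g
    rw [Set.mem_setOf_eq, sgn_ne_iff, Set.mem_Ico]
    constructor
    · intro h
      by_cases h1 : 0 ≤ g
      · have h2 : ¬ 0 ≤ g + s := fun h2 => h ⟨fun _ => h2, fun _ => h1⟩
        push_neg at h2
        exact ⟨h1, by linarith⟩
      · push_neg at h1
        exact absurd ⟨fun hg => by linarith, fun hgs => by linarith⟩ h
    · rintro ⟨ha, hb⟩ hiff
      have := hiff.mp (by linarith)
      linarith

lemma measurableSet_flip : MeasurableSet {z : ℝ × ℝ | sgn z.1 ≠ sgn (z.1 + z.2)} := by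
  have m1 : MeasurableSet {z : ℝ × ℝ | 0 ≤ z.1} := measurableSet_le measurable_const measurable_fst
  have m2 : MeasurableSet {z : ℝ × ℝ | 0 ≤ z.1 + z.2} :=
    measurableSet_le measurable_const (measurable_fst.add measurable_snd)
  have : {z : ℝ × ℝ | sgn z.1 ≠ sgn (z.1 + z.2)}
      = ({z : ℝ × ℝ | 0 ≤ z.1} \ {z : ℝ × ℝ | 0 ≤ z.1 + z.2})
        ∪ ({z : ℝ × ℝ | 0 ≤ z.1 + z.2} \ {z : ℝ × ℝ | 0 ≤ z.1}) := by
    ext z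
    simp only [Set.mem_setOf_eq, Set.mem_union, Set.mem_diff, sgn]
    by_cases h1 : 0 ≤ z.1 <;> by_cases h2 : 0 ≤ z.1 + z.2 <;> simp [h1, h2] <;> norm_num
  rw [this]
  exact (m1.diff m2).union (m2.diff m1)

lemma gauss_Ico_le (a b : ℝ) :
    gaussianReal 0 1 (Set.Ico a b) ≤ ENNReal.ofReal ((√(2*π))⁻¹) * ENNReal.ofReal (b - a) := by
  rw [gaussianReal_apply 0 one_ne_zero]
  calc ∫⁻ g in Set.Ico a b, gaussianPDF 0 1 g
      ≤ ∫⁻ _ in Set.Ico a b, ENNReal.ofReal ((√(2*π))⁻¹) := by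
        refine lintegral_mono fun g => ?_
        rw [gaussianPDF, gaussianPDFReal]
        refine ENNReal.ofReal_le_ofReal ?_
        have h1 : rexp (-(g - 0)^2 / (2*((1:ℝ≥0):ℝ))) ≤ 1 :=
          Real.exp_le_one_iff.mpr (div_nonpos_iff.mpr (Or.inr ⟨neg_nonpos.2 (sq_nonneg _), by norm_num⟩))
        have h2 : √(2*π*((1:ℝ≥0):ℝ)) = √(2*π) := by norm_num
        rw [h2]
        exact mul_le_of_le_one_right (inv_nonneg.2 (Real.sqrt_nonneg _)) h1
    _ = ENNReal.ofReal ((√(2*π))⁻¹) * ENNReal.ofReal (b - a) := by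
        rw [setLIntegral_const, Real.volume_Ico]

lemma flip_prob {σ : ℝ} (hσ : 0 < σ) :
    ((gaussianReal 0 1).prod (gaussianReal 0 (σ^2).toNNReal))
      {z : ℝ × ℝ | sgn z.1 ≠ sgn (z.1 + z.2)} ≤ ENNReal.ofReal (σ / 2) := by
  set w : ℝ≥0 := (σ^2).toNNReal with hwdef
  have hwr : (w : ℝ) = σ^2 := Real.coe_toNNReal _ (sq_nonneg σ)
  have hw : w ≠ 0 := by
    intro h
    rw [h] at hwr
    simp at hwr
    nlinarith
  have hwpos : (0:ℝ) < w := by rw [hwr]; positivity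
  rw [Measure.prod_apply_symm measurableSet_flip]
  have hsec : ∀ s : ℝ, gaussianReal 0 1 ((fun g => (g, s)) ⁻¹' {z : ℝ × ℝ | sgn z.1 ≠ sgn (z.1 + z.2)})
      ≤ ENNReal.ofReal ((√(2*π))⁻¹ * |s|) := by
    intro s
    have hpre : ((fun g => (g, s)) ⁻¹' {z : ℝ × ℝ | sgn z.1 ≠ sgn (z.1 + z.2)})
        = {g : ℝ | sgn g ≠ sgn (g + s)} := rfl
    rw [hpre, flip_set_eq s]
    rcases le_or_gt 0 s with hs | hs
    · rw [if_pos hs, ENNReal.ofReal_mul (by positivity)]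
      have := gauss_Ico_le (-s) 0
      simpa [abs_of_nonneg hs] using this
    · rw [if_neg (not_le.2 hs), ENNReal.ofReal_mul (by positivity)]
      have := gauss_Ico_le 0 (-s)
      simpa [abs_of_neg hs] using this
  calc ∫⁻ s, gaussianReal 0 1 ((fun g => (g, s)) ⁻¹' {z : ℝ × ℝ | sgn z.1 ≠ sgn (z.1 + z.2)})
          ∂(gaussianReal 0 w)
      ≤ ∫⁻ s, ENNReal.ofReal ((√(2*π))⁻¹ * |s|) ∂(gaussianReal 0 w) := lintegral_mono hsec
    _ = ENNReal.ofReal (∫ s, gaussianPDFReal 0 w s * ((√(2*π))⁻¹ * |s|)) := by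
        rw [gaussianReal_of_var_ne_zero 0 hw,
          lintegral_withDensity_eq_lintegral_mul volume (measurable_gaussianPDF 0 w)
            ((show Measurable (fun s : ℝ => (√(2*π))⁻¹ * |s|) from measurable_const.mul measurable_abs).ennreal_ofReal)]
        simp only [Pi.mul_apply]
        have hpoint : ∀ a : ℝ, gaussianPDF 0 w a * ENNReal.ofReal ((√(2*π))⁻¹ * |a|)
            = ENNReal.ofReal (gaussianPDFReal 0 w a * ((√(2*π))⁻¹ * |a|)) := by
          intro a
          rw [gaussianPDF, ← ENNReal.ofReal_mul (gaussianPDFReal_nonneg 0 w a)]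
        have hint : Integrable (fun s => gaussianPDFReal 0 w s * ((√(2*π))⁻¹ * |s|)) := by
          have : (fun s => gaussianPDFReal 0 w s * ((√(2*π))⁻¹ * |s|))
              = fun s => ((√(2*π))⁻¹ * (√(2*π*(w:ℝ)))⁻¹) * |s * rexp (-(2*(w:ℝ))⁻¹ * s^2)| := by
            funext s
            rw [abs_mul, Real.abs_exp]
            simp only [gaussianPDFReal, sub_zero]
            rw [show -(2*(w:ℝ))⁻¹ * s^2 = -s^2/(2*(w:ℝ)) by field_simp]
            ring
          rw [this]
          exact ((integrable_mul_exp_neg_mul_sq (by positivity)).abs).const_mul _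
        have hnn : 0 ≤ᵐ[volume] fun s => gaussianPDFReal 0 w s * ((√(2*π))⁻¹ * |s|) := by
          refine ae_of_all _ fun s => ?_
          have := gaussianPDFReal_nonneg 0 w s
          positivity
        rw [lintegral_congr hpoint, ← ofReal_integral_eq_lintegral_ofReal hint hnn]
    _ ≤ ENNReal.ofReal (σ / 2) := by
        refine ENNReal.ofReal_le_ofReal ?_
        have hca : ∫ x : ℝ, |x| * rexp (-(2*(w:ℝ))⁻¹ * x^2)
            = 2 * ∫ x in Set.Ioi (0:ℝ), x * rexp (-(2*(w:ℝ))⁻¹ * x^2) := by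
          have := integral_comp_abs (f := fun u : ℝ => u * rexp (-(2*(w:ℝ))⁻¹ * u^2))
          simpa [sq_abs] using this
        have heq : (fun s => gaussianPDFReal 0 w s * ((√(2*π))⁻¹ * |s|))
            = fun s => ((√(2*π))⁻¹ * (√(2*π*(w:ℝ)))⁻¹) * (|s| * rexp (-(2*(w:ℝ))⁻¹ * s^2)) := by
          funext s
          simp only [gaussianPDFReal, sub_zero]
          rw [show -(2*(w:ℝ))⁻¹ * s^2 = -s^2/(2*(w:ℝ)) by field_simp]
          ring
        have hval : ∫ s, gaussianPDFReal 0 w s * ((√(2*π))⁻¹ * |s|)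
            = ((√(2*π))⁻¹ * (√(2*π*(w:ℝ)))⁻¹) * (2 * (2 * (2*(w:ℝ))⁻¹)⁻¹) := by
          rw [heq, MeasureTheory.integral_const_mul, hca,
            integral_Ioi_mul_exp_neg_mul_sq (by positivity)]
        rw [hval]
        have hq : (0:ℝ) < √(2*π) := Real.sqrt_pos.2 (by positivity)
        have hq2 : √(2*π) * √(2*π) = 2*π := Real.mul_self_sqrt (by positivity)
        have hsq : √(2*π*(w:ℝ)) = √(2*π) * σ := by
          rw [hwr, show 2*π*σ^2 = (2*π)*σ^2 by ring, Real.sqrt_mul (by positivity),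
            Real.sqrt_sq hσ.le]
        rw [hsq]
        have hred : (√(2*π))⁻¹ * (√(2*π) * σ)⁻¹ * (2 * (2 * (2*(w:ℝ))⁻¹)⁻¹)
            = 2 * σ / (2*π) := by
          have hq2' : (√2:ℝ) * √π * (√2 * √π) = 2*π := by
            rw [show (√2:ℝ) * √π = √(2*π) from (Real.sqrt_mul (by norm_num) π).symm]
            exact hq2
          rw [hwr]
          field_simp
          have h2 : (√2:ℝ)^2 = 2 := Real.sq_sqrt (by norm_num)
          have h3 : (√π:ℝ)^2 = π := Real.sq_sqrt Real.pi_pos.le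
          linear_combination (-1:ℝ)*hq2
        rw [hred, div_le_div_iff₀ (by positivity) (by norm_num : (0:ℝ) < 2)]
        nlinarith [Real.pi_gt_three]

lemma chernoff_indicator {E : Type*} [MeasurableSpace E] (μ : Measure E) [IsProbabilityMeasure μ]
    (m : ℕ) (A : Set E) (hA : MeasurableSet A) (t ε : ℝ) (ht : 0 ≤ t) :
    (Measure.pi (fun _ : Fin m => μ)) {ω | ε ≤ ∑ i, (A.indicator (fun _ => (1:ℝ)) (ω i))}
      ≤ ENNReal.ofReal (exp (-t * ε) * (1 + (μ A).toReal * (exp t - 1)) ^ m) := by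
  letI : MeasureSpace E := ⟨μ⟩
  set X : E → ℝ := A.indicator (fun _ => (1:ℝ)) with hXdef
  have hXm : Measurable X := measurable_const.indicator hA
  set S : (Fin m → E) → ℝ := fun ω => ∑ i, X (ω i) with hSdef
  set g : E → ℝ := fun z => exp (t * X z) with hgdef
  have hg_eq : g = fun z => A.indicator (fun _ => exp t - 1) z + 1 := by
    funext z
    by_cases hz : z ∈ A <;> simp [hgdef, hXdef, hz, Set.indicator_of_mem, Set.indicator_of_notMem]
  have hg_int : Integrable g μ := by
    rw [hg_eq]
    exact ((integrable_const (exp t - 1)).indicator hA).add (integrable_const 1)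
  have hg_integral : ∫ z, g z ∂μ = 1 + (μ A).toReal * (exp t - 1) := by
    rw [hg_eq, integral_add ((integrable_const (exp t - 1)).indicator hA) (integrable_const 1),
      integral_indicator_const _ hA, integral_const]
    simp [smul_eq_mul]
    rw [measureReal_def]; ring
  have hexp : (fun ω : Fin m → E => exp (t * S ω)) = fun ω => ∏ i, g (ω i) := by
    funext ω
    rw [hSdef, Finset.mul_sum, Real.exp_sum]
  have hvol : (volume : Measure (Fin m → E)) = Measure.pi (fun _ : Fin m => μ) := rfl
  have h_int : Integrable (fun ω : Fin m → E => exp (t * S ω)) (Measure.pi (fun _ : Fin m => μ)) := by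
    rw [hexp, ← hvol]
    exact Integrable.fintype_prod (f := fun _ : Fin m => g) (fun _ => hg_int)
  have hmgf : mgf S (Measure.pi (fun _ : Fin m => μ)) t = (1 + (μ A).toReal * (exp t - 1)) ^ m := by
    rw [mgf, hexp, integral_fintype_prod_eq_pow (ι := Fin m) g, Fintype.card_fin,
      hg_integral]
  have h := measure_ge_le_exp_mul_mgf (X := S) (μ := Measure.pi (fun _ : Fin m => μ)) ε ht h_int
  rw [hmgf] at h
  have hne : (Measure.pi (fun _ : Fin m => μ)) {ω | ε ≤ S ω} ≠ ⊤ := measure_ne_top _ _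
  calc (Measure.pi (fun _ : Fin m => μ)) {ω | ε ≤ S ω}
      = ENNReal.ofReal (((Measure.pi (fun _ : Fin m => μ)) {ω | ε ≤ S ω}).toReal) :=
        (ENNReal.ofReal_toReal hne).symm
    _ ≤ _ := ENNReal.ofReal_le_ofReal h

lemma pi_map {α β : Type*} [MeasurableSpace α] [MeasurableSpace β] {m : ℕ} {f : α → β}
    (hf : Measurable f) (μ : Measure α) (ν : Measure β) [IsProbabilityMeasure μ]
    [IsProbabilityMeasure ν] (h : Measure.map f μ = ν) :
    Measure.map (fun (a : Fin m → α) i => f (a i)) (Measure.pi fun _ => μ)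
      = Measure.pi (fun _ : Fin m => ν) := by
  refine (Measure.pi_eq (μ := fun _ : Fin m => ν) fun s hs => ?_).symm
  rw [Measure.map_apply (by fun_prop) (MeasurableSet.univ_pi hs)]
  have hpre : (fun (a : Fin m → α) i => f (a i)) ⁻¹' Set.pi Set.univ s
      = Set.pi Set.univ (fun i => f ⁻¹' s i) := by
    ext a
    simp
  rw [hpre, Measure.pi_pi]
  exact Finset.prod_congr rfl fun i _ => by rw [← h, Measure.map_apply hf (hs i)]

end Aux

/-- Lemma 4 of Jacques et al.: for a fixed unit vector `x`, an i.i.d.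
`N(0,1)` matrix `A`, and independent Gaussian noise `ξ ~ N(0, σ²I_m)`, the fraction of sign
flips caused by the noise exceeds `σ/2 + γ` with probability at most `e^{−2mγ²}`. -/
theorem stmt19 (n m : ℕ) (x : EuclideanSpace ℝ (Fin n)) (hx : ‖x‖ = 1)
    (σ : ℝ) (hσ : 0 < σ) (γ : ℝ) (hγ : 0 < γ) :
    (gaussianMatrix m n).prod
        (Measure.pi fun _ : Fin m => gaussianReal 0 ((σ ^ 2).toNNReal))
        {p : (Fin m → Fin n → ℝ) × (Fin m → ℝ) |
          dH (Phi p.1 x) (fun i => sgn ((∑ j, p.1 i j * x j) + p.2 i)) > σ / 2 + γ}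
      ≤ ENNReal.ofReal (Real.exp (-(2 * m * γ ^ 2))) := by
  classical
  set w : ℝ≥0 := (σ^2).toNNReal with hwdef
  set ν : Measure ℝ := gaussianReal 0 w with hνdef
  set pm : Measure (ℝ × ℝ) := (gaussianReal 0 1).prod ν with hpmdef
  set A : Set (ℝ × ℝ) := {z : ℝ × ℝ | sgn z.1 ≠ sgn (z.1 + z.2)} with hAdef
  set q : ℝ := σ / 2 + γ with hqdef
  have hq0 : 0 < q := by positivity
  -- the linear functional is standard gaussian
  have hsum : ∑ j, (x j)^2 = 1 := by
    have h1 : ‖x‖ = √(∑ j, ‖x j‖^2) := EuclideanSpace.norm_eq x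
    rw [hx] at h1
    have h2 : (∑ j, ‖x j‖^2) = ∑ j, (x j)^2 := by
      refine Finset.sum_congr rfl fun j _ => ?_
      rw [Real.norm_eq_abs, sq_abs]
    rw [h2] at h1
    have h3 := congrArg (fun r : ℝ => r^2) h1
    simp only [one_pow] at h3
    rw [Real.sq_sqrt (Finset.sum_nonneg fun j _ => sq_nonneg _)] at h3
    exact h3.symm
  have hL : Measure.map (fun a : Fin n → ℝ => ∑ j, a j * x j)
      (Measure.pi fun _ : Fin n => gaussianReal 0 1) = gaussianReal 0 1 := by
    have h := map_sum_gaussian n (fun j => x j)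
    rw [show (fun a : Fin n → ℝ => ∑ j, x j * a j)
        = (fun a : Fin n → ℝ => ∑ j, a j * x j) from funext fun a =>
      Finset.sum_congr rfl fun j _ => mul_comm _ _] at h
    rw [h, hsum, Real.toNNReal_one]
  -- pushforward to iid pairs
  set T : (Fin m → Fin n → ℝ) × (Fin m → ℝ) → (Fin m → ℝ × ℝ) :=
    fun p i => (∑ j, p.1 i j * x j, p.2 i) with hTdef
  have hTmeas : Measurable T := by
    apply measurable_pi_lambda
    intro i
    refine Measurable.prodMk ?_ ((measurable_pi_apply i).comp measurable_snd)
    refine Finset.measurable_sum _ fun j _ => ?_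
    exact ((measurable_pi_apply j).comp ((measurable_pi_apply i).comp measurable_fst)).mul_const _
  have hT : Measure.map T ((gaussianMatrix m n).prod
      (Measure.pi fun _ : Fin m => gaussianReal 0 ((σ ^ 2).toNNReal)))
      = Measure.pi (fun _ : Fin m => pm) := by
    have he := measurePreserving_arrowProdEquivProdArrow (Fin n → ℝ) ℝ (Fin m)
      (fun _ => Measure.pi fun _ : Fin n => gaussianReal 0 1) (fun _ => ν)
    rw [show (gaussianMatrix m n).prod
        (Measure.pi fun _ : Fin m => gaussianReal 0 ((σ ^ 2).toNNReal))
      = (Measure.pi fun _ : Fin m => Measure.pi fun _ : Fin n => gaussianReal 0 1).prod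
        (Measure.pi fun _ : Fin m => ν) from rfl]
    rw [← he.map_eq, Measure.map_map hTmeas (MeasurableEquiv.measurable _)]
    have hone : MeasurePreserving (fun q : (Fin n → ℝ) × ℝ => (∑ j, q.1 j * x j, q.2))
        ((Measure.pi fun _ : Fin n => gaussianReal 0 1).prod ν) pm := by
      have := (MeasurePreserving.prod (f := fun a : Fin n → ℝ => ∑ j, a j * x j) (g := id)
        ⟨by fun_prop, hL⟩ (MeasurePreserving.id ν))
      exact this
    have hcomp : (T ∘ (MeasurableEquiv.arrowProdEquivProdArrow (Fin n → ℝ) ℝ (Fin m)))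
        = fun (g : Fin m → (Fin n → ℝ) × ℝ) i =>
            (fun q : (Fin n → ℝ) × ℝ => (∑ j, q.1 j * x j, q.2)) (g i) := rfl
    rw [hcomp]
    exact pi_map hone.measurable _ _ hone.map_eq
  -- the event
  set X : ℝ × ℝ → ℝ := A.indicator (fun _ => (1:ℝ)) with hXdef
  set Sm : (Fin m → ℝ × ℝ) → ℝ := fun ω => ∑ i, X (ω i) with hSmdef
  have hSm_meas : Measurable Sm :=
    Finset.measurable_sum _ fun i _ =>
      (measurable_const.indicator measurableSet_flip).comp (measurable_pi_apply i)
  have hcard : ∀ ω : Fin m → ℝ × ℝ,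
      ((Finset.univ.filter fun i => sgn (ω i).1 ≠ sgn ((ω i).1 + (ω i).2)).card : ℝ) = Sm ω := by
    intro ω
    rw [Finset.card_filter]
    push_cast
    refine Finset.sum_congr rfl fun i _ => ?_
    by_cases h : sgn (ω i).1 ≠ sgn ((ω i).1 + (ω i).2)
    · rw [if_pos h, hXdef, Set.indicator_of_mem (by exact h)]
    · rw [if_neg h, hXdef, Set.indicator_of_notMem (by exact h)]
  set E : Set (Fin m → ℝ × ℝ) := {ω | q < Sm ω / m} with hEdef
  have hEmeas : MeasurableSet E := measurableSet_lt measurable_const (hSm_meas.div_const _)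
  have hEvent : {p : (Fin m → Fin n → ℝ) × (Fin m → ℝ) |
        dH (Phi p.1 x) (fun i => sgn ((∑ j, p.1 i j * x j) + p.2 i)) > σ / 2 + γ}
      = T ⁻¹' E := by
    ext p
    simp only [Set.mem_setOf_eq, Set.mem_preimage, hEdef, dH, Phi, gt_iff_lt]
    rw [← hcard]
  rw [hEvent, ← Measure.map_apply hTmeas hEmeas, hT]
  -- inclusion and Chernoff
  have hsub : E ⊆ {ω | (m : ℝ) * q ≤ Sm ω} := by
    intro ω hω
    rw [hEdef, Set.mem_setOf_eq] at hω
    rcases Nat.eq_zero_or_pos m with hm | hm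
    · subst hm
      simp only [Nat.cast_zero, div_zero] at hω
      linarith
    · have hm' : (0:ℝ) < m := by exact_mod_cast hm
      rw [Set.mem_setOf_eq, mul_comm]
      exact le_of_lt ((lt_div_iff₀ hm').mp hω)
  set p : ℝ := (pm A).toReal with hpdef
  have hp0 : 0 ≤ p := ENNReal.toReal_nonneg
  have hp1 : p ≤ 1 := by
    rw [hpdef]
    exact ENNReal.toReal_le_of_le_ofReal zero_le_one (by simpa using prob_le_one (μ := pm) (s := A))
  have hpσ : p ≤ σ / 2 := by
    rw [hpdef]
    refine ENNReal.toReal_le_of_le_ofReal (by positivity) ?_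
    exact flip_prob hσ
  have hcher := chernoff_indicator pm m A measurableSet_flip (4*γ) ((m:ℝ)*q)
    (by positivity)
  calc (Measure.pi fun _ : Fin m => pm) E
      ≤ (Measure.pi fun _ : Fin m => pm) {ω | (m:ℝ)*q ≤ Sm ω} := measure_mono hsub
    _ ≤ ENNReal.ofReal (Real.exp (-(4*γ) * ((m:ℝ)*q)) * (1 + p * (Real.exp (4*γ) - 1)) ^ m) :=
        hcher
    _ ≤ ENNReal.ofReal (Real.exp (-(2 * m * γ ^ 2))) := by
        refine ENNReal.ofReal_le_ofReal ?_
        have hbase : 0 ≤ 1 + p * (Real.exp (4*γ) - 1) := by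
          have : (1:ℝ) ≤ Real.exp (4*γ) := by
            rw [show (1:ℝ) = Real.exp 0 from (Real.exp_zero).symm]
            exact Real.exp_le_exp.mpr (by positivity)
          nlinarith
        have hhoef : 1 + p * (Real.exp (4*γ) - 1)
            ≤ Real.exp ((4*γ) * p + (4*γ)^2 / 8) :=
          hoeffding_scalar hp0 hp1 (by positivity)
        calc Real.exp (-(4*γ) * ((m:ℝ)*q)) * (1 + p * (Real.exp (4*γ) - 1)) ^ m
            ≤ Real.exp (-(4*γ) * ((m:ℝ)*q)) * (Real.exp ((4*γ) * p + (4*γ)^2 / 8)) ^ m := by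
              refine mul_le_mul_of_nonneg_left ?_ (Real.exp_pos _).le
              exact pow_le_pow_left₀ hbase hhoef m
          _ = Real.exp (-(4*γ) * ((m:ℝ)*q) + (m:ℝ) * ((4*γ) * p + (4*γ)^2 / 8)) := by
              rw [← Real.exp_nat_mul, ← Real.exp_add]
          _ ≤ Real.exp (-(2 * m * γ ^ 2)) := by
              refine Real.exp_le_exp.mpr ?_
              have hm0 : (0:ℝ) ≤ m := Nat.cast_nonneg m
              have hpq : p - q ≤ -γ := by
                rw [hqdef]
                linarith
              clear_value p q
              nlinarith [mul_le_mul_of_nonneg_left hpq (by positivity : (0:ℝ) ≤ 4*γ*(m:ℝ))]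
end
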